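/- arXiv:1403.4489 — 14 statements merged into one kernel-verified Lean document; each statement's English description precedes it below -/
import Mathlib

section
/- The Bose-Chowla set A(q,θ) = {a ∈ ℤ/(q²-1) : θ^a - θ ∈ F_q} has exactly q elements, where θ is a generator of the multiplicative group of F_{q²}. -/
/-- The Bose-Chowla set: `a` with `θ^a - θ` in the subfield `F_q`
(characterized as fixed points of the `q`-power Frobenius). -/
def BoseChowla (q : ℕ) {F : Type*} [Field F] (θ : F) : Set (ZMod (q ^ 2 - 1)) :=
  {a | (θ ^ a.val - θ) ^ q = θ ^ a.val - θ}

/-- The Cayley sum graph `G_{q,θ}`: `x ~ y` iff `x ≠ y` and `x + y ∈ A(q,θ)`. -/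
def CayleyGraph (q : ℕ) {F : Type*} [Field F] (θ : F) : SimpleGraph (ZMod (q ^ 2 - 1)) :=
  SimpleGraph.fromRel (fun x y => x + y ∈ BoseChowla q θ)

/-- A graph is `C₄`-free: no four vertices form a 4-cycle. -/
def C4Free {V : Type*} (G : SimpleGraph V) : Prop :=
  ∀ a b c d : V, G.Adj a b → G.Adj b c → G.Adj c d → G.Adj d a → a = c ∨ b = d

theorem bose_chowla_card (q : ℕ) (hq : IsPrimePow q) (F : Type*) [Field F] [Fintype F]
    (hF : Fintype.card F = q ^ 2) (θ : F) (hθ : orderOf θ = q ^ 2 - 1) :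
    (BoseChowla q θ).ncard = q := by
  have hq2 : 2 ≤ q := hq.two_le
  set n : ℕ := q ^ 2 - 1 with hn
  have hfact : n = (q + 1) * (q - 1) := by
    obtain ⟨m, rfl⟩ := Nat.exists_eq_add_of_le hq2
    show (2 + m) ^ 2 - 1 = (2 + m + 1) * (2 + m - 1)
    have h1 : 2 + m - 1 = 1 + m := by omega
    rw [h1]
    apply Nat.sub_eq_of_eq_add
    ring
  have hn3 : 3 ≤ n := by
    rw [hfact]
    have := Nat.mul_le_mul (show 3 ≤ q + 1 by omega) (show 1 ≤ q - 1 by omega)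
    omega
  have hn0 : NeZero n := ⟨by omega⟩
  have hθ0 : θ ≠ 0 := by
    intro h
    have h1 := pow_orderOf_eq_one θ
    rw [hθ] at h1
    rw [h, zero_pow (by omega : n ≠ 0)] at h1
    exact zero_ne_one h1
  set u : Fˣ := Units.mk0 θ hθ0 with hu
  have huv : ∀ m : ℕ, ((u ^ m : Fˣ) : F) = θ ^ m := by
    intro m; rw [Units.val_pow_eq_pow_val]; rfl
  have hou : orderOf u = n := by rw [← orderOf_units]; exact hθ
  -- the set of Frobenius-fixed points
  set S : Set F := {x | x ^ q = x} with hS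
  -- the map
  set f : ZMod n → F := fun a => θ ^ a.val - θ with hf
  have hinj : Set.InjOn f (BoseChowla q θ) := by
    intro a _ b _ hab
    simp only [hf] at hab
    have h1 : θ ^ a.val = θ ^ b.val := by linear_combination hab
    have h2 : u ^ a.val = u ^ b.val := Units.ext (by rw [huv, huv]; exact h1)
    rw [pow_eq_pow_iff_modEq, hou] at h2
    have ha := ZMod.val_lt a
    have hb := ZMod.val_lt b
    unfold Nat.ModEq at h2
    rw [Nat.mod_eq_of_lt ha, Nat.mod_eq_of_lt hb] at h2
    exact ZMod.val_injective _ h2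
  have himg : f '' (BoseChowla q θ) = S := by
    ext x
    constructor
    · rintro ⟨a, ha, rfl⟩
      exact ha
    · intro hx
      -- x + θ ≠ 0
      have hxθ : x + θ ≠ 0 := by
        intro h
        have hxe : x = -θ := by linear_combination h
        rw [hxe] at hx
        have hx' : (-θ) ^ q = -θ := hx
        have h2 : θ ^ (2 * q) = θ ^ 2 := by
          calc θ ^ (2 * q) = ((-θ) ^ 2) ^ q := by
                rw [pow_mul]; congr 1; ring
          _ = ((-θ) ^ q) ^ 2 := by rw [← pow_mul, mul_comm, pow_mul]
          _ = θ ^ 2 := by rw [hx']; ring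
        have h3 : u ^ (2 * q) = u ^ 2 := Units.ext (by rw [huv, huv]; exact h2)
        rw [pow_eq_pow_iff_modEq, hou] at h3
        have h4 := (Nat.modEq_iff_dvd' (by omega : 2 ≤ 2 * q)).mp h3.symm
        have h5 : n ≤ 2 * q - 2 := Nat.le_of_dvd (by omega) h4
        rw [hfact] at h5
        have h6 : (q + 1) * (q - 1) ≤ 2 * (q - 1) := by omega
        have := Nat.le_of_mul_le_mul_right h6 (by omega : 0 < q - 1)
        omega
      -- x + θ is a power of θ
      have hcard : Nat.card Fˣ = n := by
        rw [Nat.card_units, Nat.card_eq_fintype_card, hF]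
      have htop : Subgroup.zpowers u = ⊤ := by
        apply Subgroup.eq_top_of_card_eq
        rw [Nat.card_zpowers, hou, hcard]
      obtain ⟨k, hk⟩ : ∃ k : ℕ, u ^ k = Units.mk0 (x + θ) hxθ := by
        have : Units.mk0 (x + θ) hxθ ∈ Subgroup.zpowers u := htop ▸ Subgroup.mem_top _
        exact mem_powers_iff_mem_zpowers.mpr this
      have hkF : θ ^ k = x + θ := by
        have := congrArg (Units.val) hk
        rw [huv] at this
        simpa using this
      have hv : θ ^ ((k : ZMod n)).val = θ ^ k := by
        rw [ZMod.val_natCast, ← hθ, pow_mod_orderOf]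
      refine ⟨(k : ZMod n), ?_, ?_⟩
      · show (θ ^ ((k : ZMod n)).val - θ) ^ q = θ ^ ((k : ZMod n)).val - θ
        rw [hv, hkF]
        simpa [hS] using hx
      · show θ ^ ((k : ZMod n)).val - θ = x
        rw [hv, hkF]; ring
  -- cardinality of S
  have hScard : S.ncard = q := by
    have hq1 : 0 < q - 1 := by omega
    -- primitive (q-1)-th root of unity
    have hprim : IsPrimitiveRoot (θ ^ (q + 1)) (q - 1) := by
      have hdvd : (q + 1) ∣ n := ⟨q - 1, hfact⟩
      have ho : orderOf (θ ^ (q + 1)) = q - 1 := by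
        rw [orderOf_pow' θ (by omega : q + 1 ≠ 0), hθ, Nat.gcd_eq_right hdvd, hfact,
          Nat.mul_div_cancel_left _ (by omega : 0 < q + 1)]
      exact ho ▸ IsPrimitiveRoot.orderOf (θ ^ (q + 1))
    have hSeq : S = insert (0 : F) ↑(Polynomial.nthRootsFinset (q - 1) (1 : F)) := by
      ext x
      simp only [hS, Set.mem_setOf_eq, Set.mem_insert_iff, Finset.coe_sort_coe,
        Finset.mem_coe, Polynomial.mem_nthRootsFinset hq1]
      constructor
      · intro hx
        rcases eq_or_ne x 0 with h | h
        · exact Or.inl h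
        · right
          have hmul : x ^ (q - 1) * x = x := by
            rw [← pow_succ, Nat.sub_add_cancel (by omega : 1 ≤ q)]
            exact hx
          have := mul_right_cancel₀ h (hmul.trans (one_mul x).symm)
          exact this
      · rintro (rfl | hx)
        · exact zero_pow (by omega : q ≠ 0)
        · calc x ^ q = x ^ (q - 1) * x := by
                rw [← pow_succ, Nat.sub_add_cancel (by omega : 1 ≤ q)]
          _ = x := by rw [hx, one_mul]
    rw [hSeq, Set.ncard_insert_of_notMem, Set.ncard_coe_finset,
      hprim.card_nthRootsFinset]
    · omega
    · simp only [Finset.mem_coe, Polynomial.mem_nthRootsFinset hq1]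
      intro h
      rw [zero_pow (by omega : q - 1 ≠ 0)] at h
      exact zero_ne_one h
  calc (BoseChowla q θ).ncard = (f '' (BoseChowla q θ)).ncard :=
        (Set.ncard_image_of_injOn hinj).symm
  _ = S.ncard := by rw [himg]
  _ = q := hScard
end

section
/- The Bose-Chowla set A(q,θ) is a Sidon set in ℤ/(q²-1): if a+b = c+d with a,b,c,d ∈ A(q,θ), then {a,b} = {c,d}. -/
theorem bose_chowla_sidon_aux (q : ℕ) (hq : IsPrimePow q) (F : Type*) [Field F] [Fintype F]
    (hF : Fintype.card F = q ^ 2) (θ : F) (hθ : orderOf θ = q ^ 2 - 1) :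
    ∀ a b c d : ZMod (q^2-1), (θ ^ a.val - θ) ^ q = θ ^ a.val - θ →
      (θ ^ b.val - θ) ^ q = θ ^ b.val - θ →
      (θ ^ c.val - θ) ^ q = θ ^ c.val - θ →
      (θ ^ d.val - θ) ^ q = θ ^ d.val - θ →
      a + b = c + d → (a = c ∧ b = d) ∨ (a = d ∧ b = c) := by
  obtain ⟨p, k, hp, hk, hpk⟩ := hq
  have hp' : p.Prime := hp.nat_prime
  have := Fact.mk hp'
  -- q ≥ 2
  have hq2 : 2 ≤ q := by
    rw [← hpk]; calc 2 ≤ p := hp'.two_le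
    _ ≤ p ^ k := Nat.le_self_pow hk.ne' p
  have hqq : q ^ 2 = q * q := sq q
  have hqq4 : 4 ≤ q * q := Nat.mul_le_mul hq2 hq2
  have hmod : 0 < q ^ 2 - 1 := by omega
  haveI : NeZero (q ^ 2 - 1) := ⟨hmod.ne'⟩
  -- characteristic
  have hcharP : CharP F p := by
    obtain ⟨m, hc, hcard⟩ := FiniteField.card F (ringChar F)
    have : p = ringChar F := by
      have h1 : p ∣ (ringChar F) ^ (m:ℕ) := by
        rw [← hcard, hF, ← hpk, ← pow_mul]
        exact dvd_pow_self p (by positivity)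
      exact ((Nat.prime_dvd_prime_iff_eq hp' hc).1 (hp'.dvd_of_dvd_pow h1))
    rw [this]; infer_instance
  -- θ ≠ 0 and θ^q ≠ θ
  have hθ0 : θ ≠ 0 := by
    intro h
    have h1 : θ ^ (q ^ 2 - 1) = 1 := hθ ▸ pow_orderOf_eq_one θ
    rw [h, zero_pow hmod.ne'] at h1
    exact zero_ne_one h1
  have hθq : θ ^ q ≠ θ := by
    intro h
    have h1 : θ ^ (q - 1) = 1 := by
      have : θ ^ (q - 1) * θ = 1 * θ := by
        rw [one_mul, ← pow_succ, Nat.sub_add_cancel (by omega)]; exact h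
      exact mul_right_cancel₀ hθ0 this
    have h2 := Nat.le_of_dvd (by omega) (hθ ▸ orderOf_dvd_of_pow_eq_one h1)
    rw [hqq] at h2
    have h3 : 2 * q ≤ q * q := Nat.mul_le_mul_right q hq2
    omega
  -- powers of θ injective on ZMod (q^2-1)
  have hinj : ∀ x y : ZMod (q^2-1), θ ^ x.val = θ ^ y.val → x = y := by
    intro x y h
    have := pow_injOn_Iio_orderOf (by rw [hθ]; exact Set.mem_Iio.2 (ZMod.val_lt x))
      (by rw [hθ]; exact Set.mem_Iio.2 (ZMod.val_lt y)) h
    exact ZMod.val_injective _ this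
  have hpow : ∀ x y : ZMod (q^2-1), θ ^ (x+y).val = θ ^ x.val * θ ^ y.val := by
    intro x y
    have hm := pow_mod_orderOf θ (x.val + y.val)
    rw [hθ] at hm
    rw [ZMod.val_add, hm, pow_add]
  intro a b c d ha hb hc hd habcd
  set α := θ ^ a.val - θ with hα
  set β := θ ^ b.val - θ with hβ
  set γ := θ ^ c.val - θ with hγ
  set δ := θ ^ d.val - θ with hδ
  have hprod : θ ^ a.val * θ ^ b.val = θ ^ c.val * θ ^ d.val := by
    rw [← hpow, ← hpow, habcd]
  -- (θ+α)(θ+β) = (θ+γ)(θ+δ)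
  have key : θ * ((α + β) - (γ + δ)) = γ * δ - α * β := by
    have e1 : θ ^ a.val = θ + α := by rw [hα]; ring
    have e2 : θ ^ b.val = θ + β := by rw [hβ]; ring
    have e3 : θ ^ c.val = θ + γ := by rw [hγ]; ring
    have e4 : θ ^ d.val = θ + δ := by rw [hδ]; ring
    rw [e1, e2, e3, e4] at hprod
    linear_combination hprod
  have hsum : α + β = γ + δ := by
    by_contra hne
    set e := (α + β) - (γ + δ) with he
    have he0 : e ≠ 0 := sub_ne_zero.2 hne
    have heq : e ^ q = e := by
      rw [he, ← hpk]
      rw [sub_pow_char_pow, add_pow_char_pow, add_pow_char_pow, hpk, ha, hb, hc, hd]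
    have hnum : (γ * δ - α * β) ^ q = γ * δ - α * β := by
      rw [← hpk, sub_pow_char_pow, hpk, mul_pow, mul_pow, ha, hb, hc, hd]
    have hθval : θ = (γ * δ - α * β) / e := by
      field_simp
      linear_combination key
    apply hθq
    rw [hθval, div_pow, hnum, heq]
  have hprod2 : α * β = γ * δ := by
    have : θ * ((α + β) - (γ + δ)) = 0 := by rw [hsum]; ring
    rw [this] at key
    linear_combination key
  -- now θ^a, θ^b and θ^c, θ^d have same sum and product
  have hs : θ ^ a.val + θ ^ b.val = θ ^ c.val + θ ^ d.val := by
    have : θ ^ a.val + θ ^ b.val - 2*θ = θ ^ c.val + θ ^ d.val - 2*θ := by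
      calc θ ^ a.val + θ ^ b.val - 2*θ = α + β := by rw [hα, hβ]; ring
      _ = γ + δ := hsum
      _ = θ ^ c.val + θ ^ d.val - 2*θ := by rw [hγ, hδ]; ring
    linear_combination this
  have hpr : θ ^ a.val * θ ^ b.val = θ ^ c.val * θ ^ d.val := hprod
  have hfac : (θ ^ c.val - θ ^ a.val) * (θ ^ c.val - θ ^ b.val) = 0 := by
    linear_combination (-(θ ^ c.val)) * hs + hpr
  have hθa0 : θ ^ a.val ≠ 0 := pow_ne_zero _ hθ0
  rcases mul_eq_zero.1 hfac with h | h
  · have hca : c = a := hinj _ _ (sub_eq_zero.1 h)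
    left
    refine ⟨hca.symm, hinj _ _ ?_⟩
    subst hca
    exact mul_left_cancel₀ hθa0 hpr
  · have hcb : c = b := hinj _ _ (sub_eq_zero.1 h)
    right
    subst hcb
    have hθb0 : θ ^ c.val ≠ 0 := pow_ne_zero _ hθ0
    refine ⟨hinj _ _ ?_, rfl⟩
    have : θ ^ c.val * θ ^ a.val = θ ^ c.val * θ ^ d.val := by linear_combination hpr
    exact mul_left_cancel₀ hθb0 this


theorem bose_chowla_sidon (q : ℕ) (hq : IsPrimePow q) (F : Type*) [Field F] [Fintype F]
    (hF : Fintype.card F = q ^ 2) (θ : F) (hθ : orderOf θ = q ^ 2 - 1) :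
    ∀ a ∈ BoseChowla q θ, ∀ b ∈ BoseChowla q θ, ∀ c ∈ BoseChowla q θ,
      ∀ d ∈ BoseChowla q θ, a + b = c + d → (a = c ∧ b = d) ∨ (a = d ∧ b = c) := by
  intro a ha b hb c hc d hd h
  exact bose_chowla_sidon_aux q hq F hF θ hθ a b c d ha hb hc hd h
end

section
/- The Bose-Chowla set A(q,θ) is disjoint from the subgroup H of ℤ/(q²-1) generated by q+1. -/
theorem bose_chowla_disjoint_subgroup (q : ℕ) (hq : IsPrimePow q) (F : Type*) [Field F]
    [Fintype F] (hF : Fintype.card F = q ^ 2) (θ : F) (hθ : orderOf θ = q ^ 2 - 1) :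
    ∀ a ∈ BoseChowla q θ,
      a ∉ AddSubgroup.zmultiples ((q : ZMod (q ^ 2 - 1)) + 1) := by
  intro a ha hmem
  have hq2 : 2 ≤ q := hq.two_le
  have hq4 : 4 ≤ q ^ 2 := by nlinarith
  have hn : q ^ 2 - 1 ≠ 0 := by omega
  haveI : NeZero (q ^ 2 - 1) := ⟨hn⟩
  -- θ ≠ 0
  have hθ0 : θ ≠ 0 := by
    intro h
    have h1 := pow_orderOf_eq_one θ
    rw [hθ, h, zero_pow hn] at h1
    exact zero_ne_one h1
  -- (q:ZMod)^2 - 1 = 0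
  have h0 : ((q : ZMod (q ^ 2 - 1))) ^ 2 - 1 = 0 := by
    have h := ZMod.natCast_self (q ^ 2 - 1)
    push_cast [Nat.cast_sub (by omega : 1 ≤ q ^ 2)] at h
    linear_combination h
  -- a.val * (q-1) is divisible by q^2 - 1
  obtain ⟨k, hk⟩ := AddSubgroup.mem_zmultiples_iff.mp hmem
  have hdvd : (q ^ 2 - 1) ∣ a.val * (q - 1) := by
    have hcast : ((a.val * (q - 1) : ℕ) : ZMod (q ^ 2 - 1)) = 0 := by
      push_cast [Nat.cast_sub (by omega : 1 ≤ q)]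
      rw [ZMod.natCast_val, ZMod.cast_id, ← hk, zsmul_eq_mul]
      linear_combination (k : ZMod (q ^ 2 - 1)) * h0
    exact (ZMod.natCast_eq_zero_iff _ _).mp hcast
  have hθ1 : θ ^ (a.val * (q - 1)) = 1 :=
    orderOf_dvd_iff_pow_eq_one.mp (by rw [hθ]; exact hdvd)
  -- hence θ^a.val is fixed by the q-power map
  have hsplit : a.val * q = a.val + a.val * (q - 1) := by
    zify [show 1 ≤ q by omega]; ring
  have h1 : (θ ^ a.val) ^ q = θ ^ a.val := by
    rw [← pow_mul, hsplit, pow_add, hθ1, mul_one]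
  -- Frobenius is additive
  haveI : CharP F (ringChar F) := ringChar.charP F
  obtain ⟨n, hp, hcard⟩ := FiniteField.card F (ringChar F)
  haveI : Fact (ringChar F).Prime := ⟨hp⟩
  have hqdvd : q ∣ (ringChar F) ^ (n : ℕ) := by
    rw [← hcard, hF]; exact dvd_pow_self q (by norm_num)
  obtain ⟨m, hmn, hqm⟩ := (Nat.dvd_prime_pow hp).mp hqdvd
  have hfrob : ∀ x y : F, (x - y) ^ q = x ^ q - y ^ q := by
    intro x y
    rw [hqm]
    exact sub_pow_char_pow x y m
  -- conclude θ^q = θ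
  have hθq : θ ^ q = θ := by
    have hBC : (θ ^ a.val - θ) ^ q = θ ^ a.val - θ := ha
    rw [hfrob, h1] at hBC
    linear_combination -hBC
  -- order of θ divides q - 1: contradiction
  have hpow : θ ^ (q - 1) = 1 := by
    have h2 : θ ^ (q - 1) * θ = 1 * θ := by
      rw [one_mul, ← pow_succ, show q - 1 + 1 = q by omega, hθq]
    exact mul_right_cancel₀ hθ0 h2
  have hdvd2 : q ^ 2 - 1 ∣ q - 1 := by
    rw [← hθ]; exact orderOf_dvd_of_pow_eq_one hpow
  have hle := Nat.le_of_dvd (by omega) hdvd2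
  have h2q : q < q ^ 2 := by nlinarith
  exact absurd hle (Nat.not_le.mpr (Nat.sub_lt_sub_right (by omega) h2q))
end

section
/- The difference set A - A of the Bose-Chowla set A = A(q,θ) equals ℤ/(q²-1) minus the nonzero elements of the subgroup generated by q+1; that is, A - A = ℤ/(q²-1) \ {q+1, 2(q+1), ..., (q-2)(q+1)}. -/
theorem bose_chowla_diff_set (q : ℕ) (hq : IsPrimePow q) (F : Type*) [Field F]
    [Fintype F] (hF : Fintype.card F = q ^ 2) (θ : F) (hθ : orderOf θ = q ^ 2 - 1) :
    {x : ZMod (q ^ 2 - 1) | ∃ a ∈ BoseChowla q θ, ∃ b ∈ BoseChowla q θ, a - b = x} =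
      {0} ∪ (↑(AddSubgroup.zmultiples ((q : ZMod (q ^ 2 - 1)) + 1)) :
        Set (ZMod (q ^ 2 - 1)))ᶜ := by
  classical
  have hq2 : 2 ≤ q := hq.two_le
  obtain ⟨p, k, hp, hk, hpk⟩ := hq
  haveI : Fact p.Prime := ⟨hp.nat_prime⟩
  have hq4 : 4 ≤ q ^ 2 := by nlinarith
  have hqlt : q + 1 ≤ q ^ 2 := by nlinarith
  set n := q ^ 2 - 1 with hn
  have hn3 : 3 ≤ n := by omega
  haveI : NeZero n := ⟨by omega⟩
  haveI : Fact (1 < n) := ⟨by omega⟩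
  -- characteristic
  have hpF : (p : F) = 0 := by
    have h0 : ((Fintype.card F : ℕ) : F) = 0 := FiniteField.cast_card_eq_zero F
    rw [hF, ← hpk] at h0
    have h1 : ((p : F)) ^ (k * 2) = 0 := by push_cast at h0; rw [pow_mul]; exact_mod_cast h0
    exact pow_eq_zero_iff (by omega) |>.mp h1
  have hrp : ringChar F = p := by
    have hdvd : ringChar F ∣ p := (CharP.cast_eq_zero_iff F (ringChar F) p).mp hpF
    exact (Nat.prime_dvd_prime_iff_eq (CharP.char_is_prime F _) hp.nat_prime).mp hdvd
  haveI : CharP F p := hrp ▸ ringChar.charP F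
  have hfrob_add : ∀ x y : F, (x + y) ^ q = x ^ q + y ^ q := by
    intro x y; rw [← hpk]; exact add_pow_char_pow x y p k
  have hfrob_sub : ∀ x y : F, (x - y) ^ q = x ^ q - y ^ q := by
    intro x y; rw [← hpk]; exact sub_pow_char_pow x y k
  have hθ0 : θ ≠ 0 := by
    intro h
    have h1 : θ ^ n = 1 := hθ ▸ pow_orderOf_eq_one θ
    rw [h, zero_pow (by omega)] at h1
    exact zero_ne_one h1
  have hθq : θ ^ q ≠ θ := by
    intro h
    have h1 : θ ^ (q - 1) * θ = θ := by
      rw [← pow_succ]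
      rw [show q - 1 + 1 = q from by omega]
      exact h
    have h2 : θ ^ (q - 1) = 1 := by
      field_simp at h1
      exact h1
    have h3 : n ∣ q - 1 := hθ ▸ orderOf_dvd_of_pow_eq_one h2
    have := Nat.le_of_dvd (by omega) h3
    omega
  have hcard : ∀ x : F, x ^ q ^ 2 = x := by
    intro x; rw [← hF]; exact FiniteField.pow_card x
  have hcard2 : ∀ x : F, (x ^ q) ^ q = x := by
    intro x; rw [← pow_mul, show q * q = q ^ 2 from (sq q).symm]; exact hcard x
  -- units
  have hu : IsUnit θ := hθ0.isUnit
  have hucoe : (hu.unit : F) = θ := hu.unit_spec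
  set u : Fˣ := hu.unit with hudef
  have huord : orderOf u = n := by rw [← orderOf_units, hucoe, hθ]
  have hupow : ∀ m : ℕ, ((u ^ m : Fˣ) : F) = θ ^ m := by
    intro m; rw [Units.val_pow_eq_pow_val, hucoe]
  have htop : ∀ z : Fˣ, z ∈ Subgroup.zpowers u := by
    have h1 : Subgroup.zpowers u = ⊤ := by
      apply Subgroup.eq_top_of_card_eq
      rw [Nat.card_zpowers, huord, Nat.card_eq_fintype_card, Fintype.card_units, hF]
    intro z; rw [h1]; trivial
  have hsurj : ∀ z : F, z ≠ 0 → ∃ b : ZMod n, θ ^ b.val = z := by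
    intro z hz
    obtain ⟨m, hm⟩ := Subgroup.mem_zpowers_iff.mp (htop hz.isUnit.unit)
    refine ⟨(m : ZMod n), ?_⟩
    have h1 : (((m : ZMod n)).val : ℤ) ≡ m [ZMOD (orderOf u)] := by
      rw [huord, ZMod.val_intCast]
      exact Int.emod_emod_of_dvd m dvd_rfl
    have h2 : u ^ ((((m : ZMod n)).val : ℕ) : ℤ) = u ^ m := zpow_eq_zpow_iff_modEq.mpr h1
    rw [zpow_natCast] at h2
    rw [← hupow, h2, hm, IsUnit.unit_spec]
  have hadd_val : ∀ s t : ZMod n, θ ^ (s + t).val = θ ^ s.val * θ ^ t.val := by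
    intro s t
    rw [← pow_add]
    have h1 : u ^ (s + t).val = u ^ (s.val + t.val) :=
      pow_eq_pow_iff_modEq.mpr (by rw [huord, ZMod.val_add]; exact Nat.mod_modEq _ _)
    rw [← hupow, h1, hupow]
  -- membership in zmultiples
  have hfac : (q + 1) * (q - 1) = n := by
    rw [hn]
    zify [show 1 ≤ q from by omega, show 1 ≤ q ^ 2 from by omega]
    ring
  have hdvd_n : (q + 1) ∣ n := ⟨q - 1, hfac.symm⟩
  have hcastq : ((q : ZMod n) + 1) = ((q + 1 : ℕ) : ZMod n) := by push_cast; ring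
  have hmem : ∀ x : ZMod n, x ∈ AddSubgroup.zmultiples ((q : ZMod n) + 1) ↔ (q + 1) ∣ x.val := by
    intro x
    constructor
    · intro hx
      obtain ⟨m, hm⟩ := AddSubgroup.mem_zmultiples_iff.mp hx
      set t := (m : ZMod n).val with ht
      have hm2 : (m : ZMod n) * ((q : ZMod n) + 1) = x := by
        rw [← hm, zsmul_eq_mul]
      have hm3 : ((t : ℕ) : ZMod n) = (m : ZMod n) := ZMod.natCast_rightInverse (m : ZMod n)
      have h1 : x = ((t * (q + 1) : ℕ) : ZMod n) := by
        rw [← hm2, hcastq, Nat.cast_mul, hm3]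
      rw [h1, ZMod.val_natCast]
      exact (Nat.dvd_mod_iff hdvd_n).mpr ⟨t, mul_comm _ _⟩
    · rintro ⟨t, ht⟩
      refine AddSubgroup.mem_zmultiples_iff.mpr ⟨(t : ℤ), ?_⟩
      have h1 : ((x.val : ℕ) : ZMod n) = x := ZMod.natCast_rightInverse x
      rw [hcastq, ← h1, ht, zsmul_eq_mul]
      push_cast
      ring
  -- fixed-power criterion
  have hyq : ∀ x : ZMod n, ((θ ^ x.val) ^ q = θ ^ x.val ↔ (q + 1) ∣ x.val) := by
    intro x
    rw [← pow_mul]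
    constructor
    · intro h
      have h1 : u ^ (x.val * q) = u ^ x.val := by
        apply Units.ext
        rw [hupow, hupow]; exact h
      have h2 : x.val * q ≡ x.val [MOD n] := by
        have := pow_eq_pow_iff_modEq.mp h1
        rwa [huord] at this
      have h3 : n ∣ x.val * q - x.val :=
        (Nat.modEq_iff_dvd' (Nat.le_mul_of_pos_right _ (by omega))).mp h2.symm
      have h4 : x.val * q - x.val = x.val * (q - 1) := by
        rw [Nat.mul_sub_left_distrib, Nat.mul_one]
      rw [h4] at h3
      have h5 : (q + 1) * (q - 1) ∣ x.val * (q - 1) := by rw [hfac]; exact h3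
      exact (Nat.mul_dvd_mul_iff_right (show 0 < q - 1 from by omega)).mp h5
    · rintro ⟨t, ht⟩
      have h2 : x.val * q ≡ x.val [MOD n] := by
        have hdv : n ∣ x.val * q - x.val := by
          rw [show x.val * q - x.val = x.val * (q - 1) from by
            rw [Nat.mul_sub_left_distrib, Nat.mul_one], ht]
          exact ⟨t, by rw [← hfac]; ring⟩
        exact ((Nat.modEq_iff_dvd' (Nat.le_mul_of_pos_right _ (by omega))).mpr hdv).symm
      have h1 : u ^ (x.val * q) = u ^ x.val := by
        apply pow_eq_pow_iff_modEq.mpr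
        rwa [huord]
      have := congrArg (Units.val) h1
      rwa [hupow, hupow] at this
  -- main proof
  ext x
  simp only [Set.mem_setOf_eq, Set.mem_union, Set.mem_singleton_iff, Set.mem_compl_iff,
    SetLike.mem_coe]
  constructor
  · rintro ⟨a, ha, b, hb, hab⟩
    by_cases hx0 : x = 0
    · exact Or.inl hx0
    right
    intro hx
    have hdvd : (q + 1) ∣ x.val := (hmem x).mp hx
    have hy : (θ ^ x.val) ^ q = θ ^ x.val := (hyq x).mpr hdvd
    set y := θ ^ x.val with hydef
    have haxb : a = x + b := by rw [← hab]; ring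
    have heq : θ ^ a.val = y * θ ^ b.val := by rw [haxb, hadd_val]
    set ta := θ ^ a.val with hta
    set tb := θ ^ b.val with htb
    have h1 : ta ^ q - θ ^ q = ta - θ := by rw [← hfrob_sub]; exact ha
    have h2 : tb ^ q - θ ^ q = tb - θ := by rw [← hfrob_sub]; exact hb
    have hpow : ta ^ q = y * tb ^ q := by rw [heq, mul_pow, hy]
    have h3 : (y - 1) * (θ ^ q - θ) = 0 := by
      linear_combination h1 - hpow - y * h2 + heq
    have h4 : y = 1 := by
      rcases mul_eq_zero.mp h3 with h | h
      · exact sub_eq_zero.mp h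
      · exact absurd (sub_eq_zero.mp h) hθq
    have h5 : u ^ x.val = 1 := by
      apply Units.ext
      rw [hupow, Units.val_one]; exact h4
    have h6 : n ∣ x.val := huord ▸ orderOf_dvd_of_pow_eq_one h5
    have h7 : x.val = 0 := Nat.eq_zero_of_dvd_of_lt h6 (ZMod.val_lt x)
    exact hx0 ((ZMod.val_eq_zero x).mp h7)
  · rintro (hx0 | hx)
    · refine ⟨1, ?_, 1, ?_, by rw [hx0]; ring⟩ <;>
      · show (θ ^ (1 : ZMod n).val - θ) ^ q = θ ^ (1 : ZMod n).val - θ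
        rw [ZMod.val_one, pow_one, sub_self, zero_pow (by omega)]
    · have hdvd : ¬(q + 1) ∣ x.val := fun h => hx ((hmem x).mpr h)
      have hyne : (θ ^ x.val) ^ q ≠ θ ^ x.val := fun h => hdvd ((hyq x).mp h)
      set y := θ ^ x.val with hydef
      have hy0 : y ≠ 0 := pow_ne_zero _ hθ0
      have hden : y - y ^ q ≠ 0 := sub_ne_zero.mpr (Ne.symm hyne)
      have hden' : y ^ q - y ≠ 0 := sub_ne_zero.mpr hyne
      set N : F := (y ^ q - 1) * θ ^ q - (y - 1) * θ with hNdef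
      set d : F := N / (y - y ^ q) with hddef
      have hNq : N ^ q = (y - 1) * θ - (y ^ q - 1) * θ ^ q := by
        rw [hNdef, hfrob_sub, mul_pow, mul_pow, hfrob_sub, hfrob_sub, one_pow, hcard2, hcard2]
      have hDq : (y - y ^ q) ^ q = y ^ q - y := by rw [hfrob_sub, hcard2]
      have hd : d ^ q = d := by
        rw [hddef, div_pow, hNq, hDq, div_eq_div_iff hden' hden, hNdef]
        ring
      have hdd : d * (y - y ^ q) = N := div_mul_cancel₀ _ hden
      have htd : θ + d ≠ 0 := by
        intro h
        have h2 : (θ + d) ^ q = θ ^ q + d := by rw [hfrob_add, hd]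
        rw [h, zero_pow (by omega)] at h2
        exact hθq (by linear_combination - h2 - h)
      set c : F := y * (θ + d) - θ with hcdef
      have hc : c ^ q = c := by
        rw [hcdef, hfrob_sub, mul_pow, hfrob_add, hd]
        linear_combination -hdd
      have hc2 : θ + c = y * (θ + d) := by rw [hcdef]; ring
      have htc : θ + c ≠ 0 := by rw [hc2]; exact mul_ne_zero hy0 htd
      obtain ⟨b, hbv⟩ := hsurj (θ + d) htd
      refine ⟨x + b, ?_, b, ?_, by ring⟩
      · show (θ ^ (x + b).val - θ) ^ q = θ ^ (x + b).val - θ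
        rw [hadd_val, hbv, ← hydef, ← hc2]
        have : θ + c - θ = c := by ring
        rw [this, hc]
      · show (θ ^ b.val - θ) ^ q = θ ^ b.val - θ
        rw [hbv]
        have : θ + d - θ = d := by ring
        rw [this, hd]
end

section
/- If a and a' are distinct elements of the Bose-Chowla set A(q,θ), then a and a' are not congruent modulo q+1; equivalently, the elements of A(q,θ) can be labeled a_1,...,a_q with a_i ≡ i (mod q+1). -/
set_option maxHeartbeats 1000000 in
theorem bose_chowla_distinct_mod (q : ℕ) (hq : IsPrimePow q) (F : Type*) [Field F]
    [Fintype F] (hF : Fintype.card F = q ^ 2) (θ : F) (hθ : orderOf θ = q ^ 2 - 1) :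
    ∀ a ∈ BoseChowla q θ, ∀ b ∈ BoseChowla q θ, a ≠ b →
      a - b ∉ AddSubgroup.zmultiples ((q : ZMod (q ^ 2 - 1)) + 1) := by
  have hq2 : 2 ≤ q := hq.two_le
  have hq4 : 4 ≤ q ^ 2 := by nlinarith
  have hqlt : q < q ^ 2 - 1 := by
    have h1 : q ^ 2 = q * q := sq q
    have h2 : 2 * q ≤ q * q := Nat.mul_le_mul_right q hq2
    omega
  haveI : NeZero (q ^ 2 - 1) := ⟨by omega⟩
  obtain ⟨p, k, hp, hk, hpk⟩ := hq
  have hp' : p.Prime := hp.nat_prime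
  haveI : Fact p.Prime := ⟨hp'⟩
  -- characteristic of F is p
  obtain ⟨d, hd1, hd2⟩ := FiniteField.card F (ringChar F)
  have hcards : ringChar F ^ (d : ℕ) = p ^ (2 * k) := by
    rw [← hd2, hF, ← hpk, ← pow_mul, mul_comm]
  have hdvd : p ∣ ringChar F :=
    hp'.dvd_of_dvd_pow (show p ∣ ringChar F ^ (d : ℕ) by
      rw [hcards]; exact dvd_pow_self p (by omega))
  have hpe : ringChar F = p := ((Nat.prime_dvd_prime_iff_eq hp' hd1).mp hdvd).symm
  haveI hcp : CharP F p := hpe ▸ ringChar.charP F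
  haveI : ExpChar F p := ExpChar.prime hp'
  set φ := iterateFrobenius F p k with hφdef
  have hφ : ∀ x : F, φ x = x ^ q := fun x => by
    rw [hφdef, iterateFrobenius_def, hpk]
  -- θ nonzero
  have hθ0 : θ ≠ 0 := by
    intro h
    have h2 := pow_orderOf_eq_one θ
    rw [hθ, h, zero_pow (show q ^ 2 - 1 ≠ 0 by omega)] at h2
    exact zero_ne_one h2
  set u : Fˣ := Units.mk0 θ hθ0 with hu
  have huo : orderOf u = q ^ 2 - 1 := by rw [← orderOf_units]; exact hθ
  have hkey : ∀ s t : ℕ, θ ^ s = θ ^ t ↔ s ≡ t [MOD q ^ 2 - 1] := by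
    intro s t
    rw [← huo, ← pow_eq_pow_iff_modEq (x := u)]
    constructor
    · intro h
      ext
      simpa [hu] using h
    · intro h
      simpa [hu] using congrArg Units.val h
  intro a ha b hb hab hmem
  rw [AddSubgroup.mem_zmultiples_iff] at hmem
  obtain ⟨j, hj⟩ := hmem
  obtain ⟨m, hmj⟩ : ∃ m : ℕ, ((m : ℕ) : ZMod (q ^ 2 - 1)) = (j : ZMod (q ^ 2 - 1)) :=
    ⟨_, ZMod.natCast_rightInverse _⟩
  have hj' : ((m : ℕ) : ZMod (q ^ 2 - 1)) * ((q : ZMod (q ^ 2 - 1)) + 1) = a - b := by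
    rw [hmj, ← zsmul_eq_mul]
    exact hj
  have hcast : ((a.val : ℕ) : ZMod (q ^ 2 - 1))
      = ((b.val + m * (q + 1) : ℕ) : ZMod (q ^ 2 - 1)) := by
    rw [Nat.cast_add, Nat.cast_mul, Nat.cast_add, Nat.cast_one, ZMod.natCast_val,
      ZMod.natCast_val, ZMod.cast_id, ZMod.cast_id]
    linear_combination -hj'
  have hmod : a.val ≡ b.val + m * (q + 1) [MOD q ^ 2 - 1] :=
    (ZMod.natCast_eq_natCast_iff _ _ _).mp hcast
  have hpow : θ ^ a.val = θ ^ (b.val + m * (q + 1)) := (hkey _ _).mpr hmod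
  set c : F := (θ ^ (q + 1)) ^ m with hc
  have hxc : θ ^ a.val = θ ^ b.val * c := by
    rw [hpow, pow_add, hc, ← pow_mul, mul_comm (q+1) m]
  have hn1 : (q + 1) * (q - 1) = q ^ 2 - 1 := by
    have := Nat.sq_sub_sq q 1
    simpa using this.symm
  have hcq1 : c ^ (q - 1) = 1 := by
    rw [hc, ← pow_mul, ← pow_mul, mul_comm m (q-1), ← mul_assoc, hn1, pow_mul,
      ← hθ, pow_orderOf_eq_one, one_pow]
  have hcq : c ^ q = c := by
    have : c ^ q = c ^ (q - 1) * c := by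
      rw [← pow_succ]
      congr 1
      omega
    rw [this, hcq1, one_mul]
  -- the field computation
  have ha' : (θ ^ a.val - θ) ^ q = θ ^ a.val - θ := ha
  have hb' : (θ ^ b.val - θ) ^ q = θ ^ b.val - θ := hb
  rw [← hφ] at ha' hb' hcq
  rw [map_sub, map_pow] at ha' hb'
  have hfθq : φ θ = θ ^ q := hφ θ
  by_cases hc1 : c = 1
  · -- then θ^a.val = θ^b.val, so a = b
    rw [hc1, mul_one] at hxc
    have hmm : a.val ≡ b.val [MOD q ^ 2 - 1] := (hkey _ _).mp hxc
    have hv : a.val = b.val :=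
      Nat.ModEq.eq_of_lt_of_lt hmm (ZMod.val_lt a) (ZMod.val_lt b)
    exact hab (ZMod.val_injective _ hv)
  · -- then φ θ = θ, i.e. θ^q = θ, contradicting the order of θ
    have key : (φ θ - θ) * (c - 1) = 0 := by
      have hA : (φ θ) ^ b.val * c - φ θ = θ ^ b.val * c - θ := by
        have hmp : (φ θ) ^ a.val = (φ θ) ^ b.val * c := by
          rw [← map_pow, hxc, map_mul, map_pow, hcq]
        rw [← hmp, ← hxc]; exact ha'
      linear_combination hA - c * hb'
    have : φ θ = θ := by
      rcases mul_eq_zero.mp key with h | h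
      · exact sub_eq_zero.mp h
      · exact absurd (sub_eq_zero.mp h) hc1
    have hθq : θ ^ q = θ ^ 1 := by rw [pow_one, ← hfθq, this]
    have hmq : q ≡ 1 [MOD q ^ 2 - 1] := (hkey _ _).mp hθq
    have := Nat.ModEq.eq_of_lt_of_lt hmq hqlt (by omega)
    omega
end

section
/- If q is an odd prime power, the graph G_{q,θ} has exactly q - 1 absolute points (vertices x with 2x ∈ A(q,θ)). -/
private lemma ncard_root_le {F : Type*} [Field F] (P : Polynomial F) (hP : P ≠ 0) :
    {x : F | Polynomial.eval x P = 0}.ncard ≤ P.natDegree := by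
  classical
  have h1 : {x : F | Polynomial.eval x P = 0} = ↑P.roots.toFinset := by
    ext x
    simp [Polynomial.mem_roots, hP, Polynomial.IsRoot]
  rw [h1, Set.ncard_coe_finset]
  exact le_trans (Multiset.toFinset_card_le _) (Polynomial.card_roots' P)

theorem absolute_points_odd (q : ℕ) (hq : IsPrimePow q) (hodd : Odd q) (F : Type*) [Field F]
    [Fintype F] (hF : Fintype.card F = q ^ 2) (θ : F) (hθ : orderOf θ = q ^ 2 - 1) :
    {x : ZMod (q ^ 2 - 1) | x + x ∈ BoseChowla q θ}.ncard = q - 1 := by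
  classical
  obtain ⟨p, k, hp, hk, hq'⟩ := hq
  have hpp : p.Prime := Nat.prime_iff.mpr hp
  haveI : Fact p.Prime := ⟨hpp⟩
  have hq2 : 2 ≤ q := by
    rw [← hq']; exact Nat.one_lt_pow (by omega) hpp.one_lt
  have hq3 : 3 ≤ q := by obtain ⟨m, hm⟩ := hodd; omega
  have hqq : q * q = q ^ 2 := by ring
  have h9 : 9 ≤ q ^ 2 := by nlinarith
  have hqsq : q < q ^ 2 := by nlinarith
  have hn0 : 0 < q ^ 2 - 1 := by omega
  have hn1 : q - 1 < q ^ 2 - 1 := by omega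
  haveI : NeZero (q ^ 2 - 1) := ⟨by omega⟩
  -- characteristic
  have hpodd : p ≠ 2 := by
    rintro rfl
    obtain ⟨c, hc⟩ : (2 : ℕ) ∣ q := hq' ▸ dvd_pow_self 2 (by omega)
    obtain ⟨m, hm⟩ := hodd
    omega
  haveI hcharp : CharP F p := by
    have hr : CharP F (ringChar F) := ringChar.charP F
    obtain ⟨m, hm', hmcard⟩ := FiniteField.card F (ringChar F)
    have hdvd : p ∣ ringChar F ^ (m : ℕ) := by
      rw [← hmcard, hF, ← hq']
      exact dvd_pow (dvd_pow_self p (by omega)) (by omega)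
    have : p = ringChar F :=
      (Nat.prime_dvd_prime_iff_eq hpp hm').mp (hpp.dvd_of_dvd_pow hdvd)
    rwa [this]
  have hfrobs : ∀ a b : F, (a - b) ^ q = a ^ q - b ^ q := by
    intro a b; rw [← hq']; exact sub_pow_char_pow a b k
  have hfroba : ∀ a b : F, (a + b) ^ q = a ^ q + b ^ q := by
    intro a b; rw [← hq']; exact add_pow_char_pow a b p k
  have h2q : (2 : F) ^ q = 2 := by
    have := hfroba 1 1; norm_num at this; convert this using 2 <;> norm_num
  have h2 : (2 : F) ≠ 0 := by
    intro h
    have h' : ((2 : ℕ) : F) = 0 := by push_cast; exact h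
    have := (CharP.cast_eq_zero_iff F p 2).mp h'
    exact hpodd ((Nat.prime_dvd_prime_iff_eq hpp Nat.prime_two).mp this)
  -- basic facts about θ
  have hθpow : θ ^ (q ^ 2 - 1) = 1 := hθ ▸ pow_orderOf_eq_one θ
  have hθ0 : θ ≠ 0 := by
    intro h
    rw [h, zero_pow (by omega : q ^ 2 - 1 ≠ 0)] at hθpow
    exact zero_ne_one hθpow
  have hθq2 : θ ^ q ^ 2 = θ := by
    calc θ ^ q ^ 2 = θ ^ (q ^ 2 - 1) * θ := by rw [← pow_succ]; congr 1; omega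
      _ = θ := by rw [hθpow, one_mul]
  have hθq : θ ^ q ≠ θ := by
    intro h
    have h1 : θ ^ (q - 1) = 1 := by
      rw [pow_sub₀ θ hθ0 (by omega : 1 ≤ q), h, pow_one]
      exact mul_inv_cancel₀ hθ0
    have h2' := orderOf_dvd_of_pow_eq_one h1
    rw [hθ] at h2'
    exact absurd (Nat.le_of_dvd (by omega) h2') (by omega)
  have hδ : θ ^ q - θ ≠ 0 := sub_ne_zero.mpr hθq
  have hδq : (θ ^ q - θ) ^ q = -(θ ^ q - θ) := by
    rw [hfrobs, ← pow_mul, hqq, hθq2]; ring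
  -- powers of θ are fixed by the q²-power map
  have hpowq2 : ∀ a : ℕ, ((θ ^ a) ^ q) ^ q = θ ^ a := by
    intro a
    calc ((θ ^ a) ^ q) ^ q = θ ^ (q ^ 2 * a) := by
          rw [← pow_mul, ← pow_mul]; congr 1; ring
      _ = θ ^ a := by rw [pow_mul, hθq2]
  -- membership characterization
  have hval : ∀ x : ZMod (q ^ 2 - 1), θ ^ (x + x).val = (θ ^ x.val) ^ 2 := by
    intro x
    have hmo := pow_mod_orderOf θ (x.val + x.val)
    rw [hθ] at hmo
    rw [ZMod.val_add, hmo, pow_add]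
    exact (sq (θ ^ x.val)).symm
  have hmemS : ∀ x : ZMod (q ^ 2 - 1), (x + x ∈ BoseChowla q θ) ↔
      ((θ ^ x.val) ^ q) ^ 2 - (θ ^ x.val) ^ 2 = θ ^ q - θ := by
    intro x
    show ((θ ^ (x + x).val - θ) ^ q = θ ^ (x + x).val - θ) ↔ _
    rw [hval x, hfrobs, pow_right_comm]
    constructor <;> intro h <;> linear_combination h
  -- nonvanishing of u for points of S
  have hu_ne : ∀ a : ℕ, ((θ ^ a) ^ q) ^ 2 - (θ ^ a) ^ 2 = θ ^ q - θ →
      (θ ^ a) ^ q - θ ^ a ≠ 0 := by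
    intro a h hc
    have h1 : (θ ^ a) ^ q = θ ^ a := by linear_combination hc
    rw [h1] at h
    exact hδ (by linear_combination -h)
  -- generator property
  have hgen : ∀ y : F, y ≠ 0 → ∃ a : ℕ, a < q ^ 2 - 1 ∧ θ ^ a = y := by
    intro y hy
    have hcu : Nat.card Fˣ = q ^ 2 - 1 := by
      rw [Nat.card_eq_fintype_card, Fintype.card_units, hF]
    set θu : Fˣ := Units.mk0 θ hθ0 with hθudef
    have hou : orderOf θu = q ^ 2 - 1 := by
      rw [← orderOf_units]; exact hθ
    have htop : Subgroup.zpowers θu = ⊤ :=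
      (Subgroup.card_eq_iff_eq_top _).mp (by rw [Nat.card_zpowers, hou, hcu])
    have hmem : Units.mk0 y hy ∈ Submonoid.powers θu := by
      rw [mem_powers_iff_mem_zpowers, htop]; trivial
    obtain ⟨m, hm⟩ := hmem
    refine ⟨m % (q ^ 2 - 1), Nat.mod_lt _ hn0, ?_⟩
    have : θ ^ (m % (q ^ 2 - 1)) = θ ^ m := by rw [← hθ, pow_mod_orderOf]
    rw [this]
    have := congrArg Units.val hm
    simpa [hθudef] using this
  -- the map
  set f : ZMod (q ^ 2 - 1) → F := fun x => (θ ^ x.val) ^ q - θ ^ x.val with hfdef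
  -- injectivity
  have hinj : Set.InjOn f {x : ZMod (q ^ 2 - 1) | x + x ∈ BoseChowla q θ} := by
    intro x1 hx1 x2 hx2 hf
    have hc1 := (hmemS x1).mp hx1
    have hc2 := (hmemS x2).mp hx2
    have hf' : (θ ^ x1.val) ^ q - θ ^ x1.val = (θ ^ x2.val) ^ q - θ ^ x2.val := hf
    have hu0 : (θ ^ x1.val) ^ q - θ ^ x1.val ≠ 0 := hu_ne _ hc1
    have e1 : ((θ ^ x1.val) ^ q - θ ^ x1.val) * ((θ ^ x1.val) ^ q + θ ^ x1.val)
        = θ ^ q - θ := by linear_combination hc1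
    have e2 : ((θ ^ x1.val) ^ q - θ ^ x1.val) * ((θ ^ x2.val) ^ q + θ ^ x2.val)
        = θ ^ q - θ := by rw [hf']; linear_combination hc2
    have hs : (θ ^ x1.val) ^ q + θ ^ x1.val = (θ ^ x2.val) ^ q + θ ^ x2.val :=
      mul_left_cancel₀ hu0 (e1.trans e2.symm)
    have hy : θ ^ x1.val = θ ^ x2.val := by
      have h2y : (2 : F) * θ ^ x1.val = 2 * θ ^ x2.val := by linear_combination hs - hf'
      exact mul_left_cancel₀ h2 h2y
    have hv : x1.val = x2.val :=
      pow_injOn_Iio_orderOf (by simp [Set.mem_Iio, hθ, ZMod.val_lt])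
        (by simp [Set.mem_Iio, hθ, ZMod.val_lt]) hy
    exact ZMod.val_injective _ hv
  -- image
  have himg : f '' {x : ZMod (q ^ 2 - 1) | x + x ∈ BoseChowla q θ}
      = {u : F | u ^ q = -u ∧ u ≠ 0} := by
    ext u
    constructor
    · rintro ⟨x, hx, rfl⟩
      have h := (hmemS x).mp hx
      refine ⟨?_, hu_ne _ h⟩
      show ((θ ^ x.val) ^ q - θ ^ x.val) ^ q = -((θ ^ x.val) ^ q - θ ^ x.val)
      rw [hfrobs, hpowq2]
      ring
    · rintro ⟨huq, hu0⟩
      set y : F := ((θ ^ q - θ) * u⁻¹ - u) * 2⁻¹ with hydef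
      have hsq : ((θ ^ q - θ) * u⁻¹) ^ q = (θ ^ q - θ) * u⁻¹ := by
        rw [mul_pow, hδq, inv_pow, huq, inv_neg]
        ring
      have hyq : y ^ q = ((θ ^ q - θ) * u⁻¹ + u) * 2⁻¹ := by
        rw [hydef, mul_pow, hfrobs, hsq, huq, inv_pow, h2q]
        ring
      have hyu : y ^ q - y = u := by
        rw [hyq, hydef]
        field_simp
        ring
      have hy0 : y ≠ 0 := by
        intro h
        apply hu0
        rw [← hyu, h, zero_pow (by omega : q ≠ 0), sub_zero]
      obtain ⟨a, ha, hya⟩ := hgen y hy0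
      refine ⟨(a : ZMod (q ^ 2 - 1)), ?_, ?_⟩
      · rw [Set.mem_setOf_eq, hmemS, ZMod.val_cast_of_lt ha, hya, hyq, hydef]
        field_simp
        ring
      · show (θ ^ (a : ZMod (q ^ 2 - 1)).val) ^ q - θ ^ (a : ZMod (q ^ 2 - 1)).val = u
        rw [ZMod.val_cast_of_lt ha, hya, hyu]
  -- counting the kernel
  have hK : ({u : F | u ^ q = -u}).ncard = q := by
    set φ : F →+ F :=
      { toFun := fun u => u ^ q + u
        map_zero' := by simp [zero_pow (by omega : q ≠ 0)]
        map_add' := by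
          intro a b
          show (a + b) ^ q + (a + b) = (a ^ q + a) + (b ^ q + b)
          rw [hfroba]; ring } with hφdef
    have hker : (φ.ker : Set F) = {u : F | u ^ q = -u} := by
      ext u
      simp only [SetLike.mem_coe, AddMonoidHom.mem_ker, Set.mem_setOf_eq]
      have hφu : φ u = u ^ q + u := rfl
      rw [hφu]
      constructor
      · intro h; linear_combination h
      · intro h; linear_combination h
    have hcard1 : Nat.card φ.ker = ({u : F | u ^ q = -u}).ncard := by
      rw [← hker]; exact Nat.card_coe_set_eq _
    have hlt1 : (Polynomial.X : Polynomial F).natDegree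
        < (Polynomial.X ^ q : Polynomial F).natDegree := by
      rw [Polynomial.natDegree_X_pow, Polynomial.natDegree_X]; omega
    have hdeg1 : (Polynomial.X ^ q + Polynomial.X : Polynomial F).natDegree = q := by
      rw [Polynomial.natDegree_add_eq_left_of_natDegree_lt hlt1, Polynomial.natDegree_X_pow]
    have hne1 : (Polynomial.X ^ q + Polynomial.X : Polynomial F) ≠ 0 := by
      intro h
      rw [h, Polynomial.natDegree_zero] at hdeg1
      omega
    have hlt2 : (-Polynomial.X : Polynomial F).natDegree
        < (Polynomial.X ^ q : Polynomial F).natDegree := by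
      rw [Polynomial.natDegree_X_pow, Polynomial.natDegree_neg, Polynomial.natDegree_X]; omega
    have hdeg2 : (Polynomial.X ^ q - Polynomial.X : Polynomial F).natDegree = q := by
      rw [sub_eq_add_neg, Polynomial.natDegree_add_eq_left_of_natDegree_lt hlt2,
        Polynomial.natDegree_X_pow]
    have hne2 : (Polynomial.X ^ q - Polynomial.X : Polynomial F) ≠ 0 := by
      intro h
      rw [h, Polynomial.natDegree_zero] at hdeg2
      omega
    have hb1 : Nat.card φ.ker ≤ q := by
      rw [hcard1]
      calc ({u : F | u ^ q = -u}).ncard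
          ≤ ({x : F | Polynomial.eval x (Polynomial.X ^ q + Polynomial.X) = 0}).ncard := by
            apply Set.ncard_le_ncard _ (Set.toFinite _)
            intro x hx
            simp only [Set.mem_setOf_eq] at hx ⊢
            simp [hx]
        _ ≤ q := (ncard_root_le _ hne1).trans (le_of_eq hdeg1)
    have hb2 : Nat.card φ.range ≤ q := by
      have hcard2 : Nat.card φ.range = ((φ.range : Set F)).ncard :=
        Nat.card_coe_set_eq _
      rw [hcard2]
      calc ((φ.range : Set F)).ncard
          ≤ ({x : F | Polynomial.eval x (Polynomial.X ^ q - Polynomial.X) = 0}).ncard := by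
            apply Set.ncard_le_ncard _ (Set.toFinite _)
            rintro s ⟨v, rfl⟩
            simp only [Set.mem_setOf_eq, Polynomial.eval_sub, Polynomial.eval_pow,
              Polynomial.eval_X]
            have hv : v ^ q ^ 2 = v := by
              have := FiniteField.pow_card v
              rwa [hF] at this
            have : (v ^ q + v : F) ^ q = v ^ q + v := by
              rw [hfroba, ← pow_mul, hqq, hv]
              ring
            show (v ^ q + v : F) ^ q - (v ^ q + v) = 0
            rw [this]; ring
        _ ≤ q := (ncard_root_le _ hne2).trans (le_of_eq hdeg2)
    have h1 : Nat.card F = Nat.card (F ⧸ φ.ker) * Nat.card φ.ker :=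
      AddSubgroup.card_eq_card_quotient_mul_card_addSubgroup φ.ker
    have h2' : Nat.card (F ⧸ φ.ker) = Nat.card φ.range :=
      Nat.card_congr (QuotientAddGroup.quotientKerEquivRange φ).toEquiv
    have hcardF : Nat.card F = q * q := by
      rw [Nat.card_eq_fintype_card, hF, hqq]
    have hqle : q * q ≤ q * Nat.card φ.ker := by
      calc q * q = Nat.card (F ⧸ φ.ker) * Nat.card φ.ker := by rw [← h1, hcardF]
        _ = Nat.card φ.range * Nat.card φ.ker := by rw [h2']
        _ ≤ q * Nat.card φ.ker := Nat.mul_le_mul_right _ hb2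
    have hge : q ≤ Nat.card φ.ker := Nat.le_of_mul_le_mul_left hqle (by omega)
    rw [← hcard1]
    omega
  -- conclusion
  have h0mem : (0 : F) ∈ {u : F | u ^ q = -u} := by
    simp [zero_pow (by omega : q ≠ 0)]
  have hsetK0 : {u : F | u ^ q = -u ∧ u ≠ 0} = {u : F | u ^ q = -u} \ {0} := by
    ext u
    simp only [Set.mem_setOf_eq, Set.mem_diff, Set.mem_singleton_iff]
  calc ({x : ZMod (q ^ 2 - 1) | x + x ∈ BoseChowla q θ}).ncard
      = (f '' {x : ZMod (q ^ 2 - 1) | x + x ∈ BoseChowla q θ}).ncard :=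
        (Set.ncard_image_of_injOn hinj).symm
    _ = ({u : F | u ^ q = -u ∧ u ≠ 0}).ncard := by rw [himg]
    _ = q - 1 := by
        rw [hsetK0, Set.ncard_diff_singleton_of_mem h0mem, hK]
end

section
/- If q is an odd prime power, then G_{q,θ} has exactly (q³ - 2q + 1)/2 = q³/2 - q + 1/2 edges. -/
open Finset

section Aux

variable {F : Type*} [Field F] [Fintype F]

/-- The two key counting facts in the field `F` of cardinality `q^2`. -/
lemma bose_chowla_field_counts (q p k : ℕ) (hp : p.Prime) (hqpk : q = p ^ k) (hk : 0 < k)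
    (hodd : Odd q) (hF : Fintype.card F = q ^ 2) (θ : F) (hθ : orderOf θ = q ^ 2 - 1) :
    Nat.card {y : F // (y - θ) ^ q = y - θ} = q ∧
    Nat.card {y : F // (y ^ 2 - θ) ^ q = y ^ 2 - θ} = q - 1 := by
  classical
  haveI : Fact p.Prime := ⟨hp⟩
  -- `q ≥ 3`
  have hq2 : 2 ≤ q := by
    have := Nat.one_lt_pow hk.ne' hp.one_lt
    omega
  have hq3 : 3 ≤ q := by
    have := Nat.odd_iff.mp hodd
    omega
  have hq2g : q + 2 ≤ q ^ 2 := by nlinarith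
  have hn1 : 1 ≤ q ^ 2 := by omega
  -- characteristic of F is p
  have hcp : CharP F (ringChar F) := ringChar.charP F
  obtain ⟨m, hm, hcard'⟩ := FiniteField.card F (ringChar F)
  haveI hchar : CharP F p := by
    have h1 : p ^ (k * 2) = ringChar F ^ (m : ℕ) := by
      rw [pow_mul, ← hqpk, ← hF, hcard']
    have hdvd : p ∣ ringChar F ^ (m : ℕ) := by
      rw [← h1]; exact dvd_pow_self p (by positivity)
    have := hp.dvd_of_dvd_pow hdvd
    have hpeq : p = ringChar F := ((Nat.prime_dvd_prime_iff_eq hp hm).mp this)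
    rwa [hpeq]
  have hfrob : ∀ a b : F, (a - b) ^ q = a ^ q - b ^ q := by
    intro a b; rw [hqpk]; exact sub_pow_char_pow a b k
  have hfroba : ∀ a b : F, (a + b) ^ q = a ^ q + b ^ q := by
    intro a b; rw [hqpk]; exact add_pow_char_pow a b p k
  have hq0 : q ≠ 0 := by omega
  have hnn : q ^ 2 - 1 ≠ 0 := by omega
  have hθn : θ ^ (q ^ 2 - 1) = 1 := by rw [← hθ]; exact pow_orderOf_eq_one θ
  have hθ0 : θ ≠ 0 := by
    intro h
    rw [h, zero_pow hnn] at hθn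
    exact zero_ne_one hθn
  -- power injectivity modulo the order, via units
  set θu : Fˣ := Units.mk0 θ hθ0 with hθu
  have hvalθ : ∀ a : ℕ, ((θu ^ a : Fˣ) : F) = θ ^ a := by
    intro a; rw [Units.val_pow_eq_pow_val]; rfl
  have hou : orderOf θu = q ^ 2 - 1 := by rw [← orderOf_units]; exact hθ
  have hppow : ∀ a b : ℕ, θ ^ a = θ ^ b ↔ a % (q ^ 2 - 1) = b % (q ^ 2 - 1) := by
    intro a b
    rw [← hou]
    constructor
    · intro h
      exact pow_inj_mod.mp (Units.ext (by rw [hvalθ, hvalθ]; exact h))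
    · intro h
      have h2 := (pow_inj_mod (x := θu) (n := a) (m := b)).mpr h
      rw [← hvalθ a, ← hvalθ b, h2]
  have hθq : θ ^ q ≠ θ := by
    intro h
    have h2 : θ ^ q = θ ^ 1 := by rwa [pow_one]
    have := (hppow q 1).mp h2
    rw [Nat.mod_eq_of_lt (by omega), Nat.mod_eq_of_lt (by omega)] at this
    omega
  -- the subfield `K` of fixed points of Frobenius has exactly `q` elements
  set K : Finset F := univ.filter fun y : F => y ^ q = y with hK
  have h0K : (0 : F) ∈ K := by simp [hK, zero_pow hq0]
  have hKle : K.card ≤ q := by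
    set P : Polynomial F := Polynomial.X ^ q - Polynomial.X with hP
    have hdX : (Polynomial.X : Polynomial F).natDegree <
        (Polynomial.X ^ q : Polynomial F).natDegree := by
      rw [Polynomial.natDegree_X_pow, Polynomial.natDegree_X]; omega
    have hPdeg : P.natDegree = q := by
      rw [hP, Polynomial.natDegree_sub_eq_left_of_natDegree_lt hdX, Polynomial.natDegree_X_pow]
    have hP0 : P ≠ 0 := by
      intro h
      rw [h, Polynomial.natDegree_zero] at hPdeg
      omega
    have hsub : K ⊆ P.roots.toFinset := by
      intro y hy
      simp only [hK, mem_filter, mem_univ, true_and] at hy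
      simp only [Multiset.mem_toFinset, Polynomial.mem_roots hP0, Polynomial.IsRoot, hP,
        Polynomial.eval_sub, Polynomial.eval_pow, Polynomial.eval_X]
      rw [← hP, Polynomial.mem_roots hP0]
      simp only [Polynomial.IsRoot, hP, Polynomial.eval_sub, Polynomial.eval_pow, Polynomial.eval_X]
      rw [hy, sub_self]
    calc K.card ≤ P.roots.toFinset.card := Finset.card_le_card hsub
      _ ≤ Multiset.card P.roots := Multiset.toFinset_card_le _
      _ ≤ P.natDegree := Polynomial.card_roots' P
      _ = q := hPdeg
  have hKge : q ≤ K.card := by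
    have hmaps : ∀ j ∈ Finset.range (q - 1), θ ^ (j * (q + 1)) ∈ K.erase 0 := by
      intro j _
      simp only [Finset.mem_erase, hK, mem_filter, mem_univ, true_and]
      refine ⟨pow_ne_zero _ hθ0, ?_⟩
      rw [← pow_mul]
      apply (hppow _ _).mpr
      have e : j * (q + 1) * q = (q ^ 2 - 1) * j + j * (q + 1) := by
        zify [hn1]; ring
      rw [e, Nat.mul_add_mod]
    have hinj : Set.InjOn (fun j => θ ^ (j * (q + 1))) (Finset.range (q - 1)) := by
      intro a ha b hb hab
      simp only [Finset.coe_range, Set.mem_Iio] at ha hb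
      simp only at hab
      have h := (hppow _ _).mp hab
      have hlt : ∀ c : ℕ, c < q - 1 → c * (q + 1) < q ^ 2 - 1 := by
        intro c hc
        calc c * (q + 1) ≤ (q - 2) * (q + 1) := Nat.mul_le_mul_right _ (by omega)
          _ < q ^ 2 - 1 := by zify [show 2 ≤ q by omega, hn1]; nlinarith
      rw [Nat.mod_eq_of_lt (hlt a ha), Nat.mod_eq_of_lt (hlt b hb)] at h
      exact Nat.eq_of_mul_eq_mul_right (by omega) h
    have h1 := Finset.card_le_card_of_injOn _ hmaps hinj
    rw [Finset.card_range] at h1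
    have h2 : (K.erase 0).card = K.card - 1 := Finset.card_erase_of_mem h0K
    have h3 : 1 ≤ K.card := Finset.card_pos.mpr ⟨0, h0K⟩
    omega
  have hKcard : K.card = q := le_antisymm hKle hKge
  -- count of the Bose-Chowla fiber: bijection with K via `y ↦ y - θ`
  have hA : (univ.filter fun y : F => (y - θ) ^ q = y - θ).card = q := by
    have hb : (univ.filter fun y : F => (y - θ) ^ q = y - θ).card = K.card := by
      apply Finset.card_bij' (fun y _ => y - θ) (fun z _ => z + θ)
      · intro a ha
        simp only [mem_filter, mem_univ, true_and] at ha
        simp only [hK, mem_filter, mem_univ, true_and]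
        exact ha
      · intro a ha
        simp only [hK, mem_filter, mem_univ, true_and] at ha
        simp only [mem_filter, mem_univ, true_and]
        rw [add_sub_cancel_right]
        exact ha
      · intro a _; ring
      · intro a _; ring
    exact hb.trans hKcard
  -- `β := θ^q - θ`
  set β : F := θ ^ q - θ with hβdef
  have hβ : β ≠ 0 := sub_ne_zero.mpr hθq
  have hθq2 : θ ^ (q * q) = θ := by
    have h : q * q = (q ^ 2 - 1) + 1 := by
      rw [← pow_two]; omega
    rw [h, pow_succ, hθn, one_mul]
  have hβq : β ^ q = -β := by
    rw [hβdef, hfrob, ← pow_mul, hθq2]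
    ring
  -- the set U of anti-fixed points, minus 0, has q - 1 elements
  have hU : (univ.filter fun u : F => u ^ q = -u ∧ u ≠ 0).card = q - 1 := by
    have hKe : (K.erase 0).card = q - 1 := by
      rw [Finset.card_erase_of_mem h0K, hKcard]
    refine Eq.trans ?_ hKe
    apply Finset.card_bij' (fun u _ => u * β⁻¹) (fun z _ => z * β)
    · intro a ha
      simp only [mem_filter, mem_univ, true_and] at ha
      simp only [Finset.mem_erase, hK, mem_filter, mem_univ, true_and]
      constructor
      · exact mul_ne_zero ha.2 (inv_ne_zero hβ)
      · rw [mul_pow, inv_pow, hβq, ha.1, inv_neg]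
        ring
    · intro a ha
      simp only [Finset.mem_erase, hK, mem_filter, mem_univ, true_and] at ha
      simp only [mem_filter, mem_univ, true_and]
      constructor
      · rw [mul_pow, hβq, ha.2]; ring
      · exact mul_ne_zero ha.1 hβ
    · intro a _; field_simp
    · intro a _; field_simp
  -- 2 ≠ 0 and 2^q = 2
  have hp2 : p ≠ 2 := by
    rintro rfl
    rw [hqpk] at hodd
    exact (Nat.not_odd_iff_even.mpr (Nat.even_pow.mpr ⟨even_two, hk.ne'⟩)) hodd
  have h2 : (2 : F) ≠ 0 := by
    intro h
    have h' : ((2 : ℕ) : F) = 0 := by exact_mod_cast h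
    have := (CharP.cast_eq_zero_iff F p 2).mp h'
    exact hp2 ((Nat.prime_dvd_prime_iff_eq hp Nat.prime_two).mp this)
  have h2q : (2 : F) ^ q = 2 := by
    have h : ((2 : F)) = 1 + 1 := by norm_num
    rw [h, hfroba, one_pow]
  -- the main counts
  constructor
  · rw [Nat.card_eq_fintype_card, Fintype.card_subtype]
    exact hA
  rw [Nat.card_eq_fintype_card, Fintype.card_subtype]
  have hcond : ∀ y : F, ((y ^ 2 - θ) ^ q = y ^ 2 - θ) ↔ (y ^ q - y) * (y ^ q + y) = β := by
    intro y
    have hyq : (y ^ 2) ^ q = (y ^ q) ^ 2 := by rw [← pow_mul, mul_comm, pow_mul]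
    rw [hfrob, hyq]
    constructor
    · intro h; linear_combination h
    · intro h; linear_combination h
  rw [Finset.filter_congr (fun y _ => hcond y)]
  refine Eq.trans ?_ hU
  have hpowcard : ∀ y : F, (y ^ q) ^ q = y := by
    intro y
    rw [← pow_mul, ← pow_two, ← hF]
    exact FiniteField.pow_card y
  apply Finset.card_bij' (fun y _ => y ^ q - y)
    (fun u _ => (β * u⁻¹ - u) * (2 : F)⁻¹)
  · intro y hy
    simp only [mem_filter, mem_univ, true_and] at hy ⊢
    constructor
    · rw [hfrob, hpowcard]; ring
    · intro h0
      rw [h0, zero_mul] at hy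
      exact hβ hy.symm
  · intro u hu
    simp only [mem_filter, mem_univ, true_and] at hu ⊢
    obtain ⟨hu1, hu2⟩ := hu
    have e1 : ((β * u⁻¹ - u) * (2 : F)⁻¹) ^ q = (β * u⁻¹ + u) * (2 : F)⁻¹ := by
      rw [mul_pow, hfrob, mul_pow, inv_pow, inv_pow, hu1, hβq, h2q, inv_neg]
      ring
    rw [e1]
    field_simp
    ring
  · intro y hy
    simp only [mem_filter, mem_univ, true_and] at hy
    have hne : y ^ q - y ≠ 0 := by
      intro h0
      rw [h0, zero_mul] at hy
      exact hβ hy.symm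
    have hβy : β * (y ^ q - y)⁻¹ = y ^ q + y := by
      rw [← hy]
      field_simp
    rw [hβy]
    field_simp
    ring
  · intro u hu
    simp only [mem_filter, mem_univ, true_and] at hu
    obtain ⟨hu1, hu2⟩ := hu
    have e1 : ((β * u⁻¹ - u) * (2 : F)⁻¹) ^ q = (β * u⁻¹ + u) * (2 : F)⁻¹ := by
      rw [mul_pow, hfrob, mul_pow, inv_pow, inv_pow, hu1, hβq, h2q, inv_neg]
      ring
    rw [e1]
    field_simp
    ring

end Aux

set_option maxHeartbeats 2000000 in
theorem cayley_graph_edges_odd (q : ℕ) (hq : IsPrimePow q) (hodd : Odd q) (F : Type*) [Field F]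
    [Fintype F] (hF : Fintype.card F = q ^ 2) (θ : F) (hθ : orderOf θ = q ^ 2 - 1) :
    2 * (CayleyGraph q θ).edgeSet.ncard = q ^ 3 - 2 * q + 1 := by
  classical
  obtain ⟨p, k, hpp, hk, hqpk⟩ := hq
  have hp : p.Prime := hpp.nat_prime
  have hqpk' : q = p ^ k := hqpk.symm
  have hq2 : 2 ≤ q := by
    have := Nat.one_lt_pow hk.ne' hp.one_lt
    omega
  have hq3 : 3 ≤ q := by
    have := Nat.odd_iff.mp hodd
    omega
  have hq2g : q + 2 ≤ q ^ 2 := by nlinarith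
  have hn1 : 1 ≤ q ^ 2 := by omega
  haveI : NeZero (q ^ 2 - 1) := ⟨by omega⟩
  obtain ⟨hAcard0, hBcard0⟩ :=
    bose_chowla_field_counts q p k hp hqpk' hk hodd hF θ hθ
  have hAcard : (univ.filter fun y : F => (y - θ) ^ q = y - θ).card = q := by
    rw [Nat.card_eq_fintype_card, Fintype.card_subtype] at hAcard0
    exact hAcard0
  have hBcard : (univ.filter fun y : F => (y ^ 2 - θ) ^ q = y ^ 2 - θ).card = q - 1 := by
    rw [Nat.card_eq_fintype_card, Fintype.card_subtype] at hBcard0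
    exact hBcard0
  -- basic facts about θ
  have hθn : θ ^ (q ^ 2 - 1) = 1 := by rw [← hθ]; exact pow_orderOf_eq_one θ
  have hθ0 : θ ≠ 0 := by
    intro h
    rw [h, zero_pow (by omega : q ^ 2 - 1 ≠ 0)] at hθn
    exact zero_ne_one hθn
  set θu : Fˣ := Units.mk0 θ hθ0 with hθu
  have hvalθ : ∀ a : ℕ, ((θu ^ a : Fˣ) : F) = θ ^ a := by
    intro a; rw [Units.val_pow_eq_pow_val]; rfl
  have hou : orderOf θu = q ^ 2 - 1 := by rw [← orderOf_units]; exact hθ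
  have hppow : ∀ a b : ℕ, θ ^ a = θ ^ b ↔ a % (q ^ 2 - 1) = b % (q ^ 2 - 1) := by
    intro a b
    rw [← hou]
    constructor
    · intro h
      exact pow_inj_mod.mp (Units.ext (by rw [hvalθ, hvalθ]; exact h))
    · intro h
      have h2 := (pow_inj_mod (x := θu) (n := a) (m := b)).mpr h
      rw [← hvalθ a, ← hvalθ b, h2]
  have hθq : θ ^ q ≠ θ := by
    intro h
    have h2 : θ ^ q = θ ^ 1 := by rwa [pow_one]
    have := (hppow q 1).mp h2
    rw [Nat.mod_eq_of_lt (by omega), Nat.mod_eq_of_lt (by omega)] at this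
    omega
  -- the discrete exponential map
  have hpow : ∀ m : ℕ, θ ^ ((m : ZMod (q ^ 2 - 1))).val = θ ^ m := by
    intro m
    rw [ZMod.val_natCast, ← hθ, pow_mod_orderOf]
  have hval : ∀ v : ZMod (q ^ 2 - 1), ((v.val : ℕ) : ZMod (q ^ 2 - 1)) = v := fun v =>
    ZMod.natCast_rightInverse v
  have hinj : ∀ v w : ZMod (q ^ 2 - 1), θ ^ v.val = θ ^ w.val → v = w := by
    intro v w h
    have := (hppow _ _).mp h
    rw [Nat.mod_eq_of_lt (ZMod.val_lt v), Nat.mod_eq_of_lt (ZMod.val_lt w)] at this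
    rw [← hval v, ← hval w, this]
  have hsurj : ∀ y : F, y ≠ 0 → ∃ v : ZMod (q ^ 2 - 1), θ ^ v.val = y := by
    intro y hy
    have hfin : IsOfFinOrder θu := by
      rw [← orderOf_pos_iff, hou]; omega
    have htop : Subgroup.zpowers θu = ⊤ := by
      apply Subgroup.eq_top_of_card_eq
      rw [Nat.card_eq_fintype_card, Fintype.card_zpowers, hou, Nat.card_eq_fintype_card,
        Fintype.card_units, hF]
    have hmem : Units.mk0 y hy ∈ Subgroup.zpowers θu := htop ▸ Subgroup.mem_top _
    obtain ⟨m, hm⟩ := (Submonoid.mem_powers_iff _ _).mp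
      (hfin.mem_powers_iff_mem_zpowers.mpr hmem)
    refine ⟨(m : ZMod (q ^ 2 - 1)), ?_⟩
    rw [hpow]
    have h := congrArg Units.val hm
    rw [Units.val_pow_eq_pow_val] at h
    simpa [hθu] using h
  -- cardinality of the Bose-Chowla set inside ZMod
  have hAfin : (univ.filter fun v : ZMod (q ^ 2 - 1) => v ∈ BoseChowla q θ).card = q := by
    refine Eq.trans ?_ hAcard
    apply Finset.card_bij (fun v _ => θ ^ v.val)
    · intro v hv
      simp only [mem_filter, mem_univ, true_and] at hv ⊢
      exact hv
    · intro v₁ h₁ v₂ h₂ h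
      exact hinj _ _ h
    · intro y hy
      simp only [mem_filter, mem_univ, true_and] at hy
      have hy0 : y ≠ 0 := by
        intro h0
        rw [h0, zero_sub, neg_pow, Odd.neg_one_pow hodd, neg_one_mul] at hy
        exact hθq (neg_injective hy)
      obtain ⟨v, hv⟩ := hsurj y hy0
      refine ⟨v, ?_, hv⟩
      simp only [mem_filter, mem_univ, true_and]
      show (θ ^ v.val - θ) ^ q = θ ^ v.val - θ
      rw [hv]
      exact hy
  -- cardinality of {v : 2v ∈ A}
  have hdouble : ∀ v : ZMod (q ^ 2 - 1), θ ^ (2 * v).val = (θ ^ v.val) ^ 2 := by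
    intro v
    have h : (2 * v) = ((2 * v.val : ℕ) : ZMod (q ^ 2 - 1)) := by
      push_cast
      rw [hval]
    rw [h, hpow, mul_comm, pow_mul]
  have hTfin : (univ.filter fun v : ZMod (q ^ 2 - 1) =>
      2 * v ∈ BoseChowla q θ).card = q - 1 := by
    refine Eq.trans ?_ hBcard
    apply Finset.card_bij (fun v _ => θ ^ v.val)
    · intro v hv
      simp only [mem_filter, mem_univ, true_and] at hv ⊢
      have h : (θ ^ (2 * v).val - θ) ^ q = θ ^ (2 * v).val - θ := hv
      rwa [hdouble] at h
    · intro v₁ h₁ v₂ h₂ h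
      exact hinj _ _ h
    · intro y hy
      simp only [mem_filter, mem_univ, true_and] at hy
      have hy0 : y ≠ 0 := by
        intro h0
        rw [h0] at hy
        rw [zero_pow (by norm_num : (2:ℕ) ≠ 0), zero_sub, neg_pow,
          Odd.neg_one_pow hodd, neg_one_mul] at hy
        exact hθq (neg_injective hy)
      obtain ⟨v, hv⟩ := hsurj y hy0
      refine ⟨v, ?_, hv⟩
      simp only [mem_filter, mem_univ, true_and]
      show (θ ^ (2 * v).val - θ) ^ q = θ ^ (2 * v).val - θ
      rw [hdouble, hv]
      exact hy
  -- adjacency and degrees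
  set G := CayleyGraph q θ with hG
  have hAdj : ∀ v w : ZMod (q ^ 2 - 1), G.Adj v w ↔ v ≠ w ∧ v + w ∈ BoseChowla q θ := by
    intro v w
    rw [hG]
    show (SimpleGraph.fromRel _).Adj v w ↔ _
    rw [SimpleGraph.fromRel_adj]
    constructor
    · rintro ⟨hne, h | h⟩
      · exact ⟨hne, h⟩
      · rw [add_comm] at h; exact ⟨hne, h⟩
    · rintro ⟨hne, h⟩
      exact ⟨hne, Or.inl h⟩
  have hdeg : ∀ v : ZMod (q ^ 2 - 1),
      G.degree v = if 2 * v ∈ BoseChowla q θ then q - 1 else q := by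
    intro v
    have h1 : G.degree v =
        (univ.filter fun z : ZMod (q ^ 2 - 1) => z ∈ BoseChowla q θ ∧ z ≠ 2 * v).card := by
      rw [← SimpleGraph.card_neighborFinset_eq_degree]
      apply Finset.card_bij' (fun w _ => v + w) (fun z _ => z - v)
      · intro w hw
        rw [SimpleGraph.mem_neighborFinset, hAdj] at hw
        simp only [mem_filter, mem_univ, true_and]
        refine ⟨hw.2, ?_⟩
        intro h
        apply hw.1
        have h2 : v + w = v + v := by rw [h, two_mul]
        exact (add_left_cancel h2).symm
      · intro z hz
        simp only [mem_filter, mem_univ, true_and] at hz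
        rw [SimpleGraph.mem_neighborFinset, hAdj]
        constructor
        · intro h
          apply hz.2
          linear_combination -h
        · rw [add_sub_cancel]
          exact hz.1
      · intro w _; ring
      · intro z _; ring
    rw [h1]
    have h2 : (univ.filter fun z : ZMod (q ^ 2 - 1) => z ∈ BoseChowla q θ ∧ z ≠ 2 * v) =
        (univ.filter fun z : ZMod (q ^ 2 - 1) => z ∈ BoseChowla q θ).erase (2 * v) := by
      ext z
      simp only [mem_filter, mem_univ, true_and, Finset.mem_erase]
      tauto
    rw [h2, Finset.card_erase_eq_ite, hAfin]
    simp only [mem_filter, mem_univ, true_and]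
  -- sum of degrees
  have hsum : ∑ v : ZMod (q ^ 2 - 1), G.degree v =
      (q - 1) * (q - 1) + ((q ^ 2 - 1) - (q - 1)) * q := by
    calc ∑ v : ZMod (q ^ 2 - 1), G.degree v
        = ∑ v : ZMod (q ^ 2 - 1), if 2 * v ∈ BoseChowla q θ then q - 1 else q :=
          Finset.sum_congr rfl fun v _ => hdeg v
      _ = (q - 1) * (q - 1) + ((q ^ 2 - 1) - (q - 1)) * q := by
          rw [Finset.sum_ite, Finset.sum_const, Finset.sum_const, smul_eq_mul, smul_eq_mul]
          have hc := Finset.card_filter_add_card_filter_not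
            (s := (univ : Finset (ZMod (q ^ 2 - 1))))
            (p := fun v => 2 * v ∈ BoseChowla q θ)
          rw [Finset.card_univ, ZMod.card] at hc
          rw [hTfin]
          rw [hTfin] at hc
          congr 2
          omega
  -- put it together
  have hE : (G.edgeSet).ncard = G.edgeFinset.card := by
    rw [← Nat.card_coe_set_eq, Nat.card_eq_fintype_card, SimpleGraph.edgeFinset_card]
  rw [hE, ← SimpleGraph.sum_degrees_eq_twice_card_edges, hsum]
  have h3 : 2 * q ≤ q ^ 3 := by nlinarith
  have h4 : q - 1 ≤ q ^ 2 - 1 := by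
    have : q ≤ q ^ 2 := by nlinarith
    omega
  zify [show 1 ≤ q by omega, hn1, h3, h4]
  ring
end

section
/- For any odd prime power q, there exists a C₄-free graph on q² - 1 vertices with (q³ - 2q + 1)/2 edges; hence ex(q² - 1, C₄) ≥ (q³ - 2q + 1)/2. -/
open Finset

section Aux

variable {F : Type*} [Field F] [Fintype F] [DecidableEq F]

lemma card_pow_eq_mul_le (q : ℕ) (hq : 2 ≤ q) (c : F) :
    (univ.filter fun x : F => x ^ q = c * x).card ≤ q := by
  classical
  set f : Polynomial F := Polynomial.X ^ q - Polynomial.C c * Polynomial.X with hf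
  have hdeg : f.natDegree = q := by
    rw [hf]
    rw [Polynomial.natDegree_sub_eq_left_of_natDegree_lt, Polynomial.natDegree_X_pow]
    calc (Polynomial.C c * Polynomial.X).natDegree ≤ Polynomial.X.natDegree :=
          Polynomial.natDegree_C_mul_le _ _
      _ < (Polynomial.X ^ q : Polynomial F).natDegree := by
          rw [Polynomial.natDegree_X, Polynomial.natDegree_X_pow]; omega
  have hne : f ≠ 0 := by
    intro h
    rw [h, Polynomial.natDegree_zero] at hdeg
    omega
  have hsub : (univ.filter fun x : F => x ^ q = c * x) ⊆ f.roots.toFinset := by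
    intro x hx
    rw [mem_filter] at hx
    rw [Multiset.mem_toFinset, Polynomial.mem_roots hne]
    simp only [Polynomial.IsRoot, hf, Polynomial.eval_sub, Polynomial.eval_pow,
      Polynomial.eval_X, Polynomial.eval_mul, Polynomial.eval_C]
    rw [hx.2, sub_self]
  calc (univ.filter fun x : F => x ^ q = c * x).card ≤ f.roots.toFinset.card :=
        card_le_card hsub
    _ ≤ Multiset.card f.roots := Multiset.toFinset_card_le _
    _ ≤ f.natDegree := Polynomial.card_roots' f
    _ = q := hdeg

lemma bose_aux (q : ℕ) (θ : F) (hq3 : 3 ≤ q) (hodd : Odd q)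
    (haddq : ∀ x y : F, (x + y) ^ q = x ^ q + y ^ q)
    (hqq : ∀ x : F, (x ^ q) ^ q = x)
    (h2 : (2 : F) ≠ 0)
    (hθ : orderOf θ = q ^ 2 - 1)
    (hsurj : ∀ x : F, x ≠ 0 → ∃ i, i < q ^ 2 - 1 ∧ θ ^ i = x) :
    C4Free (CayleyGraph q θ) ∧ 2 * (CayleyGraph q θ).edgeSet.ncard = q ^ 3 - 2 * q + 1 := by
  classical
  have hq2 : 9 ≤ q ^ 2 := by nlinarith
  haveI : NeZero (q ^ 2 - 1) := ⟨by omega⟩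
  have hinj : ∀ i j, i < q ^ 2 - 1 → j < q ^ 2 - 1 → θ ^ i = θ ^ j → i = j := by
    intro i j hi hj h
    exact pow_injOn_Iio_orderOf (by rw [hθ]; exact hi) (by rw [hθ]; exact hj) h
  have hθn : θ ^ (q ^ 2 - 1) = 1 := by rw [← hθ]; exact pow_orderOf_eq_one θ
  have hθ0 : θ ≠ 0 := by
    intro h
    rw [h, zero_pow (by omega : q ^ 2 - 1 ≠ 0)] at hθn
    exact zero_ne_one hθn
  have hsubq : ∀ x y : F, (x - y) ^ q = x ^ q - y ^ q := by
    intro x y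
    rw [sub_eq_add_neg, haddq, hodd.neg_pow, ← sub_eq_add_neg]
  have h2q : (2 : F) ^ q = 2 := by
    have h := haddq 1 1
    norm_num at h
    exact h
  have hθq : θ ^ q ≠ θ := by
    intro h
    have h1 : θ ^ q = θ ^ 1 := by simpa using h
    have hlt : q < q ^ 2 - 1 := by
      have h3q : 3 * q ≤ q * q := Nat.mul_le_mul hq3 (le_refl q)
      have hsq : q ^ 2 = q * q := by ring
      omega
    have := hinj q 1 hlt (by omega) h1
    omega
  have hm1 : (-θ) ^ q ≠ -θ := by
    rw [hodd.neg_pow]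
    intro h
    exact hθq (neg_injective h)
  have hpow_val_add : ∀ x y : ZMod (q ^ 2 - 1), θ ^ (x + y).val = θ ^ x.val * θ ^ y.val := by
    intro x y
    rw [ZMod.val_add, ← pow_add]
    calc θ ^ ((x.val + y.val) % (q ^ 2 - 1)) = θ ^ ((x.val + y.val) % orderOf θ) := by rw [hθ]
      _ = θ ^ (x.val + y.val) := pow_mod_orderOf _ _
  -- Sidon property
  have hSidon : ∀ w x y z : ZMod (q ^ 2 - 1), w ∈ BoseChowla q θ → x ∈ BoseChowla q θ →
      y ∈ BoseChowla q θ → z ∈ BoseChowla q θ → w + x = y + z → w = y ∨ w = z := by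
    intro w x y z hw hx hy hz hsum
    have hw' : (θ ^ w.val - θ) ^ q = θ ^ w.val - θ := hw
    have hx' : (θ ^ x.val - θ) ^ q = θ ^ x.val - θ := hx
    have hy' : (θ ^ y.val - θ) ^ q = θ ^ y.val - θ := hy
    have hz' : (θ ^ z.val - θ) ^ q = θ ^ z.val - θ := hz
    set cw := θ ^ w.val - θ with hcw
    set cx := θ ^ x.val - θ with hcx
    set cy := θ ^ y.val - θ with hcy
    set cz := θ ^ z.val - θ with hcz
    have hprod : (θ + cw) * (θ + cx) = (θ + cy) * (θ + cz) := by
      have e1 : θ + cw = θ ^ w.val := by rw [hcw]; ring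
      have e2 : θ + cx = θ ^ x.val := by rw [hcx]; ring
      have e3 : θ + cy = θ ^ y.val := by rw [hcy]; ring
      have e4 : θ + cz = θ ^ z.val := by rw [hcz]; ring
      rw [e1, e2, e3, e4, ← hpow_val_add, ← hpow_val_add, hsum]
    have hs : (cw + cx - (cy + cz)) ^ q = cw + cx - (cy + cz) := by
      rw [hsubq, haddq, haddq, hw', hx', hy', hz']
    have ht : (cy * cz - cw * cx) ^ q = cy * cz - cw * cx := by
      rw [hsubq, mul_pow, mul_pow, hw', hx', hy', hz']
    have hlin : (cw + cx - (cy + cz)) * θ = cy * cz - cw * cx := by linear_combination hprod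
    have hs0 : cw + cx - (cy + cz) = 0 := by
      by_contra hne
      apply hθq
      have hθeq : θ = (cy * cz - cw * cx) / (cw + cx - (cy + cz)) := by
        rw [eq_div_iff hne]
        linear_combination hlin
      rw [hθeq, div_pow, hs, ht]
    have ht0 : cy * cz - cw * cx = 0 := by rw [← hlin, hs0, zero_mul]
    have hfac : (cw - cy) * (cw - cz) = 0 := by linear_combination cw * hs0 + ht0
    rcases mul_eq_zero.mp hfac with h | h
    · left
      have hpe : θ ^ w.val = θ ^ y.val := by
        have h' := sub_eq_zero.mp h
        rw [hcw, hcy] at h'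
        linear_combination h'
      exact ZMod.val_injective _ (hinj _ _ (ZMod.val_lt w) (ZMod.val_lt y) hpe)
    · right
      have hpe : θ ^ w.val = θ ^ z.val := by
        have h' := sub_eq_zero.mp h
        rw [hcw, hcz] at h'
        linear_combination h'
      exact ZMod.val_injective _ (hinj _ _ (ZMod.val_lt w) (ZMod.val_lt z) hpe)
  -- C4-freeness
  have hAdj : ∀ x y : ZMod (q ^ 2 - 1),
      (CayleyGraph q θ).Adj x y ↔ y ≠ x ∧ x + y ∈ BoseChowla q θ := by
    intro x y
    rw [CayleyGraph, SimpleGraph.fromRel_adj]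
    constructor
    · rintro ⟨hne, h | h⟩
      · exact ⟨Ne.symm hne, h⟩
      · exact ⟨Ne.symm hne, by rwa [add_comm]⟩
    · rintro ⟨hne, h⟩
      exact ⟨Ne.symm hne, Or.inl h⟩
  have hC4 : C4Free (CayleyGraph q θ) := by
    intro a b c d hab hbc hcd hda
    have hab' := ((hAdj a b).mp hab).2
    have hbc' := ((hAdj b c).mp hbc).2
    have hcd' := ((hAdj c d).mp hcd).2
    have hda' := ((hAdj d a).mp hda).2
    rcases hSidon (a + b) (c + d) (b + c) (d + a) hab' hcd' hbc' hda' (by ring) with h | h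
    · left
      rw [add_comm a b] at h
      exact add_left_cancel h
    · right
      rw [add_comm d a] at h
      exact add_left_cancel h
  -- cardinality of K
  have hKle : (univ.filter fun x : F => x ^ q = x).card ≤ q := by
    have h := card_pow_eq_mul_le (q := q) (by omega) (1 : F)
    simpa using h
  have hbound : ∀ j, j < q - 1 → (q + 1) * j < q ^ 2 - 1 := by
    intro j hj
    have hj' : (j : ℤ) ≤ (q : ℤ) - 2 := by
      have : j + 2 ≤ q := by omega
      omega
    have hq' : (3 : ℤ) ≤ (q : ℤ) := by exact_mod_cast hq3
    zify [show 1 ≤ q ^ 2 by omega]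
    nlinarith
  have hmemK : ∀ j : ℕ, (θ ^ ((q + 1) * j)) ^ q = θ ^ ((q + 1) * j) := by
    intro j
    have key : (q + 1) * j * q = (q + 1) * j + (q ^ 2 - 1) * j := by
      zify [show 1 ≤ q ^ 2 by omega]
      ring
    rw [← pow_mul, key, pow_add, pow_mul θ (q ^ 2 - 1) j, hθn, one_pow, mul_one]
  have hKcard : (univ.filter fun x : F => x ^ q = x).card = q := by
    refine le_antisymm hKle ?_
    have hinjim : ((range (q - 1)).image fun j => θ ^ ((q + 1) * j)).card = q - 1 := by
      rw [card_image_of_injOn, card_range]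
      intro j₁ hj₁ j₂ hj₂ h
      simp only [coe_range, Set.mem_Iio] at hj₁ hj₂
      have := hinj _ _ (hbound j₁ hj₁) (hbound j₂ hj₂) h
      exact Nat.eq_of_mul_eq_mul_left (by omega) this
    have hsub : insert (0 : F) ((range (q - 1)).image fun j => θ ^ ((q + 1) * j)) ⊆
        univ.filter fun x : F => x ^ q = x := by
      intro x hx
      rw [mem_insert] at hx
      rw [mem_filter]
      refine ⟨mem_univ _, ?_⟩
      rcases hx with rfl | hx
      · rw [zero_pow (by omega : q ≠ 0)]
      · obtain ⟨j, _, rfl⟩ := mem_image.mp hx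
        exact hmemK j
    have h0nm : (0 : F) ∉ (range (q - 1)).image fun j => θ ^ ((q + 1) * j) := by
      rw [mem_image]
      rintro ⟨j, _, h⟩
      exact pow_ne_zero _ hθ0 h
    have := card_le_card hsub
    rw [card_insert_of_notMem h0nm, hinjim] at this
    omega
  -- delta
  have hδq : (θ ^ q - θ) ^ q = -(θ ^ q - θ) := by
    rw [hsubq, hqq]; ring
  have hδ0 : θ ^ q - θ ≠ 0 := sub_ne_zero.mpr hθq
  -- cardinality of H
  have hHcard : (univ.filter fun x : F => x ^ q = -x).card = q := by
    refine Eq.trans ?_ hKcard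
    apply Finset.card_bij' (i := fun h _ => (θ ^ q - θ)⁻¹ * h) (j := fun c _ => (θ ^ q - θ) * c)
    · intro a ha
      rw [mem_filter] at ha ⊢
      refine ⟨mem_univ _, ?_⟩
      rw [mul_pow, inv_pow, hδq, ha.2, inv_neg]; ring
    · intro a ha
      rw [mem_filter] at ha ⊢
      refine ⟨mem_univ _, ?_⟩
      rw [mul_pow, hδq, ha.2, neg_mul]
    · intro a _
      rw [← mul_assoc, mul_inv_cancel₀ hδ0, one_mul]
    · intro a _
      rw [← mul_assoc, inv_mul_cancel₀ hδ0, one_mul]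
  have h0H : (0 : F) ∈ univ.filter fun x : F => x ^ q = -x := by
    rw [mem_filter]
    refine ⟨mem_univ _, ?_⟩
    rw [zero_pow (by omega : q ≠ 0), neg_zero]
  -- the key computation for the coset bijection
  have hyq : ∀ u : F, u ≠ 0 → u ^ q = -u →
      (((θ ^ q - θ) / u - u) / 2) ^ q = ((θ ^ q - θ) / u + u) / 2 := by
    intro u hu0 huq
    rw [div_pow, h2q, hsubq, div_pow, hδq, huq, neg_div_neg_eq, sub_neg_eq_add]
  have hLScard : (univ.filter fun y : F => (y ^ 2 - θ) ^ q = y ^ 2 - θ).card = q - 1 := by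
    have hbij : (univ.filter fun y : F => (y ^ 2 - θ) ^ q = y ^ 2 - θ).card =
        ((univ.filter fun x : F => x ^ q = -x).erase 0).card := by
      apply Finset.card_bij' (i := fun y _ => y ^ q - y)
        (j := fun u _ => ((θ ^ q - θ) / u - u) / 2)
      · intro y hy
        rw [mem_filter] at hy
        have hy' := hy.2
        rw [hsubq, pow_right_comm] at hy'
        have key : (y ^ q - y) * (y ^ q + y) = θ ^ q - θ := by linear_combination hy'
        rw [mem_erase, mem_filter]
        refine ⟨?_, mem_univ _, ?_⟩
        · exact left_ne_zero_of_mul (key ▸ hδ0)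
        · rw [hsubq, hqq]; ring
      · intro u hu
        rw [mem_erase, mem_filter] at hu
        obtain ⟨hu0, _, huq⟩ := hu
        rw [mem_filter]
        refine ⟨mem_univ _, ?_⟩
        rw [hsubq, pow_right_comm, hyq u hu0 huq]
        field_simp
        ring
      · intro y hy
        rw [mem_filter] at hy
        have hy' := hy.2
        rw [hsubq, pow_right_comm] at hy'
        have key : (y ^ q - y) * (y ^ q + y) = θ ^ q - θ := by linear_combination hy'
        have hu0 : y ^ q - y ≠ 0 := left_ne_zero_of_mul (key ▸ hδ0)
        have hd : (θ ^ q - θ) / (y ^ q - y) = y ^ q + y := by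
          rw [div_eq_iff hu0]
          linear_combination -key
        rw [hd, div_eq_iff h2]
        ring
      · intro u hu
        rw [mem_erase, mem_filter] at hu
        obtain ⟨hu0, _, huq⟩ := hu
        rw [hyq u hu0 huq]
        field_simp
        ring
    rw [hbij, card_erase_of_mem h0H, hHcard]
  -- L count
  have hLcard : (univ.filter fun x : ZMod (q ^ 2 - 1) => x + x ∈ BoseChowla q θ).card = q - 1 := by
    refine Eq.trans ?_ hLScard
    apply Finset.card_bij (i := fun x _ => θ ^ x.val)
    · intro x hx
      rw [mem_filter] at hx
      have hx' : (θ ^ (x + x).val - θ) ^ q = θ ^ (x + x).val - θ := hx.2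
      have e : θ ^ (x + x).val = (θ ^ x.val) ^ 2 := by
        rw [hpow_val_add]; ring
      rw [e] at hx'
      rw [mem_filter]
      exact ⟨mem_univ _, hx'⟩
    · intro x₁ h₁ x₂ h₂ h
      exact ZMod.val_injective _ (hinj _ _ (ZMod.val_lt x₁) (ZMod.val_lt x₂) h)
    · intro y hy
      rw [mem_filter] at hy
      have hy0 : y ≠ 0 := by
        rintro rfl
        have h0 := hy.2
        norm_num at h0
        exact hm1 h0
      obtain ⟨i, hi, hie⟩ := hsurj y hy0
      have hval : ((i : ZMod (q ^ 2 - 1))).val = i := by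
        rw [ZMod.val_natCast, Nat.mod_eq_of_lt hi]
      refine ⟨(i : ZMod (q ^ 2 - 1)), ?_, by rw [hval, hie]⟩
      rw [mem_filter]
      refine ⟨mem_univ _, ?_⟩
      show (θ ^ ((i : ZMod (q ^ 2 - 1)) + i).val - θ) ^ q = _
      have e : θ ^ ((i : ZMod (q ^ 2 - 1)) + (i : ZMod (q ^ 2 - 1))).val = (θ ^ ((i : ZMod (q ^ 2 - 1))).val) ^ 2 := by
        rw [hpow_val_add]; ring
      rw [e, hval, hie]
      exact hy.2
  -- A count
  have hAcard : (univ.filter fun a : ZMod (q ^ 2 - 1) => a ∈ BoseChowla q θ).card = q := by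
    refine Eq.trans ?_ hKcard
    apply Finset.card_bij (i := fun a _ => θ ^ a.val - θ)
    · intro a ha
      rw [mem_filter] at ha
      rw [mem_filter]
      exact ⟨mem_univ _, ha.2⟩
    · intro a₁ h₁ a₂ h₂ h
      have : θ ^ a₁.val = θ ^ a₂.val := by linear_combination h
      exact ZMod.val_injective _ (hinj _ _ (ZMod.val_lt a₁) (ZMod.val_lt a₂) this)
    · intro c hc
      rw [mem_filter] at hc
      have hc' := hc.2
      have hne : θ + c ≠ 0 := by
        intro h
        have hc2 : c = -θ := by linear_combination h
        rw [hc2] at hc'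
        exact hm1 hc'
      obtain ⟨i, hi, hie⟩ := hsurj (θ + c) hne
      have hval : ((i : ZMod (q ^ 2 - 1))).val = i := by
        rw [ZMod.val_natCast, Nat.mod_eq_of_lt hi]
      have hec : θ ^ ((i : ZMod (q ^ 2 - 1))).val - θ = c := by
        rw [hval, hie]; ring
      refine ⟨(i : ZMod (q ^ 2 - 1)), ?_, hec⟩
      rw [mem_filter]
      refine ⟨mem_univ _, ?_⟩
      show (θ ^ ((i : ZMod (q ^ 2 - 1))).val - θ) ^ q = _
      rw [hec]
      exact hc'
  -- degrees
  haveI : DecidableRel (CayleyGraph q θ).Adj := Classical.decRel _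
  have hdeg : ∀ x : ZMod (q ^ 2 - 1),
      (CayleyGraph q θ).degree x + (if x + x ∈ BoseChowla q θ then 1 else 0) = q := by
    intro x
    have hT : (univ.filter fun y : ZMod (q ^ 2 - 1) => x + y ∈ BoseChowla q θ).card = q := by
      refine Eq.trans ?_ hAcard
      apply Finset.card_bij (i := fun y _ => x + y)
      · intro y hy
        rw [mem_filter] at hy
        rw [mem_filter]
        exact ⟨mem_univ _, hy.2⟩
      · intro y₁ h₁ y₂ h₂ h
        exact add_left_cancel h
      · intro a ha
        rw [mem_filter] at ha
        refine ⟨a - x, ?_, by ring⟩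
        rw [mem_filter]
        refine ⟨mem_univ _, ?_⟩
        rw [show x + (a - x) = a by ring]
        exact ha.2
    have hset : (CayleyGraph q θ).neighborFinset x =
        (univ.filter fun y : ZMod (q ^ 2 - 1) => x + y ∈ BoseChowla q θ).erase x := by
      ext y
      rw [SimpleGraph.mem_neighborFinset, hAdj, mem_erase, mem_filter]
      simp [and_comm]
    rw [SimpleGraph.degree, hset]
    by_cases hx : x + x ∈ BoseChowla q θ
    · rw [if_pos hx, card_erase_of_mem (by rw [mem_filter]; exact ⟨mem_univ _, hx⟩), hT]
      omega
    · rw [if_neg hx, Finset.erase_eq_of_notMem (by rw [mem_filter]; tauto), hT]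
      omega
  have hsum := (CayleyGraph q θ).sum_degrees_eq_twice_card_edges
  have htot : ∑ x : ZMod (q ^ 2 - 1),
      ((CayleyGraph q θ).degree x + (if x + x ∈ BoseChowla q θ then 1 else 0)) = (q ^ 2 - 1) * q := by
    rw [Finset.sum_congr rfl (fun x _ => hdeg x), Finset.sum_const, card_univ, ZMod.card,
      smul_eq_mul]
  have hL' : ∑ x : ZMod (q ^ 2 - 1), (if x + x ∈ BoseChowla q θ then 1 else 0) = q - 1 := by
    rw [Finset.sum_boole]
    simpa using hLcard
  have hE : 2 * (CayleyGraph q θ).edgeFinset.card + (q - 1) = (q ^ 2 - 1) * q := by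
    rw [← hsum, ← hL', ← Finset.sum_add_distrib]
    exact htot
  refine ⟨hC4, ?_⟩
  have hncard : (CayleyGraph q θ).edgeSet.ncard = (CayleyGraph q θ).edgeFinset.card :=
    Set.ncard_eq_toFinset_card' _
  rw [hncard]
  have h1 : 1 ≤ q := by omega
  have h3 : 2 * q ≤ q ^ 3 := by nlinarith
  zify [h1, show 1 ≤ q ^ 2 by omega] at hE
  zify [h3]
  linear_combination hE

end Aux

theorem turan_c4_lower_odd (q : ℕ) (hq : IsPrimePow q) (hodd : Odd q) :
    ∃ (V : Type) (_ : Fintype V) (G : SimpleGraph V),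
      Fintype.card V = q ^ 2 - 1 ∧ C4Free G ∧
        2 * G.edgeSet.ncard = q ^ 3 - 2 * q + 1 := by
  obtain ⟨p, k, hp, hk, rfl⟩ := hq
  haveI : Fact p.Prime := ⟨Nat.prime_iff.mpr hp⟩
  let F := GaloisField p (2 * k)
  haveI : Fintype F := Fintype.ofFinite F
  haveI : DecidableEq F := Classical.decEq F
  have hcard : Fintype.card F = (p ^ k) ^ 2 := by
    have h := GaloisField.card p (2 * k) (by omega)
    rw [Nat.card_eq_fintype_card] at h
    rw [h, ← pow_mul, mul_comm]
  have hp2 : 2 ≤ p := (Nat.prime_iff.mpr hp).two_le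
  have hpne2 : p ≠ 2 := by
    rintro rfl
    have h2d : 2 ∣ 2 ^ k := dvd_pow_self 2 (by omega)
    rw [Nat.odd_iff] at hodd
    omega
  have hq3 : 3 ≤ p ^ k := by
    have h1 : p ≤ p ^ k := Nat.le_self_pow (by omega) p
    have h3 : 3 ≤ p := by omega
    omega
  have h2 : (2 : F) ≠ 0 := by
    intro h
    have hd := (CharP.cast_eq_zero_iff F p 2).mp h
    have := Nat.le_of_dvd (by omega) hd
    omega
  have haddq : ∀ x y : F, (x + y) ^ (p ^ k) = x ^ (p ^ k) + y ^ (p ^ k) := fun x y =>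
    add_pow_char_pow x y p k
  have hqq : ∀ x : F, (x ^ (p ^ k)) ^ (p ^ k) = x := by
    intro x
    rw [← pow_mul]
    have e : p ^ k * p ^ k = Fintype.card F := by rw [hcard]; ring
    rw [e]
    exact FiniteField.pow_card x
  obtain ⟨g, hg⟩ := IsCyclic.exists_generator (α := Fˣ)
  have horder : orderOf ((g : F)) = (p ^ k) ^ 2 - 1 := by
    rw [orderOf_units, orderOf_eq_card_of_forall_mem_zpowers hg, Nat.card_eq_fintype_card,
      Fintype.card_units, hcard]
  have hn0 : 0 < (p ^ k) ^ 2 - 1 := by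
    have h9 : 9 ≤ (p ^ k) ^ 2 := by nlinarith
    omega
  have hsurj : ∀ x : F, x ≠ 0 → ∃ i, i < (p ^ k) ^ 2 - 1 ∧ (g : F) ^ i = x := by
    intro x hx
    obtain ⟨i, hi⟩ := mem_powers_iff_mem_zpowers.mpr (hg (Units.mk0 x hx))
    refine ⟨i % ((p ^ k) ^ 2 - 1), Nat.mod_lt _ hn0, ?_⟩
    calc (g : F) ^ (i % ((p ^ k) ^ 2 - 1)) = (g : F) ^ (i % orderOf (g : F)) := by rw [horder]
      _ = (g : F) ^ i := pow_mod_orderOf _ _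
      _ = x := by
          have hi' : g ^ i = Units.mk0 x hx := hi
          rw [← Units.val_pow_eq_pow_val, hi']
          rfl
  haveI : NeZero ((p ^ k) ^ 2 - 1) := ⟨by omega⟩
  obtain ⟨hc4, hcount⟩ := bose_aux (p ^ k) (g : F) hq3 hodd haddq hqq h2 horder hsurj
  exact ⟨ZMod ((p ^ k) ^ 2 - 1), inferInstance, CayleyGraph (p ^ k) (g : F),
    by rw [ZMod.card], hc4, hcount⟩
end

section
/- If q is a power of 2, then there exists x ∈ ℤ/(q²-1) such that x + y ∈ A(q,θ) for every y ∈ ℤ/(q²-1) satisfying y + y ∈ A(q,θ); that is, some vertex of G_{q,θ} is adjacent to every absolute point. -/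
theorem common_neighbor_of_absolute_points (q α : ℕ) (hα : 0 < α) (hq : q = 2 ^ α)
    (F : Type*) [Field F] [Fintype F] (hF : Fintype.card F = q ^ 2)
    (θ : F) (hθ : orderOf θ = q ^ 2 - 1) :
    ∃ x : ZMod (q ^ 2 - 1), ∀ y : ZMod (q ^ 2 - 1),
      y + y ∈ BoseChowla q θ → x + y ∈ BoseChowla q θ := by
  have hq2 : 2 ≤ q := by
    rw [hq]; calc 2 = 2^1 := rfl
    _ ≤ 2^α := Nat.pow_le_pow_right (by norm_num) hα
  have hq4 : 4 ≤ q ^ 2 := by nlinarith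
  haveI : NeZero (q ^ 2 - 1) := ⟨by omega⟩
  have hθn : θ ^ (q ^ 2 - 1) = 1 := by rw [← hθ]; exact pow_orderOf_eq_one θ
  have hθ0 : θ ≠ 0 := by
    intro h; rw [h, zero_pow (by omega)] at hθn; exact zero_ne_one hθn
  -- characteristic 2
  haveI hchar : CharP F 2 := by
    have h2 : (ringChar F).Prime := CharP.char_is_prime F _
    obtain ⟨n, hp, hcard⟩ := FiniteField.card F (ringChar F)
    have : ringChar F ∣ 2 ^ (α * 2) := by
      rw [show (2:ℕ) ^ (α * 2) = q ^ 2 by rw [hq, pow_mul], ← hF, hcard]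
      exact dvd_pow_self _ n.pos.ne'
    have : ringChar F = 2 :=
      (Nat.prime_dvd_prime_iff_eq h2 Nat.prime_two).mp (h2.dvd_of_dvd_pow this)
    rw [← this]; exact ringChar.charP F
  haveI : Fact (Nat.Prime 2) := ⟨Nat.prime_two⟩
  have hfrob : ∀ a b : F, (a + b) ^ q = a ^ q + b ^ q := by
    intro a b; rw [hq]; exact add_pow_char_pow (R := F) (p := 2) (n := α) (x := a) (y := b)
  have hsqinj : ∀ a b : F, a ^ 2 = b ^ 2 → a = b := by
    intro a b h
    exact frobenius_inj F 2 (by rwa [frobenius_def, frobenius_def])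
  have hpowcard : ∀ a : F, a ^ q ^ 2 = a := by intro a; rw [← hF]; exact FiniteField.pow_card a
  have hθq2 : θ ^ (q ^ 2) = θ := hpowcard θ
  -- the square root s of θ^q + θ
  set s : F := (θ ^ q + θ) ^ 2 ^ (2 * α - 1) with hs_def
  have hs2 : s ^ 2 = θ ^ q + θ := by
    rw [hs_def, ← pow_mul, ← pow_succ, Nat.sub_add_cancel (by omega),
      show 2 * α = α * 2 by ring, pow_mul, ← hq, hpowcard]
  have hsq : s ^ q = s := by
    apply hsqinj
    rw [← pow_mul, mul_comm, pow_mul, hs2, hfrob, ← pow_mul,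
      show q * q = q ^ 2 from (sq q).symm, hθq2]
    exact add_comm _ _
  have hθqθ : θ ^ q + θ ≠ 0 := by
    intro h
    have hqq : θ ^ q = θ := by rw [eq_neg_of_add_eq_zero_left h, CharTwo.neg_eq]
    have h1 : θ ^ (q - 1) * θ = θ := by
      rw [← pow_succ, Nat.sub_add_cancel (by omega), hqq]
    have h2 : θ ^ (q - 1) = 1 := by
      have := mul_right_cancel₀ hθ0 (h1.trans (one_mul θ).symm)
      exact this
    have h5 := Nat.le_of_dvd (by omega) (hθ ▸ orderOf_dvd_of_pow_eq_one h2)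
    have h6 : q < q ^ 2 := by nlinarith
    omega
  have hsne : s ≠ 0 := by
    intro h; apply hθqθ; rw [← hs2, h]; ring
  -- s is a power of θ
  obtain ⟨m, hm⟩ : ∃ m : ℕ, θ ^ m = s := by
    set su : Fˣ := Units.mk0 s hsne with hsu
    set θu : Fˣ := Units.mk0 θ hθ0 with hθu
    have hou : orderOf θu = Nat.card Fˣ := by
      rw [← orderOf_units, Nat.card_units, Nat.card_eq_fintype_card, hF]; exact hθ
    have hmem : su ∈ Subgroup.zpowers θu := by
      have : Subgroup.zpowers θu = ⊤ := by
        apply Subgroup.eq_top_of_card_eq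
        rw [Nat.card_zpowers, hou]
      rw [this]; trivial
    obtain ⟨k, hk⟩ := ((isOfFinOrder_of_finite θu).mem_powers_iff_mem_zpowers).mpr hmem
    exact ⟨k, by simpa [hθu, hsu, Units.ext_iff] using hk⟩
  -- exponent/val bookkeeping
  have hkey : ∀ N : ℕ, θ ^ (N % (q ^ 2 - 1)) = θ ^ N := by
    intro N; rw [← hθ]; exact pow_mod_orderOf θ N
  have hvadd : ∀ u v : ZMod (q ^ 2 - 1), θ ^ (u + v).val = θ ^ u.val * θ ^ v.val := by
    intro u v; rw [ZMod.val_add, hkey, pow_add]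
  have hvm : θ ^ ((m : ZMod (q ^ 2 - 1)).val) = s := by
    rw [ZMod.val_natCast, hkey, hm]
  refine ⟨(m : ZMod (q ^ 2 - 1)), fun y hy => ?_⟩
  simp only [BoseChowla, Set.mem_setOf_eq, CharTwo.sub_eq_add] at hy ⊢
  rw [hvadd] at hy ⊢
  simp only [hvm]
  set t : F := θ ^ y.val with ht
  -- from hy derive t^q = s + t
  have htq : t ^ q = s + t := by
    apply hsqinj
    have h1 : (t * t) ^ q + θ ^ q = t * t + θ := by rw [← hfrob]; exact hy
    have h2 : ((θ : F) ^ q + θ ^ q) = 0 := CharTwo.add_self_eq_zero _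
    have h4 : (t ^ q) ^ 2 = (t * t) ^ q := by rw [← pow_mul, mul_pow, ← pow_add]; ring_nf
    have h5 : s * t + s * t = 0 := CharTwo.add_self_eq_zero _
    rw [h4]
    linear_combination h1 - hs2 - h2 - h5
  -- conclude
  rw [hfrob, mul_pow, hsq, htq]
  have h2 : ((θ : F) ^ q + θ ^ q) = 0 := CharTwo.add_self_eq_zero _
  linear_combination hs2 + h2
end

section
/- If q is a power of 2, then G_{q,θ} has exactly q absolute points and (q³ - 2q)/2 edges. -/
open Finset Polynomial

theorem cayley_graph_even_q (q α : ℕ) (hα : 0 < α) (hq : q = 2 ^ α)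
    (F : Type*) [Field F] [Fintype F] (hF : Fintype.card F = q ^ 2)
    (θ : F) (hθ : orderOf θ = q ^ 2 - 1) :
    {x : ZMod (q ^ 2 - 1) | x + x ∈ BoseChowla q θ}.ncard = q ∧
      2 * (CayleyGraph q θ).edgeSet.ncard = q ^ 3 - 2 * q := by
  classical
  have hq2 : 2 ≤ q := by
    rw [hq]; exact Nat.one_lt_two_pow_iff.mpr hα.ne'
  have hq4 : 4 ≤ q ^ 2 := by
    calc (4 : ℕ) = 2 ^ 2 := by norm_num
    _ ≤ q ^ 2 := Nat.pow_le_pow_left hq2 2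
  haveI : NeZero (q ^ 2 - 1) := ⟨by omega⟩
  have hqq : q ^ 2 = q * q := sq q
  have hqdvd : 2 ∣ q := by rw [hq]; exact dvd_pow_self 2 hα.ne'
  have hqeven : Even q := (even_iff_two_dvd).mpr hqdvd
  -- θ is nonzero
  have hθ0 : θ ≠ 0 := by
    intro h
    have h1 : θ ^ (q ^ 2 - 1) = 1 := by rw [← hθ]; exact pow_orderOf_eq_one θ
    rw [h, zero_pow (by omega : q ^ 2 - 1 ≠ 0)] at h1
    exact zero_ne_one h1
  obtain ⟨u, hu⟩ := isUnit_iff_ne_zero.mpr hθ0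
  have huo : orderOf u = q ^ 2 - 1 := by rw [← orderOf_units, hu, hθ]
  -- θ generates all nonzero elements
  have hgen : ∀ x : F, x ≠ 0 → ∃ a : ZMod (q ^ 2 - 1), θ ^ a.val = x := by
    intro x hx
    have htop : Subgroup.zpowers u = ⊤ := by
      apply Subgroup.eq_top_of_card_eq
      rw [Nat.card_zpowers, huo, Nat.card_units, Nat.card_eq_fintype_card, hF]
    obtain ⟨v, hv⟩ := isUnit_iff_ne_zero.mpr hx
    have hmem : v ∈ Subgroup.zpowers u := htop ▸ Subgroup.mem_top v
    obtain ⟨k, hk⟩ := (Submonoid.mem_powers_iff v u).mp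
      ((isOfFinOrder_of_finite u).mem_powers_iff_mem_zpowers.mpr hmem)
    refine ⟨(k : ZMod (q ^ 2 - 1)), ?_⟩
    rw [ZMod.val_natCast]
    have h1 : θ ^ (k % (q ^ 2 - 1)) = θ ^ k := by
      conv_lhs => rw [← hθ]
      exact pow_mod_orderOf θ k
    rw [h1, ← hu, ← Units.val_pow_eq_pow_val, hk, hv]
  -- the exponential map is injective
  have hinj : ∀ a b : ZMod (q ^ 2 - 1), θ ^ a.val = θ ^ b.val → a = b := by
    intro a b h
    have hval : a.val = b.val := by
      have h' : u ^ a.val = u ^ b.val := by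
        apply Units.ext
        rwa [Units.val_pow_eq_pow_val, Units.val_pow_eq_pow_val, hu]
      exact pow_injOn_Iio_orderOf (by rw [huo]; exact ZMod.val_lt a)
        (by rw [huo]; exact ZMod.val_lt b) h'
    exact ZMod.val_injective _ hval
  -- the Bose-Chowla finset
  set AF : Finset (ZMod (q ^ 2 - 1)) :=
    univ.filter (fun a => a ∈ BoseChowla q θ) with hAF
  -- fixed points of the q-power map in F
  set SF : Finset F := univ.filter (fun s => s ^ q = s) with hSF
  set TF : Finset F := univ.filter (fun t => (t - θ) ^ q = t - θ) with hTF
  -- cardinality of SF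
  have hζprim : IsPrimitiveRoot (θ ^ (q + 1)) (q - 1) := by
    have horder : orderOf (θ ^ (q + 1)) = q - 1 := by
      have hcoe : orderOf (θ ^ (q + 1)) = orderOf (u ^ (q + 1)) := by
        rw [← hu, ← Units.val_pow_eq_pow_val, orderOf_units]
      rw [hcoe, orderOf_pow, huo]
      have hdvd : (q ^ 2 - 1) = (q - 1) * (q + 1) := by
        rcases Nat.exists_eq_add_of_le hq2 with ⟨m, rfl⟩
        have h1 : (2 + m) ^ 2 = m ^ 2 + 4 * m + 4 := by ring
        have h2 : (2 + m - 1) * (2 + m + 1) = (m + 1) * (m + 3) := by congr 1 <;> omega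
        have h3 : (m + 1) * (m + 3) = m ^ 2 + 4 * m + 3 := by ring
        omega
      rw [hdvd, Nat.gcd_eq_right (dvd_mul_left _ _),
        Nat.mul_div_cancel _ (by omega : 0 < q + 1)]
    exact horder ▸ IsPrimitiveRoot.orderOf (θ ^ (q + 1))
  have hSFcard : SF.card = q := by
    have h0 : (0 : F) ∉ (univ.filter (fun s : F => s ^ (q - 1) = 1)) := by
      simp only [mem_filter, mem_univ, true_and]
      rw [zero_pow (by omega : q - 1 ≠ 0)]
      exact zero_ne_one
    have hS1 : (univ.filter (fun s : F => s ^ (q - 1) = 1)).card = q - 1 := by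
      have hset : (univ.filter (fun s : F => s ^ (q - 1) = 1))
          = (nthRoots (q - 1) (1 : F)).toFinset := by
        ext s
        simp only [mem_filter, mem_univ, true_and, Multiset.mem_toFinset,
          mem_nthRoots (by omega : 0 < q - 1)]
      rw [hset, Multiset.toFinset_card_of_nodup (hζprim.nthRoots_nodup one_ne_zero),
        hζprim.card_nthRoots_one]
    have hdecomp : SF = insert (0 : F) (univ.filter (fun s : F => s ^ (q - 1) = 1)) := by
      ext s
      simp only [hSF, mem_filter, mem_univ, true_and, mem_insert]
      constructor
      · intro h
        by_cases hs : s = 0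
        · exact Or.inl hs
        · right
          have hqs : s ^ q = s ^ (q - 1) * s := by
            conv_lhs => rw [show q = (q - 1) + 1 by omega]
            rw [pow_succ]
          rw [hqs] at h
          have h' : s ^ (q - 1) * s = 1 * s := by rw [h, one_mul]
          exact mul_right_cancel₀ hs h'
      · rintro (rfl | h)
        · rw [zero_pow (by omega : q ≠ 0)]
        · conv_lhs => rw [show q = (q - 1) + 1 by omega]
          rw [pow_succ, h, one_mul]
    rw [hdecomp, Finset.card_insert_of_notMem h0, hS1]
    omega
  -- TF has the same cardinality, via translation
  have hTFcard : TF.card = q := by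
    rw [← hSFcard]
    apply Finset.card_bij' (fun t _ => t - θ) (fun s _ => s + θ)
    · intro t ht
      simp only [hTF, mem_filter, mem_univ, true_and] at ht
      simp only [hSF, mem_filter, mem_univ, true_and]
      exact ht
    · intro s hs
      simp only [hSF, mem_filter, mem_univ, true_and] at hs
      simp only [hTF, mem_filter, mem_univ, true_and, add_sub_cancel_right]
      exact hs
    · intro t _; ring
    · intro s _; ring
  -- 0 is not in TF
  have h0TF : (0 : F) ∉ TF := by
    simp only [hTF, mem_filter, mem_univ, true_and]
    intro h
    rw [zero_sub, hqeven.neg_pow] at h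
    have h2 : θ ^ q = -θ := h
    have h3 : θ ^ (2 * q) = θ ^ 2 := by
      rw [two_mul, pow_add, h2]; ring
    have h4 : θ ^ (2 * q - 2) = 1 := by
      have h5 : θ ^ (2 * q - 2) * θ ^ 2 = 1 * θ ^ 2 := by
        rw [← pow_add, show 2 * q - 2 + 2 = 2 * q by omega, h3, one_mul]
      exact mul_right_cancel₀ (pow_ne_zero 2 hθ0) h5
    have h6 : orderOf θ ∣ 2 * q - 2 := orderOf_dvd_of_pow_eq_one h4
    rw [hθ] at h6
    have h7 := Nat.le_of_dvd (by omega) h6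
    have h8 : 2 * q ≤ q * q := Nat.mul_le_mul_right q hq2
    omega
  -- AF has cardinality q
  have hAFcard : AF.card = q := by
    refine Eq.trans ?_ hTFcard
    apply Finset.card_bij (fun a _ => θ ^ a.val)
    · intro a ha
      simp only [hAF, mem_filter, mem_univ, true_and] at ha
      simp only [hTF, mem_filter, mem_univ, true_and]
      exact ha
    · intro a ha b hb h
      exact hinj a b h
    · intro t ht
      have ht0 : t ≠ 0 := fun h => h0TF (h ▸ ht)
      obtain ⟨a, ha⟩ := hgen t ht0
      refine ⟨a, ?_, ha⟩
      simp only [hAF, mem_filter, mem_univ, true_and]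
      show (θ ^ a.val - θ) ^ q = θ ^ a.val - θ
      rw [ha]
      simpa only [hTF, mem_filter, mem_univ, true_and] using ht
  -- doubling is a bijection
  have hodd : ¬ 2 ∣ (q ^ 2 - 1) := by
    have h2sq : 2 ∣ q ^ 2 := dvd_pow hqdvd two_ne_zero
    obtain ⟨e, he⟩ := h2sq
    rintro ⟨d, hd⟩
    omega
  have h2unit : IsUnit (2 : ZMod (q ^ 2 - 1)) := by
    have : ((2 : ℕ) : ZMod (q ^ 2 - 1)) = 2 := by norm_num
    rw [← this]
    rw [ZMod.isUnit_iff_coprime, Nat.coprime_two_left, Nat.odd_iff]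
    omega
  obtain ⟨w, hw⟩ := h2unit
  -- absolute points
  set Abs : Finset (ZMod (q ^ 2 - 1)) :=
    univ.filter (fun x => x + x ∈ BoseChowla q θ) with hAbs
  have hAbscard : Abs.card = q := by
    refine Eq.trans ?_ hAFcard
    apply Finset.card_bij (fun x _ => x + x)
    · intro x hx
      simp only [hAbs, mem_filter, mem_univ, true_and] at hx
      simp only [hAF, mem_filter, mem_univ, true_and]
      exact hx
    · intro x _ y _ h
      have h2 : (w : ZMod (q ^ 2 - 1)) * x = (w : ZMod (q ^ 2 - 1)) * y := by
        rw [hw, two_mul, two_mul]; exact h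
      exact (Units.mul_right_inj w).mp h2
    · intro a ha
      refine ⟨(w⁻¹ : (ZMod (q ^ 2 - 1))ˣ) * a, ?_, ?_⟩
      · simp only [hAbs, mem_filter, mem_univ, true_and]
        have : ((w⁻¹ : (ZMod (q ^ 2 - 1))ˣ) : ZMod (q ^ 2 - 1)) * a
            + (w⁻¹ : (ZMod (q ^ 2 - 1))ˣ) * a = a := by
          rw [← two_mul, ← hw, ← mul_assoc, ← Units.val_mul, mul_inv_cancel, Units.val_one,
            one_mul]
        rw [this]
        simpa only [hAF, mem_filter, mem_univ, true_and] using ha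
      · rw [← two_mul, ← hw, ← mul_assoc, ← Units.val_mul, mul_inv_cancel, Units.val_one,
          one_mul]
  constructor
  · have hset : {x : ZMod (q ^ 2 - 1) | x + x ∈ BoseChowla q θ} = ↑Abs := by
      ext x; simp [hAbs]
    rw [hset, Set.ncard_coe_finset, hAbscard]
  -- edge count
  · set G := CayleyGraph q θ with hG
    letI : DecidableRel G.Adj := fun a b => Classical.dec _
    have hAdj : ∀ x y, G.Adj x y ↔ x ≠ y ∧ x + y ∈ BoseChowla q θ := by
      intro x y
      rw [hG, CayleyGraph, SimpleGraph.fromRel_adj]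
      rw [add_comm y x, or_self]
    have hdeg : ∀ x, G.degree x = if x + x ∈ BoseChowla q θ then q - 1 else q := by
      intro x
      have hnb : G.neighborFinset x
          = (univ.filter (fun y => x + y ∈ BoseChowla q θ)).erase x := by
        ext y
        rw [SimpleGraph.mem_neighborFinset, hAdj, mem_erase, mem_filter]
        constructor
        · rintro ⟨h1, h2⟩; exact ⟨fun h => h1 h.symm, mem_univ y, h2⟩
        · rintro ⟨h1, _, h2⟩; exact ⟨fun h => h1 h.symm, h2⟩
      have hB : (univ.filter (fun y => x + y ∈ BoseChowla q θ)).card = q := by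
        refine Eq.trans ?_ hAFcard
        apply Finset.card_bij' (fun y _ => x + y) (fun a _ => a - x)
        · intro y hy
          simp only [mem_filter, mem_univ, true_and] at hy
          simp only [hAF, mem_filter, mem_univ, true_and]
          exact hy
        · intro a ha
          simp only [hAF, mem_filter, mem_univ, true_and] at ha
          simp only [mem_filter, mem_univ, true_and, add_sub_cancel]
          exact ha
        · intro y _; ring
        · intro a _; ring
      rw [SimpleGraph.degree, hnb, Finset.card_erase_eq_ite]
      by_cases hx : x + x ∈ BoseChowla q θ
      · rw [if_pos, if_pos hx, hB]
        simp only [mem_filter, mem_univ, true_and]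
        exact hx
      · rw [if_neg, if_neg hx, hB]
        simp only [mem_filter, mem_univ, true_and]
        exact hx
    have hsum : ∑ x, G.degree x + Abs.card = (q ^ 2 - 1) * q := by
      rw [hAbs, Finset.card_filter, ← Finset.sum_add_distrib]
      have hpt : ∀ x ∈ (univ : Finset (ZMod (q ^ 2 - 1))),
          G.degree x + (if x + x ∈ BoseChowla q θ then 1 else 0) = q := by
        intro x _
        rw [hdeg x]
        split_ifs <;> omega
      rw [Finset.sum_congr rfl hpt, Finset.sum_const, Finset.card_univ, ZMod.card,
        smul_eq_mul]
    have hhand : ∑ x, G.degree x = 2 * G.edgeFinset.card :=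
      SimpleGraph.sum_degrees_eq_twice_card_edges G
    rw [← SimpleGraph.coe_edgeFinset, Set.ncard_coe_finset]
    have hmul : (q ^ 2 - 1) * q = q ^ 3 - q := by
      have h1 : q ^ 2 * q = q ^ 3 := by ring
      rw [Nat.sub_mul, one_mul, h1]
    rw [hhand, hAbscard] at hsum
    have hq3 : q ≤ q ^ 3 := Nat.le_self_pow (by omega) q
    omega
end

section
/- For every x ∈ ℤ/(q²-1) with x ∉ A(q,θ), there are at least q - 1 ordered triples (a,b,c) ∈ A³ with a - b + c = x, a ≠ b, and b ≠ c. -/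
theorem many_triples (q : ℕ) (hq : IsPrimePow q) (F : Type*) [Field F]
    [Fintype F] (hF : Fintype.card F = q ^ 2) (θ : F) (hθ : orderOf θ = q ^ 2 - 1) :
    ∀ x : ZMod (q ^ 2 - 1), x ∉ BoseChowla q θ →
      q - 1 ≤ {T : ZMod (q ^ 2 - 1) × ZMod (q ^ 2 - 1) × ZMod (q ^ 2 - 1) |
        T.1 ∈ BoseChowla q θ ∧ T.2.1 ∈ BoseChowla q θ ∧ T.2.2 ∈ BoseChowla q θ ∧
        T.1 - T.2.1 + T.2.2 = x ∧ T.1 ≠ T.2.1 ∧ T.2.1 ≠ T.2.2}.ncard := by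
  classical
  intro x hx
  obtain ⟨p, k, hpp, hk, hpk⟩ := hq
  have hp : Nat.Prime p := Nat.prime_iff.mpr hpp
  haveI : Fact p.Prime := ⟨hp⟩
  have hq2 : 2 ≤ q := by
    rw [← hpk]
    calc 2 ≤ p := hp.two_le
    _ = p ^ 1 := (pow_one p).symm
    _ ≤ p ^ k := Nat.pow_le_pow_right hp.pos hk
  have hq4 : 4 ≤ q ^ 2 := by nlinarith
  haveI : NeZero (q ^ 2 - 1) := ⟨by omega⟩
  -- characteristic
  haveI hrc : CharP F (ringChar F) := ringChar.charP F
  obtain ⟨m, hrp, hcard⟩ := FiniteField.card F (ringChar F)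
  have hrF : ringChar F = p := by
    have h1 : ringChar F ∣ p ^ (k * 2) := by
      have : ringChar F ∣ ringChar F ^ (m : ℕ) :=
        dvd_pow_self _ (by exact_mod_cast m.pos.ne')
      rw [← hcard, hF, ← hpk, ← pow_mul] at this
      exact this
    exact (Nat.prime_dvd_prime_iff_eq hrp hp).mp (hrp.dvd_of_dvd_pow h1)
  haveI : CharP F p := hrF ▸ hrc
  -- the q-power Frobenius
  set φ : F →+* F := iterateFrobenius F p k with hφdef
  have hφ : ∀ y : F, φ y = y ^ q := by
    intro y; rw [hφdef, iterateFrobenius_def, hpk]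
  -- basic facts about θ
  have hn1 : θ ^ (q ^ 2 - 1) = 1 := hθ ▸ pow_orderOf_eq_one θ
  have hθ0 : θ ≠ 0 := by
    rintro rfl
    rw [zero_pow (by omega)] at hn1
    exact zero_ne_one hn1
  have hθK : φ θ ≠ θ := by
    intro h
    rw [hφ] at h
    have hlt : q < orderOf θ := by
      rw [hθ]
      have h5 : q + 2 ≤ q ^ 2 := by nlinarith
      omega
    have h1lt : 1 < orderOf θ := by rw [hθ]; omega
    have := pow_injOn_Iio_orderOf (x := θ) (Set.mem_Iio.mpr hlt) (Set.mem_Iio.mpr h1lt)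
      (by simpa using h)
    omega
  -- the exponential map
  set e : ZMod (q ^ 2 - 1) → F := fun a => θ ^ a.val with he
  have hne : ∀ a, e a ≠ 0 := fun a => pow_ne_zero _ hθ0
  have hmul : ∀ a b, e (a + b) = e a * e b := by
    intro a b
    rw [he]
    simp only
    rw [← pow_add, ZMod.val_add]
    have h := pow_mod_orderOf θ (a.val + b.val)
    rw [hθ] at h
    exact h
  have hinj : Function.Injective e := by
    intro a b hab
    have := pow_injOn_Iio_orderOf (x := θ)
      (by rw [hθ]; exact Set.mem_Iio.mpr (ZMod.val_lt a))
      (by rw [hθ]; exact Set.mem_Iio.mpr (ZMod.val_lt b)) hab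
    exact ZMod.val_injective _ this
  have he0 : e 0 = 1 := by rw [he]; simp
  have hsub : ∀ a b, e (a - b) * e b = e a := by
    intro a b; rw [← hmul, sub_add_cancel]
  -- surjectivity of e onto nonzero elements
  have hsurj : ∀ y : F, y ≠ 0 → ∃ a, e a = y := by
    intro y hy
    have himg : (Finset.univ.image e) = Finset.univ.erase 0 := by
      apply Finset.eq_of_subset_of_card_le
      · intro z hz
        obtain ⟨a, _, rfl⟩ := Finset.mem_image.mp hz
        exact Finset.mem_erase.mpr ⟨hne a, Finset.mem_univ _⟩
      · rw [Finset.card_erase_of_mem (Finset.mem_univ _),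
          Finset.card_image_of_injective _ hinj, Finset.card_univ, Finset.card_univ,
          ZMod.card, hF]
    have : y ∈ Finset.univ.image e := by
      rw [himg]; exact Finset.mem_erase.mpr ⟨hy, Finset.mem_univ _⟩
    obtain ⟨a, _, ha⟩ := Finset.mem_image.mp this
    exact ⟨a, ha⟩
  -- membership in the Bose-Chowla set
  have memA : ∀ a : ZMod (q ^ 2 - 1), a ∈ BoseChowla q θ ↔ φ (e a - θ) = e a - θ := by
    intro a
    rw [hφ]
    exact Iff.rfl
  -- the subfield K as a finset
  set Kf : Finset F := Finset.univ.filter (fun z => φ z = z) with hKf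
  have hKmem : ∀ z : F, z ∈ Kf ↔ φ z = z := by
    intro z; rw [hKf]; simp
  have hθs : ∀ s : F, φ s = s → θ + s ≠ 0 := by
    intro s hs h
    apply hθK
    have h2 : θ = -s := eq_neg_of_add_eq_zero_left h
    rw [h2, map_neg, hs]
  have pairinj : ∀ s t s' t' : F, φ s = s → φ t = t → φ s' = s' → φ t' = t' →
      s + t * θ = s' + t' * θ → s = s' ∧ t = t' := by
    intro s t s' t' hs ht hs' ht' hE
    by_cases htt : t = t'
    · subst htt
      exact ⟨add_right_cancel hE, rfl⟩
    · exfalso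
      apply hθK
      have htne : t' - t ≠ 0 := sub_ne_zero.mpr (Ne.symm htt)
      have hθeq : θ = (s - s') / (t' - t) := by
        field_simp
        linear_combination -hE
      rw [hθeq, map_div₀, map_sub, map_sub, hs, hs', ht, ht']
  have hfac : (q + 1) * (q - 1) = q ^ 2 - 1 := by
    obtain ⟨r, hr⟩ : ∃ r, q = r + 2 := ⟨q - 2, by omega⟩
    rw [hr]
    have h2 : (r + 2) ^ 2 = r * r + 4 * r + 4 := by ring
    have h3 : (r + 2 + 1) * (r + 2 - 1) = r * r + 4 * r + 3 := by
      have : r + 2 - 1 = r + 1 := by omega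
      rw [this]; ring
    omega
  have hKlow : q ≤ Kf.card := by
    have hg : ∀ j : ℕ, θ ^ ((q + 1) * j) ∈ Kf := by
      intro j
      rw [hKmem, hφ, ← pow_mul]
      have h1 : (q + 1) * j * q = (q + 1) * j + (q ^ 2 - 1) * j := by
        have e1 : (q + 1) * j * q = (q ^ 2 + q) * j := by ring
        have e2 : (q + 1) * j + (q ^ 2 - 1) * j = (q + 1 + (q ^ 2 - 1)) * j := by ring
        rw [e1, e2]
        congr 1
        omega
      rw [h1, pow_add, pow_mul θ (q ^ 2 - 1) j, hn1, one_pow, mul_one]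
    have h0K : (0 : F) ∈ Kf := by rw [hKmem]; exact map_zero φ
    have hsubset : insert (0 : F)
        ((Finset.range (q - 1)).image (fun j => θ ^ ((q + 1) * j))) ⊆ Kf := by
      intro z hz
      rcases Finset.mem_insert.mp hz with rfl | hz
      · exact h0K
      · obtain ⟨j, _, rfl⟩ := Finset.mem_image.mp hz
        exact hg j
    have hinjg : Set.InjOn (fun j => θ ^ ((q + 1) * j)) (Finset.range (q - 1)) := by
      intro j hj j' hj' hE
      simp only [Finset.coe_range, Set.mem_Iio] at hj hj'
      have hb : ∀ i : ℕ, i < q - 1 → (q + 1) * i < orderOf θ := by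
        intro i hi
        rw [hθ, ← hfac]
        have : q + 1 > 0 := by omega
        exact (Nat.mul_lt_mul_left this).mpr hi
      have := pow_injOn_Iio_orderOf (x := θ) (Set.mem_Iio.mpr (hb j hj))
        (Set.mem_Iio.mpr (hb j' hj')) hE
      exact Nat.eq_of_mul_eq_mul_left (by omega) this
    have hcard1 : (insert (0 : F)
        ((Finset.range (q - 1)).image (fun j => θ ^ ((q + 1) * j)))).card = q := by
      rw [Finset.card_insert_of_notMem, Finset.card_image_of_injOn hinjg,
        Finset.card_range]
      · omega
      · intro h0
        obtain ⟨j, _, hj⟩ := Finset.mem_image.mp h0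
        exact pow_ne_zero _ hθ0 hj
    calc q = _ := hcard1.symm
    _ ≤ Kf.card := Finset.card_le_card hsubset
  have himg2 : ((Kf ×ˢ Kf).image (fun st => st.1 + st.2 * θ)).card
      = Kf.card * Kf.card := by
    rw [Finset.card_image_of_injOn, Finset.card_product]
    rintro ⟨s, t⟩ hst ⟨s', t'⟩ hst' hE
    rw [Finset.mem_coe, Finset.mem_product] at hst hst'
    obtain ⟨h1, h2⟩ := pairinj s t s' t' ((hKmem s).mp hst.1) ((hKmem t).mp hst.2)
      ((hKmem s').mp hst'.1) ((hKmem t').mp hst'.2) hE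
    simp [h1, h2]
  have hKcard : Kf.card = q := by
    refine le_antisymm ?_ hKlow
    have hle : Kf.card * Kf.card ≤ q ^ 2 := by
      rw [← himg2, ← hF, ← Finset.card_univ]
      exact Finset.card_le_univ _
    nlinarith
  have hbasis : ∀ y : F, ∃ s t, φ s = s ∧ φ t = t ∧ y = s + t * θ := by
    intro y
    have huniv : ((Kf ×ˢ Kf).image (fun st => st.1 + st.2 * θ)) = Finset.univ := by
      apply Finset.eq_univ_of_card
      rw [himg2, hKcard, hF]
      ring
    have hy : y ∈ (Kf ×ˢ Kf).image (fun st => st.1 + st.2 * θ) := by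
      rw [huniv]; exact Finset.mem_univ y
    obtain ⟨⟨s, t⟩, hst, hE⟩ := Finset.mem_image.mp hy
    rw [Finset.mem_product] at hst
    exact ⟨s, t, (hKmem s).mp hst.1, (hKmem t).mp hst.2, hE.symm⟩
  -- D1: every element outside K is a difference of two elements of A
  have D1 : ∀ d : ZMod (q ^ 2 - 1), φ (e d) ≠ e d →
      ∃ a b, a ∈ BoseChowla q θ ∧ b ∈ BoseChowla q θ ∧ a - b = d := by
    intro d hd
    obtain ⟨u, v, hu, hv, hg⟩ := hbasis (e d)
    have hv0 : v ≠ 0 := by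
      rintro rfl
      rw [zero_mul, add_zero] at hg
      exact hd (by rw [hg, hu])
    obtain ⟨β, α, hβ, hα, hθ2⟩ := hbasis (θ * θ)
    set t : F := -(u - 1 + v * α) / v with ht_def
    have htK : φ t = t := by
      rw [ht_def, map_div₀, map_neg, map_add, map_sub, map_mul, map_one, hu, hv, hα]
    set s : F := u * t + v * β with hs_def
    have hsK : φ s = s := by
      rw [hs_def, map_add, map_mul, map_mul, hu, hv, hβ, htK]
    have hvt : v * t = -(u - 1 + v * α) := by
      rw [ht_def]
      field_simp
    have key : θ + s = e d * (θ + t) := by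
      rw [hg, hs_def]
      linear_combination (-v) * hθ2 - θ * hvt
    have htne : θ + t ≠ 0 := hθs t htK
    have hsne : θ + s ≠ 0 := hθs s hsK
    obtain ⟨a, ha⟩ := hsurj (θ + s) hsne
    obtain ⟨b, hb⟩ := hsurj (θ + t) htne
    refine ⟨a, b, ?_, ?_, ?_⟩
    · rw [memA, ha]
      simpa using hsK
    · rw [memA, hb]
      simpa using htK
    · apply hinj
      have h2 : e (a - b) * e b = e d * e b := by
        rw [hsub, ha, hb, key]
      exact mul_right_cancel₀ (hne b) h2
  -- D2: distinct elements of A have difference outside K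
  have D2 : ∀ c c' : ZMod (q ^ 2 - 1), c ∈ BoseChowla q θ → c' ∈ BoseChowla q θ →
      c ≠ c' → φ (e (c - c')) ≠ e (c - c') := by
    intro c c' hc hc' hcc hw
    set w := e (c - c') with hwdef
    have hwe : w * e c' = e c := hsub c c'
    have hw1 : w ≠ 1 := by
      intro h1
      rw [h1, one_mul] at hwe
      exact hcc (hinj hwe).symm
    apply hθK
    have hsf : φ (e c - θ) = e c - θ := (memA c).mp hc
    have hsf' : φ (e c' - θ) = e c' - θ := (memA c').mp hc'
    have hww : w - 1 ≠ 0 := sub_ne_zero.mpr hw1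
    have hθeq : θ = ((e c - θ) - w * (e c' - θ)) / (w - 1) := by
      rw [eq_div_iff hww]
      linear_combination hwe
    have hNK : φ ((e c - θ) - w * (e c' - θ)) = (e c - θ) - w * (e c' - θ) := by
      rw [map_sub, map_mul, hsf, hsf', hw]
    have hDK : φ (w - 1) = w - 1 := by rw [map_sub, map_one, hw]
    rw [hθeq, map_div₀, hNK, hDK]
  -- at most one bad translate
  have hbad : ∀ c c' : ZMod (q ^ 2 - 1), c ∈ BoseChowla q θ → c' ∈ BoseChowla q θ →
      φ (e (x - c)) = e (x - c) → φ (e (x - c')) = e (x - c') → c = c' := by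
    intro c c' hc hc' h1 h2
    by_contra hcc
    apply D2 c' c hc' hc (Ne.symm hcc)
    have h4 : c' - c = (x - c) - (x - c') := by ring
    have h5 : e (c' - c) * e (x - c') = e (x - c) := by
      rw [h4]
      exact hsub _ _
    have h6 : e (c' - c) = e (x - c) / e (x - c') := by
      rw [eq_div_iff (hne _)]
      exact h5
    rw [h6, map_div₀, h1, h2]
  -- the set A as a finset, with at least q elements
  set Af : Finset (ZMod (q ^ 2 - 1)) := Finset.univ.filter (· ∈ BoseChowla q θ) with hAf
  have hAmem : ∀ c, c ∈ Af ↔ c ∈ BoseChowla q θ := by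
    intro c; rw [hAf]; simp
  have hAcard : q ≤ Af.card := by
    set ψ : F → ZMod (q ^ 2 - 1) :=
      fun s => if h : θ + s ≠ 0 then (hsurj _ h).choose else 0 with hψ
    have hψe : ∀ s : F, φ s = s → e (ψ s) = θ + s := by
      intro s hs
      rw [hψ]
      simp only
      rw [dif_pos (hθs s hs)]
      exact (hsurj _ (hθs s hs)).choose_spec
    refine le_trans (le_of_eq hKcard.symm) (Finset.card_le_card_of_injOn ψ ?_ ?_)
    · intro s hs
      have hsK := (hKmem s).mp hs
      rw [Finset.mem_coe, hAmem, memA, hψe s hsK]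
      simpa using hsK
    · intro s hs s' hs' hE
      have h2 := congrArg e hE
      rw [hψe s ((hKmem s).mp hs), hψe s' ((hKmem s').mp hs')] at h2
      exact add_left_cancel h2
  -- the bad set
  set B : Finset (ZMod (q ^ 2 - 1)) := Af.filter (fun c => φ (e (x - c)) = e (x - c)) with hB
  have hBcard : B.card ≤ 1 := by
    rw [Finset.card_le_one]
    intro c hc c' hc'
    rw [hB, Finset.mem_filter] at hc hc'
    exact hbad c c' ((hAmem c).mp hc.1) ((hAmem c').mp hc'.1) hc.2 hc'.2
  have hScard : q - 1 ≤ (Af \ B).card := by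
    have h2 := Finset.card_le_card_sdiff_add_card (s := Af) (t := B)
    omega
  -- the triple map
  set f : ZMod (q ^ 2 - 1) → ZMod (q ^ 2 - 1) × ZMod (q ^ 2 - 1) × ZMod (q ^ 2 - 1) :=
    fun c => if h : φ (e (x - c)) ≠ e (x - c)
      then ((D1 _ h).choose, (D1 _ h).choose_spec.choose, c) else (0, 0, c) with hf
  have hf3 : ∀ c, (f c).2.2 = c := by
    intro c
    rw [hf]
    simp only
    split <;> rfl
  have hfinj : Function.Injective f := by
    intro c c' h
    rw [← hf3 c, ← hf3 c', h]
  have hsubT : ↑((Af \ B).image f) ⊆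
      {T : ZMod (q ^ 2 - 1) × ZMod (q ^ 2 - 1) × ZMod (q ^ 2 - 1) |
        T.1 ∈ BoseChowla q θ ∧ T.2.1 ∈ BoseChowla q θ ∧ T.2.2 ∈ BoseChowla q θ ∧
        T.1 - T.2.1 + T.2.2 = x ∧ T.1 ≠ T.2.1 ∧ T.2.1 ≠ T.2.2} := by
    intro T hT
    rw [Finset.mem_coe, Finset.mem_image] at hT
    obtain ⟨c, hc, rfl⟩ := hT
    rw [Finset.mem_sdiff] at hc
    have hcA : c ∈ BoseChowla q θ := (hAmem c).mp hc.1
    have hcB : φ (e (x - c)) ≠ e (x - c) := by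
      intro hco
      exact hc.2 (by rw [hB, Finset.mem_filter]; exact ⟨hc.1, hco⟩)
    rw [hf]
    simp only
    rw [dif_pos hcB]
    obtain ⟨ha, hbA, hab⟩ := (D1 _ hcB).choose_spec.choose_spec
    refine ⟨ha, hbA, hcA, ?_, ?_, ?_⟩
    · show (D1 _ hcB).choose - (D1 _ hcB).choose_spec.choose + c = x
      rw [hab]
      exact sub_add_cancel x c
    · show (D1 _ hcB).choose ≠ (D1 _ hcB).choose_spec.choose
      intro h
      apply hcB
      have h0 : x - c = 0 := by
        rw [← hab]
        exact sub_eq_zero_of_eq h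
      rw [h0, he0, map_one]
    · show (D1 _ hcB).choose_spec.choose ≠ c
      intro hbc
      apply hx
      have hax : (D1 _ hcB).choose = x := by
        calc (D1 _ hcB).choose
            = ((D1 _ hcB).choose - (D1 _ hcB).choose_spec.choose)
              + (D1 _ hcB).choose_spec.choose := (sub_add_cancel _ _).symm
          _ = (x - c) + c := by rw [hab, hbc]
          _ = x := sub_add_cancel _ _
      rwa [hax] at ha
  have hfinal := Set.ncard_le_ncard hsubT (Set.toFinite _)
  rw [Set.ncard_coe_finset, Finset.card_image_of_injective _ hfinj] at hfinal
  exact le_trans hScard hfinal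
end

section
/- In G_{q,θ}, two distinct vertices x and y are at distance 2 if and only if x + y ∉ A(q,θ) and x - y ∉ H, and at distance 3 if and only if x + y ∉ A(q,θ) and x - y ∈ H, where H is the subgroup of ℤ/(q²-1) generated by q+1. -/
set_option linter.unusedSectionVars false
set_option maxHeartbeats 1000000

namespace BCAux

variable {q : ℕ} {F : Type*} [Field F] [Fintype F] {θ : F}

lemma qsq_ge (hq2 : 2 ≤ q) : 4 ≤ q ^ 2 := by
  calc (4:ℕ) = 2 ^ 2 := by norm_num
  _ ≤ q ^ 2 := Nat.pow_le_pow_left hq2 2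

lemma nz (hq2 : 2 ≤ q) : NeZero (q ^ 2 - 1) := ⟨by have := qsq_ge hq2; omega⟩

lemma nfact (hq2 : 2 ≤ q) : q ^ 2 - 1 = (q + 1) * (q - 1) := by
  obtain ⟨r, rfl⟩ : ∃ r, q = r + 2 := ⟨q - 2, by omega⟩
  have h1 : (r + 2) ^ 2 = r ^ 2 + 4 * r + 4 := by ring
  have h2 : (r + 2 + 1) * (r + 2 - 1) = r ^ 2 + 4 * r + 3 := by
    have : r + 2 - 1 = r + 1 := by omega
    rw [this]; ring
  omega

lemma frob_add (hq : IsPrimePow q) (hF : Fintype.card F = q ^ 2) (x y : F) :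
    (x + y) ^ q = x ^ q + y ^ q := by
  obtain ⟨p, n, hp, hn, rfl⟩ := hq
  obtain ⟨p', hc⟩ := CharP.exists F
  haveI := hc
  obtain ⟨m, hp', hcard⟩ := FiniteField.card F p'
  haveI : Fact p'.Prime := ⟨hp'⟩
  have hpp : p.Prime := hp.nat_prime
  have hdvd : p ∣ p' ^ (m : ℕ) := by
    rw [← hcard, hF, ← pow_mul]
    exact dvd_pow_self p (by positivity)
  have : p = p' := by
    have := hpp.dvd_of_dvd_pow hdvd
    exact (Nat.prime_dvd_prime_iff_eq hpp hp').mp this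
  subst this
  exact add_pow_char_pow x y p n

lemma frob_sub (hq : IsPrimePow q) (hF : Fintype.card F = q ^ 2) (x y : F) :
    (x - y) ^ q = x ^ q - y ^ q := by
  have h := frob_add hq hF (x - y) y
  have h2 : x - y + y = x := by ring
  rw [h2] at h
  linear_combination -h

lemma theta_ne_zero (hq2 : 2 ≤ q) (hθ : orderOf θ = q ^ 2 - 1) : θ ≠ 0 := by
  intro h
  have h1 := pow_orderOf_eq_one θ
  rw [hθ, h, zero_pow (by have := qsq_ge hq2; omega)] at h1
  exact zero_ne_one h1

lemma theta_pow_N (hθ : orderOf θ = q ^ 2 - 1) : θ ^ (q ^ 2 - 1) = 1 := by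
  rw [← hθ]; exact pow_orderOf_eq_one θ

lemma theta_qsq (hq2 : 2 ≤ q) (hθ : orderOf θ = q ^ 2 - 1) : θ ^ q ^ 2 = θ := by
  have h : q ^ 2 = (q ^ 2 - 1) + 1 := by have := qsq_ge hq2; omega
  rw [h, pow_succ, theta_pow_N hθ, one_mul]

lemma theta_not_fixed (hq2 : 2 ≤ q) (hθ : orderOf θ = q ^ 2 - 1) : θ ^ q ≠ θ := by
  intro h
  have hθ0 := theta_ne_zero hq2 hθ
  have h0 : θ ^ (q - 1) * θ = θ ^ q := by
    rw [← pow_succ]; congr 1; omega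
  have h1 : θ ^ (q - 1) = 1 := by
    have : θ ^ (q - 1) * θ = 1 * θ := by rw [h0, h, one_mul]
    exact mul_right_cancel₀ hθ0 this
  have h2 := orderOf_dvd_of_pow_eq_one h1
  rw [hθ] at h2
  have h3 := Nat.le_of_dvd (by omega) h2
  have h4 : q < q ^ 2 := by nlinarith
  omega

lemma pow_eq_pow_iff' (hq2 : 2 ≤ q) (hθ : orderOf θ = q ^ 2 - 1) {n m : ℕ} :
    θ ^ n = θ ^ m ↔ n ≡ m [MOD (q ^ 2 - 1)] := by
  have hθ0 := theta_ne_zero hq2 hθ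
  set u := Units.mk0 θ hθ0 with hu
  have hcoe : ∀ k : ℕ, (↑(u ^ k) : F) = θ ^ k := by
    intro k; rw [Units.val_pow_eq_pow_val]; rfl
  have hord : orderOf u = q ^ 2 - 1 := by
    rw [← orderOf_units]; exact hθ
  rw [← hord, ← pow_eq_pow_iff_modEq (x := u)]
  constructor
  · intro h; exact Units.ext (by rw [hcoe, hcoe]; exact h)
  · intro h; rw [← hcoe, ← hcoe, h]

lemma pow_val_add (hq2 : 2 ≤ q) (hθ : orderOf θ = q ^ 2 - 1) (a b : ZMod (q ^ 2 - 1)) :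
    θ ^ (a + b).val = θ ^ a.val * θ ^ b.val := by
  haveI := nz (q := q) hq2
  rw [← pow_add, pow_eq_pow_iff' hq2 hθ, ZMod.val_add]
  exact Nat.mod_modEq _ _

lemma pow_val_inj (hq2 : 2 ≤ q) (hθ : orderOf θ = q ^ 2 - 1) {a b : ZMod (q ^ 2 - 1)}
    (h : θ ^ a.val = θ ^ b.val) : a = b := by
  haveI := nz (q := q) hq2
  rw [pow_eq_pow_iff' hq2 hθ] at h
  have h1 : a.val % (q ^ 2 - 1) = b.val % (q ^ 2 - 1) := h
  rw [Nat.mod_eq_of_lt a.val_lt, Nat.mod_eq_of_lt b.val_lt] at h1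
  exact ZMod.val_injective _ h1

lemma Hdvd (hq2 : 2 ≤ q) {d : ZMod (q ^ 2 - 1)} :
    d ∈ AddSubgroup.zmultiples ((q : ZMod (q ^ 2 - 1)) + 1) ↔ (q + 1) ∣ d.val := by
  haveI := nz (q := q) hq2
  have hc : ((q : ZMod (q ^ 2 - 1)) + 1) = ((q + 1 : ℕ) : ZMod (q ^ 2 - 1)) := by push_cast; ring
  have hNdvd : (q + 1) ∣ (q ^ 2 - 1) := ⟨q - 1, nfact hq2⟩
  rw [AddSubgroup.mem_zmultiples_iff]
  constructor
  · rintro ⟨k, hk⟩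
    rw [hc, zsmul_eq_mul] at hk
    have hk2 : ((q + 1 : ℕ) : ZMod (q ^ 2 - 1)) * (k : ZMod (q ^ 2 - 1)) = d := by
      rw [← hk]; ring
    set z : ZMod (q ^ 2 - 1) := (k : ZMod (q ^ 2 - 1)) with hz
    have hzv : ((z.val : ℕ) : ZMod (q ^ 2 - 1)) = z := ZMod.natCast_rightInverse z
    have hk3 : (((q + 1) * z.val : ℕ) : ZMod (q ^ 2 - 1)) = d := by
      push_cast
      rw [hzv] at *
      push_cast at hk2
      exact hk2
    have hval : d.val = ((q + 1) * z.val) % (q ^ 2 - 1) := by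
      rw [← hk3, ZMod.val_natCast]
    rw [hval]
    exact (Nat.dvd_mod_iff hNdvd).mpr ⟨z.val, rfl⟩
  · rintro ⟨m, hm⟩
    refine ⟨(m : ℤ), ?_⟩
    rw [hc, zsmul_eq_mul]
    have : d = ((d.val : ℕ) : ZMod (q ^ 2 - 1)) := (ZMod.natCast_rightInverse d).symm
    rw [this, hm]
    push_cast
    ring

lemma Hmem_iff (hq2 : 2 ≤ q) (hθ : orderOf θ = q ^ 2 - 1) {d : ZMod (q ^ 2 - 1)} :
    d ∈ AddSubgroup.zmultiples ((q : ZMod (q ^ 2 - 1)) + 1) ↔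
      (θ ^ d.val) ^ q = θ ^ d.val := by
  haveI := nz (q := q) hq2
  rw [Hdvd hq2, ← pow_mul]
  rw [pow_eq_pow_iff' hq2 hθ]
  have hle : d.val ≤ d.val * q := Nat.le_mul_of_pos_right _ (by omega)
  rw [Nat.ModEq.comm, Nat.modEq_iff_dvd' hle]
  have hsub : d.val * q - d.val = d.val * (q - 1) := by
    have h1 : d.val * (q - 1) + d.val * 1 = d.val * q := by
      rw [← Nat.mul_add]; congr 1; omega
    omega
  rw [hsub]
  generalize d.val = v
  rw [nfact hq2]
  rw [Nat.mul_comm (q + 1) (q - 1), Nat.mul_comm v (q - 1)]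
  rw [Nat.mul_dvd_mul_iff_left (show 0 < q - 1 by omega)]
  
lemma dlog (hq2 : 2 ≤ q) (hF : Fintype.card F = q ^ 2) (hθ : orderOf θ = q ^ 2 - 1)
    {z : F} (hz : z ≠ 0) : ∃ e : ZMod (q ^ 2 - 1), θ ^ e.val = z := by
  classical
  haveI := nz (q := q) hq2
  have hθ0 := theta_ne_zero hq2 hθ
  set u := Units.mk0 θ hθ0 with hu
  have hord : orderOf u = q ^ 2 - 1 := by rw [← orderOf_units]; exact hθ
  have hcard : Nat.card Fˣ = q ^ 2 - 1 := by
    rw [Nat.card_eq_fintype_card, Fintype.card_units, hF]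
  have htop : Subgroup.zpowers u = ⊤ :=
    Subgroup.eq_top_of_card_eq _ (by rw [Nat.card_zpowers, hord, hcard])
  have hmem : Units.mk0 z hz ∈ Subgroup.zpowers u := by rw [htop]; trivial
  rw [← mem_powers_iff_mem_zpowers] at hmem
  obtain ⟨n, hn⟩ := hmem
  refine ⟨(n : ZMod (q ^ 2 - 1)), ?_⟩
  have h1 : θ ^ ((n : ZMod (q ^ 2 - 1)).val) = θ ^ n := by
    rw [pow_eq_pow_iff' hq2 hθ, ZMod.val_natCast]
    exact Nat.mod_modEq _ _
  rw [h1]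
  have := congrArg (Units.val) hn
  rw [Units.val_pow_eq_pow_val] at this
  exact this

lemma mem_A {a : ZMod (q ^ 2 - 1)} :
    a ∈ BoseChowla q θ ↔ (θ ^ a.val - θ) ^ q = θ ^ a.val - θ := Iff.rfl

lemma unique_ratio (hq : IsPrimePow q) (hF : Fintype.card F = q ^ 2)
    (hθ : orderOf θ = q ^ 2 - 1) {c c' u : F} (hc : c ^ q = c) (hc' : c' ^ q = c')
    (hu : u ^ q = u) (h : θ + c = u * (θ + c')) : u = 1 ∧ c = c' := by
  have hq2 := hq.two_le
  have hnf := theta_not_fixed hq2 hθ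
  have h2 : θ ^ q + c = u * (θ ^ q + c') := by
    have h1 : (θ + c) ^ q = (u * (θ + c')) ^ q := by rw [h]
    rw [frob_add hq hF, hc, mul_pow, hu, frob_add hq hF, hc'] at h1
    exact h1
  have hu1 : u = 1 := by
    have hz : (u - 1) * (θ ^ q - θ) = 0 := by linear_combination h - h2
    rcases mul_eq_zero.mp hz with h' | h'
    · have := sub_eq_zero.mp h'; exact this
    · exact absurd (sub_eq_zero.mp h') hnf
  refine ⟨hu1, ?_⟩
  rw [hu1, one_mul] at h
  exact add_left_cancel h

lemma sidon (hq : IsPrimePow q) (hF : Fintype.card F = q ^ 2)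
    (hθ : orderOf θ = q ^ 2 - 1) {a b : ZMod (q ^ 2 - 1)}
    (ha : a ∈ BoseChowla q θ) (hb : b ∈ BoseChowla q θ)
    (hab : a - b ∈ AddSubgroup.zmultiples ((q : ZMod (q ^ 2 - 1)) + 1)) : a = b := by
  have hq2 := hq.two_le
  have hu : (θ ^ (a - b).val) ^ q = θ ^ (a - b).val := (Hmem_iff hq2 hθ).mp hab
  have hrel : θ + (θ ^ a.val - θ) = θ ^ (a - b).val * (θ + (θ ^ b.val - θ)) := by
    have h1 := pow_val_add hq2 hθ (a - b) b
    have h2 : a - b + b = a := by ring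
    rw [h2] at h1
    rw [h1]; ring
  obtain ⟨hu1, _⟩ := unique_ratio hq hF hθ (mem_A.mp ha) (mem_A.mp hb) hu hrel
  have : θ ^ (a - b).val = θ ^ ((0 : ZMod (q ^ 2 - 1))).val := by
    rw [hu1, ZMod.val_zero, pow_zero]
  have h0 := pow_val_inj hq2 hθ this
  exact sub_eq_zero.mp h0

lemma theta_add_ne_zero (hq : IsPrimePow q) (hF : Fintype.card F = q ^ 2)
    (hθ : orderOf θ = q ^ 2 - 1) {c : F} (hc : c ^ q = c) : θ + c ≠ 0 := by
  have hq2 := hq.two_le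
  intro h0
  apply theta_not_fixed hq2 hθ
  have h1 : θ = 0 - c := by linear_combination h0
  rw [h1, frob_sub hq hF, zero_pow (by omega), hc]

lemma exists_diff (hq : IsPrimePow q) (hF : Fintype.card F = q ^ 2)
    (hθ : orderOf θ = q ^ 2 - 1) {d : ZMod (q ^ 2 - 1)}
    (hd : d ∉ AddSubgroup.zmultiples ((q : ZMod (q ^ 2 - 1)) + 1)) :
    ∃ a b, a ∈ BoseChowla q θ ∧ b ∈ BoseChowla q θ ∧ a - b = d := by
  have hq2 := hq.two_le
  have hθ0 := theta_ne_zero hq2 hθ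
  set m := θ ^ d.val with hmdef
  have hm : m ^ q ≠ m := fun h => hd ((Hmem_iff hq2 hθ).mpr h)
  have hden : m ^ q - m ≠ 0 := sub_ne_zero.mpr hm
  have hmqq : m ^ q ^ 2 = m := by
    rw [hmdef, ← pow_mul, Nat.mul_comm, pow_mul, theta_qsq hq2 hθ]
  have hmq2 : (m ^ q) ^ q = m := by
    rw [← pow_mul, ← pow_two]; exact hmqq
  have hθq2 : (θ ^ q) ^ q = θ := by
    rw [← pow_mul, ← pow_two]; exact theta_qsq hq2 hθ
  set c' := (θ * (m - 1) - θ ^ q * (m ^ q - 1)) / (m ^ q - m) with hc'def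
  have hnum : (θ * (m - 1) - θ ^ q * (m ^ q - 1)) ^ q
      = θ ^ q * (m ^ q - 1) - θ * (m - 1) := by
    rw [frob_sub hq hF, mul_pow, mul_pow, frob_sub hq hF, frob_sub hq hF,
      one_pow, hmq2, hθq2]
  have hdenq : (m ^ q - m) ^ q = m - m ^ q := by
    rw [frob_sub hq hF, hmq2]
  have hc'fix : c' ^ q = c' := by
    rw [hc'def, div_pow, hnum, hdenq,
      show θ ^ q * (m ^ q - 1) - θ * (m - 1) = -(θ * (m - 1) - θ ^ q * (m ^ q - 1)) by ring,
      show m - m ^ q = -(m ^ q - m) by ring, neg_div_neg_eq]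
  set c := m * (θ + c') - θ with hcdef
  have hkey : c' * (m ^ q - m) = θ * (m - 1) - θ ^ q * (m ^ q - 1) :=
    div_mul_cancel₀ _ hden
  have hcfix : c ^ q = c := by
    rw [hcdef, frob_sub hq hF, mul_pow, frob_add hq hF, hc'fix]
    linear_combination hkey
  have hnz : θ + c' ≠ 0 := theta_add_ne_zero hq hF hθ hc'fix
  obtain ⟨b, hbval⟩ := dlog hq2 hF hθ hnz
  have hb : b ∈ BoseChowla q θ := by
    rw [mem_A, hbval, show θ + c' - θ = c' from by ring]
    exact hc'fix
  refine ⟨d + b, b, ?_, hb, by ring⟩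
  have hav : θ ^ (d + b).val = θ + c := by
    rw [pow_val_add hq2 hθ d b, hbval, hcdef, ← hmdef]; ring
  rw [mem_A, hav, show θ + c - θ = c from by ring]
  exact hcfix

lemma adj_iff {x y : ZMod (q ^ 2 - 1)} :
    (CayleyGraph q θ).Adj x y ↔ x ≠ y ∧ x + y ∈ BoseChowla q θ := by
  show (SimpleGraph.fromRel _).Adj x y ↔ _
  rw [SimpleGraph.fromRel_adj]
  constructor
  · rintro ⟨h, h2 | h2⟩
    · exact ⟨h, h2⟩
    · exact ⟨h, by rwa [add_comm]⟩
  · rintro ⟨h, h2⟩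
    exact ⟨h, Or.inl h2⟩

lemma mid_eq (hq : IsPrimePow q) (hF : Fintype.card F = q ^ 2)
    (hθ : orderOf θ = q ^ 2 - 1) {x y z : ZMod (q ^ 2 - 1)}
    (h1 : (CayleyGraph q θ).Adj x z) (h2 : (CayleyGraph q θ).Adj z y)
    (hH : x - y ∈ AddSubgroup.zmultiples ((q : ZMod (q ^ 2 - 1)) + 1)) : x = y := by
  obtain ⟨-, ha⟩ := adj_iff.mp h1
  obtain ⟨-, hb⟩ := adj_iff.mp h2
  have hsub : (x + z) - (z + y) = x - y := by ring
  have := sidon hq hF hθ ha hb (by rw [hsub]; exact hH)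
  have h3 : x + z = y + z := by rw [this]; ring
  exact add_right_cancel h3

lemma walk_len1 {V : Type*} {G : SimpleGraph V} {x y : V} (p : G.Walk x y)
    (hp : p.length = 1) : G.Adj x y := by
  cases p with
  | nil => simp at hp
  | cons h p' =>
    rw [SimpleGraph.Walk.length_cons] at hp
    have := SimpleGraph.Walk.eq_of_length_eq_zero (by omega : p'.length = 0)
    subst this
    exact h

lemma walk_len2 {V : Type*} {G : SimpleGraph V} {x y : V} (p : G.Walk x y)
    (hp : p.length = 2) : ∃ z, G.Adj x z ∧ G.Adj z y := by
  cases p with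
  | nil => simp at hp
  | cons h p' =>
    rw [SimpleGraph.Walk.length_cons] at hp
    exact ⟨_, h, walk_len1 p' (by omega)⟩

end BCAux

open BCAux

theorem cayley_graph_distances (q : ℕ) (hq : IsPrimePow q) (F : Type*) [Field F]
    [Fintype F] (hF : Fintype.card F = q ^ 2) (θ : F) (hθ : orderOf θ = q ^ 2 - 1) :
    ∀ x y : ZMod (q ^ 2 - 1), x ≠ y →
      ((CayleyGraph q θ).dist x y = 2 ↔
        x + y ∉ BoseChowla q θ ∧
          x - y ∉ AddSubgroup.zmultiples ((q : ZMod (q ^ 2 - 1)) + 1)) ∧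
      ((CayleyGraph q θ).dist x y = 3 ↔
        x + y ∉ BoseChowla q θ ∧
          x - y ∈ AddSubgroup.zmultiples ((q : ZMod (q ^ 2 - 1)) + 1)) := by
  have hq2 := hq.two_le
  haveI := nz (q := q) hq2
  have hθ0 := theta_ne_zero hq2 hθ
  -- dist = 2 sufficiency
  have main2 : ∀ x y : ZMod (q ^ 2 - 1), x ≠ y → x + y ∉ BoseChowla q θ →
      x - y ∉ AddSubgroup.zmultiples ((q : ZMod (q ^ 2 - 1)) + 1) →
      (CayleyGraph q θ).dist x y = 2 := by
    intro x y hxy hA hH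
    obtain ⟨a, b, ha, hb, hab⟩ := exists_diff hq hF hθ hH
    set z := a - x with hzdef
    have hz1 : x + z = a := by rw [hzdef]; ring
    have hz2 : z + y = b := by rw [hzdef]; linear_combination hab
    have hzx : z ≠ x := by
      intro h
      apply hA
      have : x + y = b := by rw [← hz2, h]
      rw [this]; exact hb
    have hzy : z ≠ y := by
      intro h
      apply hA
      have : x + y = a := by rw [← hz1, h]
      rw [this]; exact ha
    have hadj1 : (CayleyGraph q θ).Adj x z := adj_iff.mpr ⟨hzx.symm, by rw [hz1]; exact ha⟩
    have hadj2 : (CayleyGraph q θ).Adj z y := adj_iff.mpr ⟨hzy, by rw [hz2]; exact hb⟩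
    have p : (CayleyGraph q θ).Walk x y := .cons hadj1 (.cons hadj2 .nil)
    have hle : (CayleyGraph q θ).dist x y ≤ 2 := by
      have h' := SimpleGraph.dist_le
        (SimpleGraph.Walk.cons hadj1 (SimpleGraph.Walk.cons hadj2 SimpleGraph.Walk.nil))
      simpa using h' 
    have hne0 : (CayleyGraph q θ).dist x y ≠ 0 :=
      SimpleGraph.dist_ne_zero_iff_ne_and_reachable.mpr ⟨hxy, ⟨p⟩⟩
    have hne1 : (CayleyGraph q θ).dist x y ≠ 1 := by
      intro h
      exact hA (adj_iff.mp (SimpleGraph.dist_eq_one_iff_adj.mp h)).2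
    omega
  -- no distance-2 path when x - y ∈ H
  have no2 : ∀ x y : ZMod (q ^ 2 - 1), x ≠ y →
      x - y ∈ AddSubgroup.zmultiples ((q : ZMod (q ^ 2 - 1)) + 1) →
      (CayleyGraph q θ).dist x y ≠ 2 := by
    intro x y hxy hH h2
    obtain ⟨p, hp⟩ := SimpleGraph.exists_walk_of_dist_ne_zero (by rw [h2]; omega :
      (CayleyGraph q θ).dist x y ≠ 0)
    rw [h2] at hp
    obtain ⟨z, hz1, hz2⟩ := walk_len2 p hp
    exact hxy (mid_eq hq hF hθ hz1 hz2 hH)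
  -- dist = 3 sufficiency
  have main3 : ∀ x y : ZMod (q ^ 2 - 1), x ≠ y → x + y ∉ BoseChowla q θ →
      x - y ∈ AddSubgroup.zmultiples ((q : ZMod (q ^ 2 - 1)) + 1) →
      (CayleyGraph q θ).dist x y = 3 := by
    intro x y hxy hA hH
    have hq3 : 3 ≤ q := by
      by_contra hcon
      have hq2' : q = 2 := by omega
      subst hq2'
      have hdvd := (Hdvd (by norm_num)).mp hH
      have hlt : (x - y).val < 2 ^ 2 - 1 := ZMod.val_lt _
      have hne : (x - y).val ≠ 0 := by
        intro h0
        apply hxy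
        have : x - y = 0 := by
          have := (ZMod.val_eq_zero _).mp h0
          exact this
        exact sub_eq_zero.mp this
      norm_num at hdvd hlt
      omega
    -- three fixed elements
    have h0K : (0 : F) ^ q = 0 := zero_pow (by omega)
    have h1K : (1 : F) ^ q = 1 := one_pow q
    have hθq1K : (θ ^ (q + 1)) ^ q = θ ^ (q + 1) := by
      rw [← pow_mul, pow_eq_pow_iff' hq2 hθ]
      have h1 : (q + 1) * q = (q ^ 2 - 1) + (q + 1) := by
        have : (q + 1) * q = q ^ 2 + q := by ring
        have h4 := qsq_ge hq2
        omega
      rw [h1]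
      exact Nat.add_modEq_left
    have getA : ∀ c : F, c ^ q = c →
        ∃ a, a ∈ BoseChowla q θ ∧ θ ^ a.val = θ + c := by
      intro c hc
      obtain ⟨a, ha⟩ := dlog hq2 hF hθ (theta_add_ne_zero hq hF hθ hc)
      refine ⟨a, ?_, ha⟩
      rw [mem_A, ha, show θ + c - θ = c from by ring]
      exact hc
    obtain ⟨a₁, ha₁, hv₁⟩ := getA 0 h0K
    obtain ⟨a₂, ha₂, hv₂⟩ := getA 1 h1K
    obtain ⟨a₃, ha₃, hv₃⟩ := getA (θ ^ (q + 1)) hθq1K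
    have hc31 : (θ : F) ^ (q + 1) ≠ 0 := pow_ne_zero _ hθ0
    have hc32 : (θ : F) ^ (q + 1) ≠ 1 := by
      intro h
      have h2 := orderOf_dvd_of_pow_eq_one h
      rw [hθ] at h2
      have h3 := Nat.le_of_dvd (by omega) h2
      have h4 : q + 2 < q ^ 2 := by nlinarith
      omega
    have h12 : a₁ ≠ a₂ := by
      intro h; rw [h, hv₂] at hv₁
      have := add_left_cancel hv₁
      exact one_ne_zero this
    have h13 : a₁ ≠ a₃ := by
      intro h; rw [h, hv₃] at hv₁
      have := add_left_cancel hv₁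
      exact hc31 this
    have h23 : a₂ ≠ a₃ := by
      intro h; rw [h, hv₃] at hv₂
      have := add_left_cancel hv₂
      exact hc32 this
    -- find a good element of A
    have key : ∀ i j : ZMod (q ^ 2 - 1), i ∈ BoseChowla q θ → j ∈ BoseChowla q θ →
        i - (x + y) ∈ AddSubgroup.zmultiples ((q : ZMod (q ^ 2 - 1)) + 1) →
        j - (x + y) ∈ AddSubgroup.zmultiples ((q : ZMod (q ^ 2 - 1)) + 1) → i = j := by
      intro i j hi hj hhi hhj
      apply sidon hq hF hθ hi hj
      have : i - j = (i - (x + y)) - (j - (x + y)) := by ring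
      rw [this]
      exact AddSubgroup.sub_mem _ hhi hhj
    have hgood : ∃ a, a ∈ BoseChowla q θ ∧
        a - (x + y) ∉ AddSubgroup.zmultiples ((q : ZMod (q ^ 2 - 1)) + 1) ∧ a ≠ x + x := by
      by_contra hcon
      push_neg at hcon
      have P : ∀ a : ZMod (q ^ 2 - 1), a ∈ BoseChowla q θ →
          a - (x + y) ∈ AddSubgroup.zmultiples ((q : ZMod (q ^ 2 - 1)) + 1) ∨ a = x + x := by
        intro a ha
        by_cases h : a - (x + y) ∈ AddSubgroup.zmultiples ((q : ZMod (q ^ 2 - 1)) + 1)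
        · exact Or.inl h
        · exact Or.inr (hcon a ha h)
      rcases P a₁ ha₁ with p1 | p1 <;> rcases P a₂ ha₂ with p2 | p2 <;>
        rcases P a₃ ha₃ with p3 | p3
      · exact h12 (key _ _ ha₁ ha₂ p1 p2)
      · exact h12 (key _ _ ha₁ ha₂ p1 p2)
      · exact h13 (key _ _ ha₁ ha₃ p1 p3)
      · exact h23 (p2.trans p3.symm)
      · exact h23 (key _ _ ha₂ ha₃ p2 p3)
      · exact h13 (p1.trans p3.symm)
      · exact h12 (p1.trans p2.symm)
      · exact h12 (p1.trans p2.symm)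
    obtain ⟨a, haA, hH1, hax⟩ := hgood
    set z := a - x with hzdef
    have hz1 : x + z = a := by rw [hzdef]; ring
    have hzx : x ≠ z := by
      intro h
      apply hax
      rw [← hz1, ← h]
    have hzy : z ≠ y := by
      intro h
      apply hA
      have : x + y = a := by rw [← hz1, h]
      rw [this]; exact haA
    have hzyH : z - y ∉ AddSubgroup.zmultiples ((q : ZMod (q ^ 2 - 1)) + 1) := by
      intro h
      apply hH1
      have : a - (x + y) = z - y := by rw [hzdef]; ring
      rwa [this]
    have hzyA : z + y ∉ BoseChowla q θ := by
      intro hbA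
      have hsub : a - (z + y) = x - y := by rw [hzdef]; ring
      have heq := sidon hq hF hθ haA hbA (by rw [hsub]; exact hH)
      apply hxy
      have : x + z = y + z := by rw [hz1, heq]; ring
      exact add_right_cancel this
    have hd2 := main2 z y hzy hzyA hzyH
    obtain ⟨p2, hp2⟩ := SimpleGraph.exists_walk_of_dist_ne_zero (by rw [hd2]; omega :
      (CayleyGraph q θ).dist z y ≠ 0)
    rw [hd2] at hp2
    have hadj1 : (CayleyGraph q θ).Adj x z := adj_iff.mpr ⟨hzx, by rw [hz1]; exact haA⟩
    have p : (CayleyGraph q θ).Walk x y := .cons hadj1 p2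
    have hle : (CayleyGraph q θ).dist x y ≤ 3 := by
      have h' := SimpleGraph.dist_le (SimpleGraph.Walk.cons hadj1 p2)
      rw [SimpleGraph.Walk.length_cons, hp2] at h'
      exact h' 
    have hne0 : (CayleyGraph q θ).dist x y ≠ 0 :=
      SimpleGraph.dist_ne_zero_iff_ne_and_reachable.mpr ⟨hxy, ⟨p⟩⟩
    have hne1 : (CayleyGraph q θ).dist x y ≠ 1 := by
      intro h
      exact hA (adj_iff.mp (SimpleGraph.dist_eq_one_iff_adj.mp h)).2
    have hne2 := no2 x y hxy hH
    omega
  intro x y hxy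
  constructor
  · constructor
    · intro h2
      have hA : x + y ∉ BoseChowla q θ := by
        intro hA
        have := SimpleGraph.dist_eq_one_iff_adj.mpr (adj_iff.mpr ⟨hxy, hA⟩)
        omega
      refine ⟨hA, fun hH => no2 x y hxy hH h2⟩
    · rintro ⟨h1, h2⟩
      exact main2 x y hxy h1 h2
  · constructor
    · intro h3
      have hA : x + y ∉ BoseChowla q θ := by
        intro hA
        have := SimpleGraph.dist_eq_one_iff_adj.mpr (adj_iff.mpr ⟨hxy, hA⟩)
        omega
      refine ⟨hA, ?_⟩
      by_contra hH
      have := main2 x y hxy hA hH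
      omega
    · rintro ⟨h1, h2⟩
      exact main3 x y hxy h1 h2
end

section
/- Any two distinct vertices lying in the subgroup H = ⟨q+1⟩ are at distance exactly 3 in G_{q,θ}. -/
lemma exists_pow_ringHom {q : ℕ} (hq : IsPrimePow q) (F : Type*) [Field F] [Fintype F]
    (hF : Fintype.card F = q ^ 2) : ∃ φ : F →+* F, ∀ x, φ x = x ^ q := by
  obtain ⟨p, k, hp, hk, hpk⟩ := hq
  rw [← Nat.prime_iff] at hp
  haveI : CharP F (ringChar F) := ringChar.charP F
  have hr : (ringChar F).Prime := CharP.char_is_prime F (ringChar F)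
  obtain ⟨m, hm, hcard⟩ := FiniteField.card F (ringChar F)
  have hpq : p = ringChar F := by
    have h1 : p ^ (2 * k) = ringChar F ^ (m : ℕ) := by
      rw [mul_comm, pow_mul, hpk, ← hF, hcard]
    have hdvd : p ∣ ringChar F ^ (m : ℕ) := by
      rw [← h1]
      exact dvd_pow_self p (by omega)
    exact ((Nat.prime_dvd_prime_iff_eq hp hm).mp (hp.dvd_of_dvd_pow hdvd))
  subst hpq
  haveI : ExpChar F (ringChar F) := ExpChar.prime hr
  exact ⟨iterateFrobenius F (ringChar F) k, fun x => by rw [iterateFrobenius_def, hpk]⟩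

section Aux
variable {F : Type*} [Field F] {n : ℕ} {θ : F}

lemma pow_val_add [NeZero n] (h : orderOf θ = n) (a b : ZMod n) :
    θ ^ (a + b).val = θ ^ a.val * θ ^ b.val := by
  have h2 := pow_mod_orderOf θ (a.val + b.val)
  rw [h] at h2
  rw [ZMod.val_add, h2, pow_add]

lemma pow_val_inj [NeZero n] (h : orderOf θ = n) {a b : ZMod n}
    (hab : θ ^ a.val = θ ^ b.val) : a = b := by
  apply ZMod.val_injective
  exact pow_injOn_Iio_orderOf (by rw [h]; exact a.val_lt) (by rw [h]; exact b.val_lt) hab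

lemma pow_val_surj [NeZero n] [Fintype F] (h : orderOf θ = n) (hcard : Fintype.card F = n + 1)
    {v : F} (hv : v ≠ 0) : ∃ a : ZMod n, θ ^ a.val = v := by
  have hn : 0 < n := Nat.pos_of_ne_zero (NeZero.ne n)
  have hθ0 : θ ≠ 0 := by
    intro h0
    have h1 := pow_orderOf_eq_one θ
    rw [h, h0, zero_pow (by omega)] at h1
    exact zero_ne_one h1
  set θu : Fˣ := Units.mk0 θ hθ0 with hθu
  have hou : orderOf θu = n := by rw [← orderOf_units, hθu, Units.val_mk0, h]
  set g : ZMod n → Fˣ := fun a => θu ^ a.val with hg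
  have hginj : Function.Injective g := by
    intro a b hab
    apply ZMod.val_injective
    exact pow_injOn_Iio_orderOf (by rw [hou]; exact a.val_lt) (by rw [hou]; exact b.val_lt) hab
  have hbij : Function.Bijective g := by
    rw [Nat.bijective_iff_injective_and_card]
    refine ⟨hginj, ?_⟩
    rw [Nat.card_zmod, Nat.card_units, Nat.card_eq_fintype_card, hcard]
    omega
  obtain ⟨a, ha⟩ := hbij.2 (Units.mk0 v hv)
  refine ⟨a, ?_⟩
  have := congrArg (Units.val) ha
  simpa [hg, hθu] using this

end Aux

theorem subgroup_distance_three (q : ℕ) (hq : IsPrimePow q) (F : Type*) [Field F]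
    [Fintype F] (hF : Fintype.card F = q ^ 2) (θ : F) (hθ : orderOf θ = q ^ 2 - 1) :
    ∀ x ∈ AddSubgroup.zmultiples ((q : ZMod (q ^ 2 - 1)) + 1),
      ∀ y ∈ AddSubgroup.zmultiples ((q : ZMod (q ^ 2 - 1)) + 1),
        x ≠ y → (CayleyGraph q θ).dist x y = 3 := by
  intro x hx y hy hxy
  obtain ⟨φ, hφ⟩ := exists_pow_ringHom hq F hF
  have hq2 : 2 ≤ q := hq.two_le
  have hq4 : 2 * q ≤ q ^ 2 := by nlinarith
  have hq4' : 4 ≤ q ^ 2 := by nlinarith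
  haveI : NeZero (q ^ 2 - 1) := ⟨by omega⟩
  have hcard' : Fintype.card F = (q ^ 2 - 1) + 1 := by rw [hF]; omega
  have hθn : θ ^ (q ^ 2 - 1) = 1 := by rw [← hθ]; exact pow_orderOf_eq_one θ
  have hθ0 : θ ≠ 0 := by
    intro h0
    rw [h0, zero_pow (by omega)] at hθn
    exact zero_ne_one hθn
  have hθq : θ ^ q ≠ θ := by
    intro hcon
    have h1 : θ ^ q = θ ^ (1 : ℕ) := by simpa using hcon
    have h2 := pow_injOn_Iio_orderOf (x := θ)
      (by rw [hθ]; exact Set.mem_Iio.mpr (by omega)) (by rw [hθ]; exact Set.mem_Iio.mpr (by omega)) h1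
    omega
  -- independence over the fixed field
  have hindep : ∀ c d : F, φ c = c → φ d = d → c * θ = d → c = 0 ∧ d = 0 := by
    intro c d hc hd hcd
    have h2 : c * θ ^ q = d := by
      have h3 := congrArg φ hcd
      rwa [map_mul, hc, hφ θ, hd] at h3
    have hc0 : c = 0 := by
      by_contra h0
      exact hθq (mul_left_cancel₀ h0 (h2.trans hcd.symm))
    exact ⟨hc0, by rw [← hcd, hc0, zero_mul]⟩
  -- powers indexed by the subgroup are fixed
  have hfactor : (q + 1) * (q - 1) = q ^ 2 - 1 := by
    obtain ⟨d, rfl⟩ : ∃ d, q = d + 2 := ⟨q - 2, by omega⟩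
    have h1 : d + 2 - 1 = d + 1 := by omega
    have h2 : (d + 2) ^ 2 = (d + 2 + 1) * (d + 1) + 1 := by ring
    rw [h1]
    omega
  have hHfix : ∀ h : ZMod (q ^ 2 - 1), h ∈ AddSubgroup.zmultiples ((q : ZMod (q ^ 2 - 1)) + 1) →
      φ (θ ^ h.val) = θ ^ h.val := by
    intro h hh
    obtain ⟨m, hm⟩ := AddSubgroup.mem_zmultiples_iff.mp hh
    have hdvd1 : (q + 1) ∣ (q ^ 2 - 1) := ⟨q - 1, hfactor.symm⟩
    have hcast : ((h.val : ℕ) : ZMod (q + 1)) = 0 := by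
      have h5 : (ZMod.castHom hdvd1 (ZMod (q + 1))) h = 0 := by
        rw [← hm, map_zsmul, map_add, map_natCast, map_one]
        simp
      rwa [ZMod.castHom_apply, ← ZMod.natCast_val] at h5
    have hdvd2 : (q + 1) ∣ h.val := by rwa [ZMod.natCast_eq_zero_iff] at hcast
    have hdvd3 : (q ^ 2 - 1) ∣ h.val * (q - 1) := by
      obtain ⟨c, hc⟩ := hdvd2
      exact ⟨c, by rw [hc, ← hfactor]; ring⟩
    have h1 : θ ^ (h.val * (q - 1)) = 1 :=
      orderOf_dvd_iff_pow_eq_one.mp (by rw [hθ]; exact hdvd3)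
    rw [hφ, ← pow_mul]
    have hexp : h.val * q = h.val + h.val * (q - 1) := by
      have h6 : q = 1 + (q - 1) := by omega
      calc h.val * q = h.val * (1 + (q - 1)) := by rw [← h6]
        _ = h.val + h.val * (q - 1) := by ring
    rw [hexp, pow_add, h1, mul_one]
  -- membership characterization
  have hA : ∀ a : ZMod (q ^ 2 - 1), a ∈ BoseChowla q θ ↔
      φ (θ ^ a.val - θ) = θ ^ a.val - θ := by
    intro a; rw [BoseChowla, Set.mem_setOf_eq, hφ]
  -- the subgroup misses the Bose-Chowla set
  have hHA : ∀ h ∈ AddSubgroup.zmultiples ((q : ZMod (q ^ 2 - 1)) + 1),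
      h ∉ BoseChowla q θ := by
    intro h hh hmem
    rw [hA, map_sub, hHfix h hh] at hmem
    have h7 : φ θ = θ := sub_right_injective hmem
    rw [hφ] at h7
    exact hθq h7
  -- differences of Bose-Chowla elements avoid the subgroup
  have hDiff : ∀ a b : ZMod (q ^ 2 - 1), a ∈ BoseChowla q θ → b ∈ BoseChowla q θ →
      (a - b) ∈ AddSubgroup.zmultiples ((q : ZMod (q ^ 2 - 1)) + 1) → a = b := by
    intro a b ha hb hab
    have hv : φ (θ ^ (a - b).val) = θ ^ (a - b).val := hHfix _ hab
    have hs : φ (θ ^ a.val - θ) = θ ^ a.val - θ := (hA a).mp ha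
    have ht : φ (θ ^ b.val - θ) = θ ^ b.val - θ := (hA b).mp hb
    have hfab : θ ^ a.val = θ ^ (a - b).val * θ ^ b.val := by
      rw [← pow_val_add hθ (a - b) b]
      congr 1
      ring
    have hkey : (1 - θ ^ (a - b).val) * θ =
        θ ^ (a - b).val * (θ ^ b.val - θ) - (θ ^ a.val - θ) := by
      linear_combination hfab
    obtain ⟨h10, -⟩ := hindep _ _
      (by rw [map_sub, map_one, hv]) (by rw [map_sub, map_mul, hv, ht, hs]) hkey
    have hv1 : θ ^ (a - b).val = 1 := by linear_combination -h10
    rw [hv1, one_mul] at hfab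
    exact pow_val_inj hθ hfab
  -- adjacency helpers
  have hadj_mem : ∀ u v : ZMod (q ^ 2 - 1), (CayleyGraph q θ).Adj u v →
      u + v ∈ BoseChowla q θ := by
    intro u v huv
    rw [CayleyGraph, SimpleGraph.fromRel_adj] at huv
    rcases huv.2 with h | h
    · exact h
    · rwa [add_comm]
  have hadj : ∀ u v : ZMod (q ^ 2 - 1), u ≠ v → u + v ∈ BoseChowla q θ →
      (CayleyGraph q θ).Adj u v := by
    intro u v h1 h2
    rw [CayleyGraph, SimpleGraph.fromRel_adj]
    exact ⟨h1, Or.inl h2⟩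
  -- the fixed field does not contain -θ
  have hfixne : ∀ z : F, φ z = z → θ + z ≠ 0 := by
    intro z hz h0
    have h1 : θ = -z := by linear_combination h0
    apply hθq
    rw [← hφ, h1, map_neg, hz]
  -- notation for the key field constants
  have hθq2 : θ ^ q ^ 2 = θ := by
    rw [show q ^ 2 = (q ^ 2 - 1) + 1 by omega, pow_add, hθn, pow_one, one_mul]
  have hσfix : φ (θ + θ ^ q) = θ + θ ^ q := by
    rw [map_add, map_pow, hφ, ← pow_mul, ← pow_two, hθq2, add_comm]
  have hπfix : φ (θ * θ ^ q) = θ * θ ^ q := by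
    rw [map_mul, map_pow, hφ, ← pow_mul, ← pow_two, hθq2, mul_comm]
  have hπ0 : θ * θ ^ q ≠ 0 := mul_ne_zero hθ0 (pow_ne_zero _ hθ0)
  have hxyH : x + y ∈ AddSubgroup.zmultiples ((q : ZMod (q ^ 2 - 1)) + 1) := add_mem hx hy
  have hwfix : φ (θ ^ (x + y).val) = θ ^ (x + y).val := hHfix _ hxyH
  have hw0 : θ ^ (x + y).val ≠ 0 := pow_ne_zero _ hθ0
  -- choose b and c
  have htfix : φ (-(θ * θ ^ q) * (θ ^ (x + y).val)⁻¹) =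
      -(θ * θ ^ q) * (θ ^ (x + y).val)⁻¹ := by
    rw [map_mul, map_neg, map_inv₀, hπfix, hwfix]
  have hufix : φ (θ ^ (x + y).val - (θ + θ ^ q)) = θ ^ (x + y).val - (θ + θ ^ q) := by
    rw [map_sub, hwfix, hσfix]
  obtain ⟨b, hb⟩ := pow_val_surj hθ hcard' (hfixne _ htfix)
  obtain ⟨c, hc⟩ := pow_val_surj hθ hcard' (hfixne _ hufix)
  haveI : Fact (1 < q ^ 2 - 1) := ⟨by omega⟩
  have hfa : θ ^ (1 : ZMod (q ^ 2 - 1)).val = θ := by rw [ZMod.val_one]; exact pow_one θ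
  -- memberships
  have hamem : (1 : ZMod (q ^ 2 - 1)) ∈ BoseChowla q θ := by
    rw [hA, hfa, sub_self, map_zero]
  have hbmem : b ∈ BoseChowla q θ := by
    rw [hA, hb, add_sub_cancel_left, htfix]
  have hcmem : c ∈ BoseChowla q θ := by
    rw [hA, hc, add_sub_cancel_left, hufix]
  -- the key sum identity
  have habc : (1 : ZMod (q ^ 2 - 1)) - b + c = x + y := by
    apply pow_val_inj hθ
    have e1 : θ ^ ((1 : ZMod (q ^ 2 - 1)) - b + c + b).val = θ ^ (x + y + b).val := by
      have e2 : (1 : ZMod (q ^ 2 - 1)) - b + c + b = 1 + c := by ring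
      rw [e2, pow_val_add hθ 1 c, pow_val_add hθ (x + y) b, hfa, hb, hc]
      field_simp
      ring
    have e3 := e1
    rw [pow_val_add hθ ((1 : ZMod (q ^ 2 - 1)) - b + c) b, pow_val_add hθ (x + y) b] at e3
    exact mul_right_cancel₀ (pow_ne_zero _ hθ0) e3
  -- the three adjacencies
  have adj1 : (CayleyGraph q θ).Adj x (1 - x) := by
    apply hadj
    · intro h0
      have h1 : x + x = (1 : ZMod (q ^ 2 - 1)) := by linear_combination h0
      exact hHA _ (add_mem hx hx) (by rw [h1]; exact hamem)
    · rw [show x + (1 - x) = 1 by ring]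
      exact hamem
  have adj2 : (CayleyGraph q θ).Adj (1 - x) (b - 1 + x) := by
    apply hadj
    · intro heq
      -- b + (x + x) = 1 + 1
      have hb2 : b + (x + x) = 1 + 1 := by linear_combination -heq
      have hfb2 : θ ^ b.val * θ ^ (x + x).val = θ * θ := by
        have h8 := congrArg (fun z : ZMod (q ^ 2 - 1) => θ ^ z.val) hb2
        rw [pow_val_add hθ b (x + x), pow_val_add hθ 1 1, hfa] at h8
        exact h8
      rw [hb] at hfb2
      have hXfix : φ (θ ^ (x + x).val) = θ ^ (x + x).val := hHfix _ (add_mem hx hx)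
      have hc1 : (θ ^ (x + x).val - (θ + θ ^ q)) * θ =
          -(θ ^ (x + x).val * (-(θ * θ ^ q) * (θ ^ (x + y).val)⁻¹) + θ * θ ^ q) := by
        linear_combination hfb2
      obtain ⟨h10, h20⟩ := hindep _ _
        (by rw [map_sub, hXfix, hσfix])
        (by rw [map_neg, map_add, map_mul, hXfix, htfix, hπfix]) hc1
      -- from h20 : X = w ; from h10 : X = σ
      have h30 : (θ ^ (x + x).val * (θ ^ (x + y).val)⁻¹ - 1) * (θ * θ ^ q) = 0 := by
        have hww : (θ ^ (x + y).val) * (θ ^ (x + y).val)⁻¹ = 1 := mul_inv_cancel₀ hw0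
        linear_combination h20
      have h40 : θ ^ (x + x).val * (θ ^ (x + y).val)⁻¹ = 1 := by
        rcases mul_eq_zero.mp h30 with h | h
        · linear_combination h
        · exact absurd h hπ0
      have h50 : θ ^ (x + x).val = θ ^ (x + y).val := (mul_inv_eq_one₀ hw0).mp h40
      have h60 : x + x = x + y := pow_val_inj hθ h50
      exact hxy (by linear_combination h60)
    · rw [show (1 - x) + (b - 1 + x) = b by ring]
      exact hbmem
  have adj3 : (CayleyGraph q θ).Adj (b - 1 + x) y := by
    apply hadj
    · intro heq
      have h1 : y + y = c := by linear_combination -habc - heq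
      exact hHA _ (add_mem hy hy) (by rw [h1]; exact hcmem)
    · rw [show (b - 1 + x) + y = c by linear_combination -habc]
      exact hcmem
  -- the walk of length 3
  let W : (CayleyGraph q θ).Walk x y :=
    SimpleGraph.Walk.cons adj1 (SimpleGraph.Walk.cons adj2
      (SimpleGraph.Walk.cons adj3 SimpleGraph.Walk.nil))
  have hWlen : W.length = 3 := by
    simp [W, SimpleGraph.Walk.length_cons]
  have hdle : (CayleyGraph q θ).dist x y ≤ 3 := by
    have := SimpleGraph.dist_le W
    omega
  -- no shorter walk exists
  obtain ⟨P, hP⟩ := (SimpleGraph.Reachable.exists_walk_length_eq_dist ⟨W⟩ :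
    ∃ p : (CayleyGraph q θ).Walk x y, p.length = (CayleyGraph q θ).dist x y)
  have h3le : 3 ≤ P.length := by
    cases P with
    | nil => exact absurd rfl hxy
    | cons h1 P' =>
      rename_i v1
      cases P' with
      | nil => exact absurd (hadj_mem _ _ h1) (hHA _ hxyH)
      | cons h2 P'' =>
        rename_i v2
        cases P'' with
        | nil =>
          have ha' := hadj_mem _ _ h1
          have hb' := hadj_mem _ _ h2
          have hmemH : (x + v1) - (v1 + y) ∈
              AddSubgroup.zmultiples ((q : ZMod (q ^ 2 - 1)) + 1) := by
            rw [show (x + v1) - (v1 + y) = x - y by ring]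
            exact sub_mem hx hy
          have := hDiff _ _ ha' hb' hmemH
          exact absurd (by linear_combination this : x = y) hxy
        | cons h3 P''' =>
          simp only [SimpleGraph.Walk.length_cons]
          omega
  omega
end

section
/- Suppose 1 ≤ i < j < k ≤ q satisfy i + j = k, and let s ≠ t with 0 ≤ s,t ≤ q-2 satisfy s + t ≡ -(m_i + m_j - m_k) (mod q-1), where a_ℓ = ℓ + m_ℓ(q+1) are the elements of A(q,θ). Then a_i + a_j + (s+t)(q+1) ∈ A(q,θ), and consequently the six vertices u₁ = a_i + s(q+1), v₁ = a_i + t(q+1), u₂ = a_j + s(q+1), v₂ = a_j + t(q+1), w₁ = (q-1-s)(q+1), w₂ = (q-1-t)(q+1) form a 6-cycle u₁w₁u₂v₁w₂v₂ in G_{q,θ}. -/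
theorem six_cycle (q : ℕ) (hq : IsPrimePow q) (hq4 : 4 ≤ q) (F : Type*) [Field F]
    [Fintype F] (hF : Fintype.card F = q ^ 2) (θ : F) (hθ : orderOf θ = q ^ 2 - 1)
    (m : ℕ → ℕ) (hm : ∀ ℓ, 1 ≤ ℓ → ℓ ≤ q → m ℓ ≤ q - 2)
    (ha : ∀ ℓ, 1 ≤ ℓ → ℓ ≤ q →
      ((ℓ + m ℓ * (q + 1) : ℕ) : ZMod (q ^ 2 - 1)) ∈ BoseChowla q θ)
    (i j k s t : ℕ) (hi : 1 ≤ i) (hij : i < j) (hjk : j < k) (hkq : k ≤ q)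
    (hijk : i + j = k) (hst : s ≠ t) (hs : s ≤ q - 2) (ht : t ≤ q - 2)
    (hcong : Int.ModEq ((q : ℤ) - 1) ((s : ℤ) + t) (-((m i : ℤ) + (m j : ℤ) - (m k : ℤ)))) :
    (((i + m i * (q + 1)) + (j + m j * (q + 1)) + (s + t) * (q + 1) : ℕ) :
        ZMod (q ^ 2 - 1)) ∈ BoseChowla q θ ∧
    ∀ u₁ v₁ u₂ v₂ w₁ w₂ : ZMod (q ^ 2 - 1),
      u₁ = ((i + m i * (q + 1) + s * (q + 1) : ℕ) : ZMod (q ^ 2 - 1)) →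
      v₁ = ((i + m i * (q + 1) + t * (q + 1) : ℕ) : ZMod (q ^ 2 - 1)) →
      u₂ = ((j + m j * (q + 1) + s * (q + 1) : ℕ) : ZMod (q ^ 2 - 1)) →
      v₂ = ((j + m j * (q + 1) + t * (q + 1) : ℕ) : ZMod (q ^ 2 - 1)) →
      w₁ = (((q - 1 - s) * (q + 1) : ℕ) : ZMod (q ^ 2 - 1)) →
      w₂ = (((q - 1 - t) * (q + 1) : ℕ) : ZMod (q ^ 2 - 1)) →
        [u₁, w₁, u₂, v₁, w₂, v₂].Nodup ∧
        (CayleyGraph q θ).Adj u₁ w₁ ∧ (CayleyGraph q θ).Adj w₁ u₂ ∧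
        (CayleyGraph q θ).Adj u₂ v₁ ∧ (CayleyGraph q θ).Adj v₁ w₂ ∧
        (CayleyGraph q θ).Adj w₂ v₂ ∧ (CayleyGraph q θ).Adj v₂ u₁ := by
  have hk1 : 1 ≤ k := by omega
  have hsq1 : 1 ≤ q ^ 2 := Nat.one_le_pow _ _ (by omega)
  have hNc : ((q ^ 2 - 1 : ℕ) : ℤ) = ((q : ℤ) - 1) * ((q : ℤ) + 1) := by
    rw [Nat.cast_sub hsq1]; push_cast; ring
  have key : ∀ a b : ℕ, ((q ^ 2 - 1 : ℕ) : ℤ) ∣ (b : ℤ) - (a : ℤ) →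
      ((a : ZMod (q ^ 2 - 1)) = (b : ZMod (q ^ 2 - 1))) := by
    intro a b h
    exact (ZMod.natCast_eq_natCast_iff _ _ _).mpr (Nat.modEq_iff_dvd.mpr h)
  have keyrev : ∀ a b : ℕ, ((a : ZMod (q ^ 2 - 1)) = (b : ZMod (q ^ 2 - 1))) →
      ((q ^ 2 - 1 : ℕ) : ℤ) ∣ (b : ℤ) - (a : ℤ) := by
    intro a b h
    exact Nat.modEq_iff_dvd.mp ((ZMod.natCast_eq_natCast_iff _ _ _).mp h)
  obtain ⟨c, hc⟩ := hcong.dvd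
  have hk' : (k : ℤ) = (i : ℤ) + (j : ℤ) := by omega
  have e1 : ((q - 1 - s : ℕ) : ℤ) = (q : ℤ) - 1 - s := by omega
  have e2 : ((q - 1 - t : ℕ) : ℤ) = (q : ℤ) - 1 - t := by omega
  have hmem : (((i + m i * (q + 1)) + (j + m j * (q + 1)) + (s + t) * (q + 1) : ℕ) :
      ZMod (q ^ 2 - 1)) = ((k + m k * (q + 1) : ℕ) : ZMod (q ^ 2 - 1)) := by
    apply key
    refine ⟨c, ?_⟩
    rw [hNc]
    push_cast
    linear_combination ((q : ℤ) + 1) * hc + hk'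
  constructor
  · rw [hmem]; exact ha k hk1 hkq
  intro u₁ v₁ u₂ v₂ w₁ w₂ h1 h2 h3 h4 h5 h6
  subst h1 h2 h3 h4 h5 h6
  -- cross-class distinctness machinery
  have hq1dvdN : (q + 1) ∣ (q ^ 2 - 1) := by
    refine ⟨q - 1, ?_⟩
    have h := Nat.sq_sub_sq q 1
    simpa using h
  have crossNe : ∀ a b : ℕ, ¬ (a % (q + 1) = b % (q + 1)) →
      (a : ZMod (q ^ 2 - 1)) ≠ (b : ZMod (q ^ 2 - 1)) := by
    intro a b hab h
    exact hab (Nat.ModEq.of_dvd hq1dvdN ((ZMod.natCast_eq_natCast_iff _ _ _).mp h))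
  have him : i % (q + 1) = i := Nat.mod_eq_of_lt (by omega)
  have hjm : j % (q + 1) = j := Nat.mod_eq_of_lt (by omega)
  have within : ∀ x : ℤ, ((q ^ 2 - 1 : ℕ) : ℤ) ∣ x * ((q : ℤ) + 1) →
      -((q : ℤ) - 1) < x → x < (q : ℤ) - 1 → x = 0 := by
    intro x hx hl hr
    rw [hNc] at hx
    have hdq : ((q : ℤ) - 1) ∣ x :=
      (mul_dvd_mul_iff_right (by omega : ((q : ℤ) + 1) ≠ 0)).mp hx
    exact Int.eq_zero_of_abs_lt_dvd hdq (abs_lt.mpr ⟨hl, hr⟩)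
  -- the fifteen inequalities
  have n12 : ((i + m i * (q + 1) + s * (q + 1) : ℕ) : ZMod (q ^ 2 - 1)) ≠
      (((q - 1 - s) * (q + 1) : ℕ) : ZMod (q ^ 2 - 1)) :=
    crossNe _ _ (by simp [Nat.add_mul_mod_self_right, Nat.mul_mod_left, him] <;> omega)
  have n13 : ((i + m i * (q + 1) + s * (q + 1) : ℕ) : ZMod (q ^ 2 - 1)) ≠
      ((j + m j * (q + 1) + s * (q + 1) : ℕ) : ZMod (q ^ 2 - 1)) :=
    crossNe _ _ (by simp [Nat.add_mul_mod_self_right, him, hjm] <;> omega)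
  have n14 : ((i + m i * (q + 1) + s * (q + 1) : ℕ) : ZMod (q ^ 2 - 1)) ≠
      ((i + m i * (q + 1) + t * (q + 1) : ℕ) : ZMod (q ^ 2 - 1)) := by
    intro h
    have hd := keyrev _ _ h
    have hd' : ((q ^ 2 - 1 : ℕ) : ℤ) ∣ ((t : ℤ) - (s : ℤ)) * ((q : ℤ) + 1) := by
      have e : ((i + m i * (q + 1) + t * (q + 1) : ℕ) : ℤ) -
          ((i + m i * (q + 1) + s * (q + 1) : ℕ) : ℤ) =
          ((t : ℤ) - (s : ℤ)) * ((q : ℤ) + 1) := by push_cast; ring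
      rwa [e] at hd
    have := within _ hd' (by omega) (by omega)
    omega
  have n15 : ((i + m i * (q + 1) + s * (q + 1) : ℕ) : ZMod (q ^ 2 - 1)) ≠
      (((q - 1 - t) * (q + 1) : ℕ) : ZMod (q ^ 2 - 1)) :=
    crossNe _ _ (by simp [Nat.add_mul_mod_self_right, Nat.mul_mod_left, him] <;> omega)
  have n16 : ((i + m i * (q + 1) + s * (q + 1) : ℕ) : ZMod (q ^ 2 - 1)) ≠
      ((j + m j * (q + 1) + t * (q + 1) : ℕ) : ZMod (q ^ 2 - 1)) :=
    crossNe _ _ (by simp [Nat.add_mul_mod_self_right, him, hjm] <;> omega)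
  have n23 : (((q - 1 - s) * (q + 1) : ℕ) : ZMod (q ^ 2 - 1)) ≠
      ((j + m j * (q + 1) + s * (q + 1) : ℕ) : ZMod (q ^ 2 - 1)) :=
    crossNe _ _ (by simp [Nat.add_mul_mod_self_right, Nat.mul_mod_left, hjm] <;> omega)
  have n24 : (((q - 1 - s) * (q + 1) : ℕ) : ZMod (q ^ 2 - 1)) ≠
      ((i + m i * (q + 1) + t * (q + 1) : ℕ) : ZMod (q ^ 2 - 1)) :=
    crossNe _ _ (by simp [Nat.add_mul_mod_self_right, Nat.mul_mod_left, him] <;> omega)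
  have n25 : (((q - 1 - s) * (q + 1) : ℕ) : ZMod (q ^ 2 - 1)) ≠
      (((q - 1 - t) * (q + 1) : ℕ) : ZMod (q ^ 2 - 1)) := by
    intro h
    have hd := keyrev _ _ h
    have hd' : ((q ^ 2 - 1 : ℕ) : ℤ) ∣ ((s : ℤ) - (t : ℤ)) * ((q : ℤ) + 1) := by
      have e : (((q - 1 - t) * (q + 1) : ℕ) : ℤ) - (((q - 1 - s) * (q + 1) : ℕ) : ℤ) =
          ((s : ℤ) - (t : ℤ)) * ((q : ℤ) + 1) := by push_cast [e1, e2]; ring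
      rwa [e] at hd
    have := within _ hd' (by omega) (by omega)
    omega
  have n26 : (((q - 1 - s) * (q + 1) : ℕ) : ZMod (q ^ 2 - 1)) ≠
      ((j + m j * (q + 1) + t * (q + 1) : ℕ) : ZMod (q ^ 2 - 1)) :=
    crossNe _ _ (by simp [Nat.add_mul_mod_self_right, Nat.mul_mod_left, hjm] <;> omega)
  have n34 : ((j + m j * (q + 1) + s * (q + 1) : ℕ) : ZMod (q ^ 2 - 1)) ≠
      ((i + m i * (q + 1) + t * (q + 1) : ℕ) : ZMod (q ^ 2 - 1)) :=
    crossNe _ _ (by simp [Nat.add_mul_mod_self_right, him, hjm] <;> omega)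
  have n35 : ((j + m j * (q + 1) + s * (q + 1) : ℕ) : ZMod (q ^ 2 - 1)) ≠
      (((q - 1 - t) * (q + 1) : ℕ) : ZMod (q ^ 2 - 1)) :=
    crossNe _ _ (by simp [Nat.add_mul_mod_self_right, Nat.mul_mod_left, hjm] <;> omega)
  have n36 : ((j + m j * (q + 1) + s * (q + 1) : ℕ) : ZMod (q ^ 2 - 1)) ≠
      ((j + m j * (q + 1) + t * (q + 1) : ℕ) : ZMod (q ^ 2 - 1)) := by
    intro h
    have hd := keyrev _ _ h
    have hd' : ((q ^ 2 - 1 : ℕ) : ℤ) ∣ ((t : ℤ) - (s : ℤ)) * ((q : ℤ) + 1) := by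
      have e : ((j + m j * (q + 1) + t * (q + 1) : ℕ) : ℤ) -
          ((j + m j * (q + 1) + s * (q + 1) : ℕ) : ℤ) =
          ((t : ℤ) - (s : ℤ)) * ((q : ℤ) + 1) := by push_cast; ring
      rwa [e] at hd
    have := within _ hd' (by omega) (by omega)
    omega
  have n45 : ((i + m i * (q + 1) + t * (q + 1) : ℕ) : ZMod (q ^ 2 - 1)) ≠
      (((q - 1 - t) * (q + 1) : ℕ) : ZMod (q ^ 2 - 1)) :=
    crossNe _ _ (by simp [Nat.add_mul_mod_self_right, Nat.mul_mod_left, him] <;> omega)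
  have n46 : ((i + m i * (q + 1) + t * (q + 1) : ℕ) : ZMod (q ^ 2 - 1)) ≠
      ((j + m j * (q + 1) + t * (q + 1) : ℕ) : ZMod (q ^ 2 - 1)) :=
    crossNe _ _ (by simp [Nat.add_mul_mod_self_right, him, hjm] <;> omega)
  have n56 : (((q - 1 - t) * (q + 1) : ℕ) : ZMod (q ^ 2 - 1)) ≠
      ((j + m j * (q + 1) + t * (q + 1) : ℕ) : ZMod (q ^ 2 - 1)) :=
    crossNe _ _ (by simp [Nat.add_mul_mod_self_right, Nat.mul_mod_left, hjm] <;> omega)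
  -- the six sum computations
  have hA1 : ((i + m i * (q + 1) + s * (q + 1) + (q - 1 - s) * (q + 1) : ℕ) :
      ZMod (q ^ 2 - 1)) = ((i + m i * (q + 1) : ℕ) : ZMod (q ^ 2 - 1)) := by
    apply key; refine ⟨-1, ?_⟩; rw [hNc]; push_cast [e1]; ring
  have hA2 : (((q - 1 - s) * (q + 1) + (j + m j * (q + 1) + s * (q + 1)) : ℕ) :
      ZMod (q ^ 2 - 1)) = ((j + m j * (q + 1) : ℕ) : ZMod (q ^ 2 - 1)) := by
    apply key; refine ⟨-1, ?_⟩; rw [hNc]; push_cast [e1]; ring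
  have hA3 : ((j + m j * (q + 1) + s * (q + 1) + (i + m i * (q + 1) + t * (q + 1)) : ℕ) :
      ZMod (q ^ 2 - 1)) = ((k + m k * (q + 1) : ℕ) : ZMod (q ^ 2 - 1)) := by
    apply key; refine ⟨c, ?_⟩; rw [hNc]; push_cast
    linear_combination ((q : ℤ) + 1) * hc + hk'
  have hA4 : ((i + m i * (q + 1) + t * (q + 1) + (q - 1 - t) * (q + 1) : ℕ) :
      ZMod (q ^ 2 - 1)) = ((i + m i * (q + 1) : ℕ) : ZMod (q ^ 2 - 1)) := by
    apply key; refine ⟨-1, ?_⟩; rw [hNc]; push_cast [e2]; ring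
  have hA5 : (((q - 1 - t) * (q + 1) + (j + m j * (q + 1) + t * (q + 1)) : ℕ) :
      ZMod (q ^ 2 - 1)) = ((j + m j * (q + 1) : ℕ) : ZMod (q ^ 2 - 1)) := by
    apply key; refine ⟨-1, ?_⟩; rw [hNc]; push_cast [e2]; ring
  have hA6 : ((j + m j * (q + 1) + t * (q + 1) + (i + m i * (q + 1) + s * (q + 1)) : ℕ) :
      ZMod (q ^ 2 - 1)) = ((k + m k * (q + 1) : ℕ) : ZMod (q ^ 2 - 1)) := by
    apply key; refine ⟨c, ?_⟩; rw [hNc]; push_cast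
    linear_combination ((q : ℤ) + 1) * hc + hk'
  have mem1 : ((i + m i * (q + 1) + s * (q + 1) : ℕ) : ZMod (q ^ 2 - 1)) +
      (((q - 1 - s) * (q + 1) : ℕ) : ZMod (q ^ 2 - 1)) ∈ BoseChowla q θ := by
    rw [← Nat.cast_add, hA1]; exact ha i hi (by omega)
  have mem2 : (((q - 1 - s) * (q + 1) : ℕ) : ZMod (q ^ 2 - 1)) +
      ((j + m j * (q + 1) + s * (q + 1) : ℕ) : ZMod (q ^ 2 - 1)) ∈ BoseChowla q θ := by
    rw [← Nat.cast_add, hA2]; exact ha j (by omega) (by omega)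
  have mem3 : ((j + m j * (q + 1) + s * (q + 1) : ℕ) : ZMod (q ^ 2 - 1)) +
      ((i + m i * (q + 1) + t * (q + 1) : ℕ) : ZMod (q ^ 2 - 1)) ∈ BoseChowla q θ := by
    rw [← Nat.cast_add, hA3]; exact ha k hk1 hkq
  have mem4 : ((i + m i * (q + 1) + t * (q + 1) : ℕ) : ZMod (q ^ 2 - 1)) +
      (((q - 1 - t) * (q + 1) : ℕ) : ZMod (q ^ 2 - 1)) ∈ BoseChowla q θ := by
    rw [← Nat.cast_add, hA4]; exact ha i hi (by omega)
  have mem5 : (((q - 1 - t) * (q + 1) : ℕ) : ZMod (q ^ 2 - 1)) +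
      ((j + m j * (q + 1) + t * (q + 1) : ℕ) : ZMod (q ^ 2 - 1)) ∈ BoseChowla q θ := by
    rw [← Nat.cast_add, hA5]; exact ha j (by omega) (by omega)
  have mem6 : ((j + m j * (q + 1) + t * (q + 1) : ℕ) : ZMod (q ^ 2 - 1)) +
      ((i + m i * (q + 1) + s * (q + 1) : ℕ) : ZMod (q ^ 2 - 1)) ∈ BoseChowla q θ := by
    rw [← Nat.cast_add, hA6]; exact ha k hk1 hkq
  refine ⟨?_, ?_, ?_, ?_, ?_, ?_, ?_⟩
  · simp only [List.nodup_cons, List.mem_cons, List.mem_singleton, List.not_mem_nil,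
      not_or, List.nodup_nil, and_true, not_false_eq_true, or_false]
    exact ⟨⟨n12, n13, n14, n15, n16⟩, ⟨n23, n24, n25, n26⟩, ⟨n34, n35, n36⟩, ⟨n45, n46⟩, n56⟩
  · exact (SimpleGraph.fromRel_adj _ _ _).mpr ⟨n12, Or.inl mem1⟩
  · exact (SimpleGraph.fromRel_adj _ _ _).mpr ⟨n23, Or.inl mem2⟩
  · exact (SimpleGraph.fromRel_adj _ _ _).mpr ⟨n34, Or.inl mem3⟩
  · exact (SimpleGraph.fromRel_adj _ _ _).mpr ⟨n45, Or.inl mem4⟩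
  · exact (SimpleGraph.fromRel_adj _ _ _).mpr ⟨n56, Or.inl mem5⟩
  · exact (SimpleGraph.fromRel_adj _ _ _).mpr ⟨n16.symm, Or.inl mem6⟩
end
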